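/- arXiv:1611.04447 — 7 statements merged into one kernel-verified Lean document; each statement's English description precedes it below -/
import Mathlib

section
/- Assume gcd(n,s) = 1. For every q-linearized polynomial f over F_{q^n} there exist unique elements a_0, …, a_{m−1} ∈ F_{q^n} such that f ≡ a_0 X + a_1 X^{q^s} + ⋯ + a_{m−1} X^{q^{s(m−1)}} (mod θ_S). In particular, if a_0, …, a_{m−1} ∈ F_{q^n} satisfy Σ_{i=0}^{m−1} a_i u^{q^{si}} = 0 for all u ∈ U_S, then a_0 = ⋯ = a_{m−1} = 0. -/
open Polynomial Finset
open scoped Classical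
set_option linter.unusedSectionVars false

section Aux

variable {Fq Fqn : Type} [Field Fq] [Fintype Fq] [Field Fqn] [Fintype Fqn] [Algebra Fq Fqn]

/-- Additivity of `x ↦ x ^ (card Fq) ^ r`. -/
lemma frob_add (r : ℕ) (x y : Fqn) :
    (x + y) ^ (Fintype.card Fq) ^ r = x ^ (Fintype.card Fq) ^ r + y ^ (Fintype.card Fq) ^ r := by
  obtain ⟨e, hp, hcard⟩ := FiniteField.card Fq (ringChar Fq)
  haveI : Fact (ringChar Fq).Prime := ⟨hp⟩
  haveI : CharP Fqn (ringChar Fq) :=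
    charP_of_injective_algebraMap (algebraMap Fq Fqn).injective _
  rw [hcard, ← pow_mul]
  exact add_pow_char_pow ..

lemma scalar_fix (c : Fq) (r : ℕ) : c ^ (Fintype.card Fq) ^ r = c :=
  FiniteField.pow_card_pow r c

lemma algebraMap_fix (c : Fq) (r : ℕ) :
    (algebraMap Fq Fqn c) ^ (Fintype.card Fq) ^ r = algebraMap Fq Fqn c := by
  rw [← map_pow, scalar_fix]

/-- `x ↦ x ^ (card Fq) ^ r` as a ring hom on `Fqn`. -/
noncomputable def frobQ (Fq Fqn : Type) [Field Fq] [Fintype Fq] [Field Fqn] [Fintype Fqn]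
    [Algebra Fq Fqn] (r : ℕ) : Fqn →+* Fqn where
  toFun x := x ^ (Fintype.card Fq) ^ r
  map_one' := one_pow _
  map_mul' x y := mul_pow x y _
  map_zero' := zero_pow (pow_ne_zero r Fintype.card_ne_zero)
  map_add' x y := frob_add r x y

@[simp] lemma frobQ_apply (r : ℕ) (x : Fqn) :
    frobQ Fq Fqn r x = x ^ (Fintype.card Fq) ^ r := rfl

/-- `x ↦ x ^ (card Fq) ^ r` as an `Fq`-linear map. -/
noncomputable def powLin (Fq Fqn : Type) [Field Fq] [Fintype Fq] [Field Fqn] [Fintype Fqn]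
    [Algebra Fq Fqn] (r : ℕ) : Fqn →ₗ[Fq] Fqn where
  toFun x := x ^ (Fintype.card Fq) ^ r
  map_add' x y := frob_add r x y
  map_smul' c x := by
    simp only [Algebra.smul_def, RingHom.id_apply, mul_pow, algebraMap_fix]

lemma linIndep_pow {k : ℕ} {v : Fin k → Fqn} (hv : LinearIndependent Fq v) (r : ℕ) :
    LinearIndependent Fq (fun j => v j ^ (Fintype.card Fq) ^ r) := by
  have h := hv.map' (powLin Fq Fqn r) ?_
  · exact h
  · rw [LinearMap.ker_eq_bot]
    intro x y hxy
    exact (frobQ Fq Fqn r).injective hxy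

lemma cyc {x : Fqn} {a : ℕ} (h : x ^ (Fintype.card Fq) ^ a = x) (t : ℕ) :
    x ^ (Fintype.card Fq) ^ (a * t) = x := by
  induction t with
  | zero => simp
  | succ t ih =>
    have : (Fintype.card Fq : ℕ) ^ (a * (t + 1)) = (Fintype.card Fq) ^ (a * t) * (Fintype.card Fq) ^ a := by
      rw [← pow_add]; ring_nf
    rw [this, pow_mul, ih, h]

end Aux

/-- A `q`-linearized polynomial: a polynomial of the form `∑ cᵢ X^(q^i)`. -/
def IsLinearized (q : ℕ) {F : Type} [Field F] (f : Polynomial F) : Prop :=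
  ∃ (N : ℕ) (c : ℕ → F), f = ∑ i ∈ Finset.range N, Polynomial.C (c i) * Polynomial.X ^ q ^ i

/-- `θ_S = ∏_{u ∈ U_S} (X - u)`, where `U_S` is the `F_q`-span of the `αᵢ`. -/
noncomputable def thetaS (Fq : Type) {Fqn : Type} [Field Fq] [Field Fqn] [Fintype Fqn]
    [Algebra Fq Fqn] {m : ℕ} (α : Fin m → Fqn) : Polynomial Fqn :=
  ∏ u ∈ Finset.univ.filter (fun u => u ∈ Submodule.span Fq (Set.range α)),
    (Polynomial.X - Polynomial.C u)

section Aux2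

variable {Fq Fqn : Type} [Field Fq] [Fintype Fq] [Field Fqn] [Fintype Fqn] [Algebra Fq Fqn]

/-- Elements fixed by `x ↦ x^q` lie in the image of `Fq`. -/
lemma mem_of_pow_card {x : Fqn} (hx : x ^ Fintype.card Fq = x) :
    ∃ c : Fq, algebraMap Fq Fqn c = x := by
  classical
  set Q := Fintype.card Fq with hQ
  have hQ2 : 1 < Q := Fintype.one_lt_card
  set T : Finset Fqn := Finset.univ.filter (fun y => y ^ Q = y) with hT
  set I : Finset Fqn := Finset.univ.image (algebraMap Fq Fqn) with hI
  have hIT : I ⊆ T := by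
    intro y hy
    rw [hI, Finset.mem_image] at hy
    obtain ⟨c, _, rfl⟩ := hy
    rw [hT, Finset.mem_filter]
    refine ⟨Finset.mem_univ _, ?_⟩
    rw [← map_pow, FiniteField.pow_card]
  have hIcard : I.card = Q := by
    rw [hI, Finset.card_image_of_injective _ (algebraMap Fq Fqn).injective, Finset.card_univ]
  have hTcard : T.card ≤ Q := by
    have hne : (X ^ Q - X : Polynomial Fqn) ≠ 0 := by
      intro h
      have h1 : ((X : Polynomial Fqn) ^ Q - X).coeff Q = 1 := by
        rw [Polynomial.coeff_sub, Polynomial.coeff_X_pow, if_pos rfl,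
          Polynomial.coeff_X, if_neg (by omega), sub_zero]
      rw [h, Polynomial.coeff_zero] at h1
      exact zero_ne_one h1
    have hsub : T ⊆ (X ^ Q - X : Polynomial Fqn).roots.toFinset := by
      intro y hy
      rw [hT, Finset.mem_filter] at hy
      rw [Multiset.mem_toFinset, Polynomial.mem_roots hne]
      simp [Polynomial.IsRoot, sub_eq_zero, hy.2]
    calc T.card ≤ (X ^ Q - X : Polynomial Fqn).roots.toFinset.card := Finset.card_le_card hsub
      _ ≤ Multiset.card (X ^ Q - X : Polynomial Fqn).roots := Multiset.toFinset_card_le _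
      _ ≤ (X ^ Q - X : Polynomial Fqn).natDegree := Polynomial.card_roots' _
      _ ≤ Q := by
          refine le_trans (Polynomial.natDegree_sub_le _ _) ?_
          simp [Polynomial.natDegree_X_pow, Polynomial.natDegree_X]
          omega
  have hTI : I = T := Finset.eq_of_subset_of_card_le hIT (by omega)
  have hxT : x ∈ T := by rw [hT, Finset.mem_filter]; exact ⟨Finset.mem_univ _, hx⟩
  rw [← hTI, hI, Finset.mem_image] at hxT
  obtain ⟨c, _, hc⟩ := hxT
  exact ⟨c, hc⟩

/-- If `gcd n s = 1` and `x^(q^s) = x` then `x` is in the image of `Fq`. -/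
lemma fixed_mem {n s : ℕ} (hqn : Fintype.card Fqn = (Fintype.card Fq) ^ n)
    (hn : 0 < n) (hs : 0 < s) (hgcd : Nat.gcd n s = 1) {x : Fqn}
    (hx : x ^ (Fintype.card Fq) ^ s = x) : ∃ c : Fq, algebraMap Fq Fqn c = x := by
  set Q := Fintype.card Fq with hQ
  have hxn : x ^ Q ^ n = x := by rw [← hqn]; exact FiniteField.pow_card x
  have hx1 : x ^ Q = x := by
    rcases Nat.lt_or_ge n 2 with h2 | h2
    · have : n = 1 := by omega
      rw [this, pow_one] at hxn; exact hxn
    · obtain ⟨b, -, hb⟩ := Nat.exists_mul_mod_eq_one_of_coprime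
        (Nat.coprime_comm.mp hgcd) h2
      have hdm := Nat.div_add_mod (s * b) n
      rw [hb] at hdm
      -- s * b = n * (s*b/n) + 1
      have h1 : x ^ Q ^ (s * b) = x := cyc hx b
      have h2' : x ^ Q ^ (s * b) = x ^ Q := by
        rw [← hdm, pow_add, pow_one, pow_mul, cyc hxn (s * b / n)]
      rw [h2'] at h1; exact h1
  exact mem_of_pow_card hx1

end Aux2

section Aux3

variable {Fq Fqn : Type} [Field Fq] [Fintype Fq] [Field Fqn] [Fintype Fqn] [Algebra Fq Fqn]

/-- Key lemma: the "Moore matrix" equations force zero coefficients. -/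
lemma keyA {n s : ℕ} (hqn : Fintype.card Fqn = (Fintype.card Fq) ^ n)
    (hn : 0 < n) (hs : 0 < s) (hgcd : Nat.gcd n s = 1) :
    ∀ (k : ℕ) (v : Fin k → Fqn), LinearIndependent Fq v → ∀ (t : ℕ) (d : Fin k → Fqn),
      (∀ i : Fin k, ∑ j, d j * (v j) ^ (Fintype.card Fq) ^ (s * (t + (i : ℕ))) = 0) → d = 0 := by
  set Q := Fintype.card Fq with hQ
  intro k
  induction k with
  | zero => intro v _ t d _; funext j; exact j.elim0
  | succ k IH =>
    intro v hv t d hyp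
    have hvc : LinearIndependent Fq (v ∘ Fin.castSucc) :=
      hv.comp Fin.castSucc (Fin.castSucc_injective k)
    by_cases hdl : d (Fin.last k) = 0
    · have h1 : ∀ i : Fin k, ∑ j : Fin k,
          (d ∘ Fin.castSucc) j * ((v ∘ Fin.castSucc) j) ^ Q ^ (s * (t + (i : ℕ))) = 0 := by
        intro i
        have h := hyp i.castSucc
        rw [Fin.sum_univ_castSucc, hdl, zero_mul, add_zero, Fin.coe_castSucc] at h
        exact h
      have h2 := IH (v ∘ Fin.castSucc) hvc t (d ∘ Fin.castSucc) h1
      funext j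
      refine Fin.lastCases hdl (fun i => congrFun h2 i) j
    · exfalso
      set D : Fin (k + 1) → Fqn := fun j => d j / d (Fin.last k) with hD
      have hDeq : ∀ i : Fin (k + 1), ∑ j, D j * v j ^ Q ^ (s * (t + (i : ℕ))) = 0 := by
        intro i
        simp only [hD, div_mul_eq_mul_div, ← Finset.sum_div, hyp i, zero_div]
      have hDlast : D (Fin.last k) = 1 := div_self hdl
      set E : Fin (k + 1) → Fqn := fun j => (D j) ^ Q ^ s - D j with hE
      have hElast : E (Fin.last k) = 0 := by simp [hE, hDlast]
      have hEeq : ∀ i : Fin k, ∑ j : Fin k,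
          (E ∘ Fin.castSucc) j * ((v ∘ Fin.castSucc) j) ^ Q ^ (s * ((t + 1) + (i : ℕ))) = 0 := by
        intro i
        have hA := hDeq i.castSucc
        have hB := hDeq i.succ
        rw [Fin.coe_castSucc] at hA
        rw [Fin.val_succ] at hB
        have hA' : ∑ j, (D j) ^ Q ^ s * v j ^ Q ^ (s * ((t + 1) + (i : ℕ))) = 0 := by
          have hmap := congrArg (frobQ Fq Fqn s) hA
          rw [map_sum, map_zero] at hmap
          simp only [map_mul, frobQ_apply, ← pow_mul, ← pow_add] at hmap
          have hexp : s * (t + (i : ℕ)) + s = s * ((t + 1) + (i : ℕ)) := by ring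
          rw [← hQ, ← pow_add, hexp] at hmap
          exact hmap
        have hB' : ∑ j, D j * v j ^ Q ^ (s * ((t + 1) + (i : ℕ))) = 0 := by
          have hexp : s * (t + ((i : ℕ) + 1)) = s * ((t + 1) + (i : ℕ)) := by ring
          rw [hexp] at hB
          exact hB
        have hsub : ∑ j : Fin (k + 1), E j * v j ^ Q ^ (s * ((t + 1) + (i : ℕ))) = 0 := by
          simp only [hE, sub_mul, Finset.sum_sub_distrib, hA', hB', sub_zero]
        rw [Fin.sum_univ_castSucc, hElast, zero_mul, add_zero] at hsub
        exact hsub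
      have hE0 : (E ∘ Fin.castSucc) = 0 := IH (v ∘ Fin.castSucc) hvc (t + 1) _ hEeq
      have hEall : ∀ j, E j = 0 := by
        intro j
        refine Fin.lastCases hElast (fun i => ?_) j
        exact congrFun hE0 i
      have hDfix : ∀ j, ∃ cc : Fq, algebraMap Fq Fqn cc = D j := by
        intro j
        have h := hEall j
        rw [hE] at h
        exact fixed_mem hqn hn hs hgcd (sub_eq_zero.mp h)
      choose c hc using hDfix
      have hw : LinearIndependent Fq (fun j => v j ^ Q ^ (s * t)) := linIndep_pow hv _
      have h0 := hDeq 0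
      simp only [Fin.val_zero, add_zero] at h0
      have h0' : ∑ j, c j • (v j ^ Q ^ (s * t)) = 0 := by
        rw [← h0]
        congr 1; funext j
        rw [Algebra.smul_def, hc j]
      have hc0 := Fintype.linearIndependent_iff.mp hw c h0' (Fin.last k)
      have hlast := hc (Fin.last k)
      rw [hc0, map_zero, hDlast] at hlast
      exact zero_ne_one hlast

end Aux3

section Aux4

variable {Fq Fqn : Type} [Field Fq] [Fintype Fq] [Field Fqn] [Fintype Fqn] [Algebra Fq Fqn]

lemma moore_det {n s m : ℕ} (hqn : Fintype.card Fqn = (Fintype.card Fq) ^ n)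
    (hn : 0 < n) (hs : 0 < s) (hgcd : Nat.gcd n s = 1)
    (α : Fin m → Fqn) (hα : LinearIndependent Fq α) :
    (Matrix.of (fun i j : Fin m => α j ^ (Fintype.card Fq) ^ (s * (i : ℕ)))).det ≠ 0 := by
  intro h0
  obtain ⟨d, hd0, hmd⟩ := (Matrix.exists_mulVec_eq_zero_iff).mpr h0
  apply hd0
  refine keyA hqn hn hs hgcd m α hα 0 d (fun i => ?_)
  have h := congrFun hmd i
  simp only [Matrix.mulVec, dotProduct, Matrix.of_apply, Pi.zero_apply] at h
  simp only [zero_add]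
  rw [← h]
  congr 1; funext j
  rw [mul_comm]

lemma part2lem {n s m : ℕ} (hqn : Fintype.card Fqn = (Fintype.card Fq) ^ n)
    (hn : 0 < n) (hs : 0 < s) (hgcd : Nat.gcd n s = 1)
    (α : Fin m → Fqn) (hα : LinearIndependent Fq α) (a : Fin m → Fqn)
    (ha : ∀ j, ∑ i, a i * α j ^ (Fintype.card Fq) ^ (s * (i : ℕ)) = 0) : a = 0 := by
  by_contra hne
  apply moore_det hqn hn hs hgcd α hα
  rw [← Matrix.det_transpose, ← Matrix.exists_mulVec_eq_zero_iff]
  refine ⟨a, hne, funext fun j => ?_⟩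
  simp only [Matrix.mulVec, dotProduct, Matrix.transpose_apply, Matrix.of_apply,
    Pi.zero_apply]
  rw [← ha j]
  congr 1; funext i
  rw [mul_comm]

end Aux4

theorem stmt1 (q n m s : ℕ) (Fq Fqn : Type) [Field Fq] [Fintype Fq] [Field Fqn] [Fintype Fqn]
    [Algebra Fq Fqn] (hq : Fintype.card Fq = q) (hqn : Fintype.card Fqn = q ^ n)
    (hn : 0 < n) (hm : 0 < m) (hmn : m ≤ n)
    (hs : 0 < s) (hgcd : Nat.gcd n s = 1)
    (α : Fin m → Fqn) (hα : LinearIndependent Fq α) :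
    -- every linearized polynomial has a unique representative
    -- a₀X + a₁X^(q^s) + ⋯ + a_{m-1}X^(q^{s(m-1)}) modulo θ_S
    (∀ f : Polynomial Fqn, IsLinearized q f →
      ∃! a : Fin m → Fqn,
        thetaS Fq α ∣ f - ∑ i : Fin m, Polynomial.C (a i) * Polynomial.X ^ q ^ (s * (i : ℕ))) ∧
    -- in particular, if ∑ aᵢ u^(q^{si}) = 0 for all u ∈ U_S then all aᵢ = 0
    (∀ a : Fin m → Fqn,
      (∀ u ∈ Submodule.span Fq (Set.range α),
        ∑ i : Fin m, a i * u ^ q ^ (s * (i : ℕ)) = 0) → a = 0) := by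
  
  subst hq
  -- the "in particular" part
  have hpart2 : ∀ a : Fin m → Fqn,
      (∀ u ∈ Submodule.span Fq (Set.range α),
        ∑ i : Fin m, a i * u ^ (Fintype.card Fq) ^ (s * (i : ℕ)) = 0) → a = 0 := by
    intro a ha
    refine part2lem hqn hn hs hgcd α hα a (fun j => ?_)
    exact ha (α j) (Submodule.subset_span ⟨j, rfl⟩)
  -- divisibility by θ_S is equivalent to vanishing on U_S
  have key_dvd : ∀ h : Polynomial Fqn,
      (∀ u ∈ Submodule.span Fq (Set.range α), h.eval u = 0) → thetaS Fq α ∣ h := by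
    intro h hroot
    unfold thetaS
    refine Finset.prod_dvd_of_coprime ?_ ?_
    · intro u hu w hw huw
      exact isCoprime_X_sub_C_of_isUnit_sub ((sub_ne_zero.mpr huw).isUnit)
    · intro u hu
      rw [Finset.mem_filter] at hu
      exact Polynomial.dvd_iff_isRoot.mpr (hroot u hu.2)
  have key_root : ∀ h : Polynomial Fqn, thetaS Fq α ∣ h →
      ∀ u ∈ Submodule.span Fq (Set.range α), h.eval u = 0 := by
    intro h hd u hu
    have h1 : (X - C u) ∣ thetaS Fq α :=
      Finset.dvd_prod_of_mem _ (Finset.mem_filter.mpr ⟨Finset.mem_univ _, hu⟩)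
    exact Polynomial.dvd_iff_isRoot.mp (h1.trans hd)
  refine ⟨?_, hpart2⟩
  intro f hf
  obtain ⟨N, cc, hfeq⟩ := hf
  -- evaluation of `f` is `Fq`-linear
  have heval0 : f.eval 0 = 0 := by
    rw [hfeq]
    simp [Polynomial.eval_finset_sum, zero_pow (pow_ne_zero _ (Fintype.card_ne_zero (α := Fq)))]
  have hevaladd : ∀ x y : Fqn, f.eval (x + y) = f.eval x + f.eval y := by
    intro x y
    rw [hfeq]
    simp only [Polynomial.eval_finset_sum, Polynomial.eval_mul, Polynomial.eval_C,
      Polynomial.eval_pow, Polynomial.eval_X, frob_add, mul_add, Finset.sum_add_distrib]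
  have hevalsm : ∀ (r : Fq) (x : Fqn),
      f.eval (algebraMap Fq Fqn r * x) = algebraMap Fq Fqn r * f.eval x := by
    intro r x
    rw [hfeq]
    simp only [Polynomial.eval_finset_sum, Polynomial.eval_mul, Polynomial.eval_C,
      Polynomial.eval_pow, Polynomial.eval_X, mul_pow, algebraMap_fix, Finset.mul_sum]
    congr 1; funext i
    ring
  -- solve the linear system at the basis vectors
  set M := Matrix.of (fun i j : Fin m => α j ^ (Fintype.card Fq) ^ (s * (i : ℕ))) with hM
  have hdet : M.det ≠ 0 := moore_det hqn hn hs hgcd α hα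
  have hdetT : M.transpose.det ≠ 0 := by rw [Matrix.det_transpose]; exact hdet
  set b : Fin m → Fqn := fun j => f.eval (α j) with hb
  set a : Fin m → Fqn := (M.transpose)⁻¹.mulVec b with haa
  have hMa : M.transpose.mulVec a = b := by
    rw [haa, Matrix.mulVec_mulVec, Matrix.mul_nonsing_inv _ (isUnit_iff_ne_zero.mpr hdetT),
      Matrix.one_mulVec]
  have hbase : ∀ j, ∑ i, a i * α j ^ (Fintype.card Fq) ^ (s * (i : ℕ)) = f.eval (α j) := by
    intro j
    have h := congrFun hMa j
    simp only [Matrix.mulVec, dotProduct, Matrix.transpose_apply, Matrix.of_apply,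
      hb, hM] at h
    rw [← h]
    congr 1; funext i
    rw [mul_comm]
  have hP : ∀ u ∈ Submodule.span Fq (Set.range α),
      ∑ i, a i * u ^ (Fintype.card Fq) ^ (s * (i : ℕ)) = f.eval u := by
    intro u hu
    induction hu using Submodule.span_induction with
    | mem x hx =>
      obtain ⟨j, rfl⟩ := hx
      exact hbase j
    | zero =>
      rw [heval0]
      simp [zero_pow (pow_ne_zero _ (Fintype.card_ne_zero (α := Fq)))]
    | add x y hx hy hpx hpy =>
      rw [hevaladd, ← hpx, ← hpy, ← Finset.sum_add_distrib]
      congr 1; funext i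
      rw [frob_add, mul_add]
    | smul r x hx hpx =>
      rw [Algebra.smul_def, hevalsm, ← hpx, Finset.mul_sum]
      congr 1; funext i
      rw [mul_pow, algebraMap_fix]
      ring
  -- the representative
  refine ⟨a, ?_, ?_⟩
  · refine key_dvd _ (fun u hu => ?_)
    rw [Polynomial.eval_sub, sub_eq_zero, Polynomial.eval_finset_sum]
    simp only [Polynomial.eval_mul, Polynomial.eval_C, Polynomial.eval_pow, Polynomial.eval_X]
    exact (hP u hu).symm
  · intro b' hb'
    have hmine : thetaS Fq α ∣ f - ∑ i : Fin m, C (a i) * X ^ (Fintype.card Fq) ^ (s * (i : ℕ)) := by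
      refine key_dvd _ (fun u hu => ?_)
      rw [Polynomial.eval_sub, sub_eq_zero, Polynomial.eval_finset_sum]
      simp only [Polynomial.eval_mul, Polynomial.eval_C, Polynomial.eval_pow, Polynomial.eval_X]
      exact (hP u hu).symm
    have hdiff : thetaS Fq α ∣
        (∑ i : Fin m, C (b' i) * X ^ (Fintype.card Fq) ^ (s * (i : ℕ))) -
        (∑ i : Fin m, C (a i) * X ^ (Fintype.card Fq) ^ (s * (i : ℕ))) := by
      have := dvd_sub hmine hb'
      rw [sub_sub_sub_cancel_left] at this
      exact this
    have hvan : ∀ u ∈ Submodule.span Fq (Set.range α),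
        ∑ i : Fin m, (b' i - a i) * u ^ (Fintype.card Fq) ^ (s * (i : ℕ)) = 0 := by
      intro u hu
      have h := key_root _ hdiff u hu
      rw [Polynomial.eval_sub, Polynomial.eval_finset_sum, Polynomial.eval_finset_sum] at h
      simp only [Polynomial.eval_mul, Polynomial.eval_C, Polynomial.eval_pow,
        Polynomial.eval_X] at h
      rw [← Finset.sum_sub_distrib] at h
      rw [← h]
      congr 1; funext i
      ring
    have hz := hpart2 (fun i => b' i - a i) hvan
    funext i
    have := congrFun hz i
    simpa [sub_eq_zero] using this
end

section
/- Let gcd(n,s) = 1 and let φ be a q-linearized polynomial over F_{q^n}. For t ∈ {0,…,m−1} and a ∈ F_{q^n}, let c_0^{(t)}(a), …, c_{m−1}^{(t)}(a) be the unique elements of F_{q^n} with φ(a X^{q^{ts}}) ≡ Σ_{j=0}^{m−1} c_j^{(t)}(a) X^{q^{js}} (mod θ_S), where φ(a X^{q^{ts}}) denotes the polynomial obtained by substituting a X^{q^{ts}} for X in φ. Suppose there exist a ∈ F_{q^n} and j with c_j^{(0)}(a) ≠ 0, and let j_0 be the largest index j such that c_j^{(0)}(a) ≠ 0 for some a ∈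 F_{q^n}. Then for every t with t + j_0 ≤ m−1 and every j with 0 ≤ j ≤ m−1−t, the following are equivalent: (i) there exists a ∈ F_{q^n} with c_j^{(0)}(a) ≠ 0; (ii) there exists ā ∈ F_{q^n} with c_{j+t}^{(t)}(ā) ≠ 0. -/
open Polynomial Finset
open scoped Classical

set_option linter.unusedSectionVars false
set_option maxHeartbeats 1000000

section AuxLemmas

variable {q n s : ℕ} {Fq Fqn : Type} [Field Fq] [Fintype Fq] [Field Fqn] [Fintype Fqn]
  [Algebra Fq Fqn]

lemma aux_pp (x : Fqn) (a b : ℕ) : (x ^ q ^ a) ^ q ^ b = x ^ q ^ (a + b) := by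
  rw [← pow_mul, ← pow_add]

lemma aux_pow_hom (hq : Fintype.card Fq = q) (e : ℕ) :
    ∃ ψ : Fqn →+* Fqn, ∀ x, ψ x = x ^ q ^ e := by
  obtain ⟨p, hpI⟩ := CharP.exists Fq
  obtain ⟨f, hp, hcard⟩ := FiniteField.card Fq p
  haveI : CharP Fqn p := charP_of_injective_algebraMap (algebraMap Fq Fqn).injective p
  haveI : Fact p.Prime := ⟨hp⟩
  exact ⟨iterateFrobenius Fqn p (f * e), fun x => by
    rw [iterateFrobenius_def, ← hq, hcard, pow_mul]⟩

lemma aux_sum_pow (hq : Fintype.card Fq = q) (e : ℕ) {ι : Type*} (t : Finset ι) (f : ι → Fqn) :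
    (∑ i ∈ t, f i) ^ q ^ e = ∑ i ∈ t, (f i) ^ q ^ e := by
  obtain ⟨ψ, hψ⟩ := aux_pow_hom (Fqn := Fqn) hq e
  rw [← hψ, map_sum]; simp [hψ]

lemma aux_sub_pow (hq : Fintype.card Fq = q) (e : ℕ) (x y : Fqn) :
    (x - y) ^ q ^ e = x ^ q ^ e - y ^ q ^ e := by
  obtain ⟨ψ, hψ⟩ := aux_pow_hom (Fqn := Fqn) hq e
  rw [← hψ, ← hψ, ← hψ, map_sub]

lemma aux_alg_fixed (hq : Fintype.card Fq = q) (g : Fq) (e : ℕ) :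
    (algebraMap Fq Fqn g) ^ q ^ e = algebraMap Fq Fqn g := by
  induction e with
  | zero => simp
  | succ e ih => rw [pow_succ, pow_mul, ih, ← map_pow, ← hq, FiniteField.pow_card]

lemma aux_iter_fixed {e : ℕ} {x : Fqn} (hx : x ^ q ^ e = x) (a : ℕ) : x ^ q ^ (e * a) = x := by
  induction a with
  | zero => simp
  | succ a ih => rw [Nat.mul_succ, pow_add, pow_mul, ih, hx]

lemma aux_pow_card (hqn : Fintype.card Fqn = q ^ n) (x : Fqn) : x ^ q ^ n = x := by
  rw [← hqn, FiniteField.pow_card]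

lemma aux_fix_q (hqn : Fintype.card Fqn = q ^ n) (hn : 0 < n) (hgcd : Nat.gcd n s = 1)
    {x : Fqn} (hx : x ^ q ^ s = x) : x ^ q = x := by
  rcases eq_or_lt_of_le (show 1 ≤ n from hn) with h1 | h1
  · have := aux_pow_card hqn x
    rw [← h1, pow_one] at this
    exact this
  · have hco : Nat.Coprime n s := hgcd
    obtain ⟨a, -, ha⟩ := Nat.exists_mul_mod_eq_one_of_coprime hco.symm h1
    have key : x ^ q ^ (s * a) = x := aux_iter_fixed hx a
    have hdiv : s * a = n * (s * a / n) + 1 := by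
      conv_lhs => rw [← Nat.div_add_mod (s * a) n, ha]
    rw [hdiv, pow_add, pow_mul, pow_one, aux_iter_fixed (aux_pow_card hqn x) (s * a / n)] at key
    exact key

lemma aux_fix_range (hq : Fintype.card Fq = q) {x : Fqn} (hx : x ^ q = x) :
    ∃ g : Fq, algebraMap Fq Fqn g = x := by
  classical
  have hq2 : 2 ≤ q := hq ▸ Fintype.one_lt_card
  set T : Finset Fqn := Finset.univ.filter (fun y => y ^ q = y) with hT
  set im : Finset Fqn := Finset.univ.image (algebraMap Fq Fqn) with him
  have hsub : im ⊆ T := by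
    intro y hy
    simp only [him, Finset.mem_image] at hy
    obtain ⟨g, _, rfl⟩ := hy
    simp only [hT, Finset.mem_filter, Finset.mem_univ, true_and]
    rw [← map_pow, ← hq, FiniteField.pow_card]
  have hcardim : im.card = q := by
    rw [him, Finset.card_image_of_injective _ (algebraMap Fq Fqn).injective, Finset.card_univ, hq]
  have hcardT : T.card ≤ q := by
    have hP : (X ^ q - X : Polynomial Fqn) ≠ 0 := by
      intro h
      have h1 : ((X : Polynomial Fqn) ^ q - X).coeff q = 1 := by
        rw [Polynomial.coeff_sub, Polynomial.coeff_X_pow, if_pos rfl,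
          Polynomial.coeff_X, if_neg (by omega), sub_zero]
      rw [h] at h1
      simp at h1
    have hroots : T ⊆ (X ^ q - X : Polynomial Fqn).roots.toFinset := by
      intro y hy
      simp only [hT, Finset.mem_filter, Finset.mem_univ, true_and] at hy
      rw [Multiset.mem_toFinset, Polynomial.mem_roots hP]
      simp [Polynomial.IsRoot, hy, sub_eq_zero]
    calc T.card ≤ _ := Finset.card_le_card hroots
      _ ≤ Multiset.card (X ^ q - X : Polynomial Fqn).roots := Multiset.toFinset_card_le _
      _ ≤ (X ^ q - X : Polynomial Fqn).natDegree := Polynomial.card_roots' _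
      _ ≤ q := by
        have h2 := Polynomial.natDegree_sub_le (X ^ q : Polynomial Fqn) X
        have h3 : (X ^ q : Polynomial Fqn).natDegree = q := Polynomial.natDegree_X_pow q
        have h4 : (X : Polynomial Fqn).natDegree = 1 := Polynomial.natDegree_X
        omega
  have hTim : T = im := (Finset.eq_of_subset_of_card_le hsub (by omega)).symm
  have hxT : x ∈ T := by simp [hT, hx]
  rw [hTim, him] at hxT
  simpa using Finset.mem_image.1 hxT

lemma lemK (hq : Fintype.card Fq = q) (hqn : Fintype.card Fqn = q ^ n)
    (hn : 0 < n) (hgcd : Nat.gcd n s = 1) :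
    ∀ (k : ℕ) (γ : ℕ → Fqn), (∃ l, l ≤ k ∧ γ l ≠ 0) →
      ∀ v : Fin (k + 1) → Fqn,
        (∀ i, ∑ l ∈ Finset.range (k + 1), γ l * (v i) ^ q ^ (s * l) = 0) →
        ¬ LinearIndependent Fq v := by
  have hq2 : 2 ≤ q := hq ▸ Fintype.one_lt_card
  have hqe : ∀ e : ℕ, q ^ e ≠ 0 := fun e => pow_ne_zero e (by omega)
  intro k
  induction k with
  | zero =>
    intro γ hγ v hv hLI
    obtain ⟨l, hl, hγl⟩ := hγ
    interval_cases l
    have h0 := hv 0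
    simp only [zero_add, Finset.sum_range_one, Nat.mul_zero, pow_zero, pow_one] at h0
    exact hLI.ne_zero 0 ((mul_eq_zero.1 h0).resolve_left hγl)
  | succ k IH =>
    intro γ hγ v hv hLI
    have hv0 : v 0 ≠ 0 := hLI.ne_zero 0
    set c : Fqn := (v 0) ^ q ^ s / v 0 with hcdef
    have hc : c * v 0 = (v 0) ^ q ^ s := div_mul_cancel₀ _ hv0
    have hcne : c ≠ 0 := div_ne_zero (pow_ne_zero _ hv0) hv0
    set ε : ℕ → Fqn := fun r =>
      Nat.rec (γ (k + 1)) (fun r ih => γ (k - r) + ih * c ^ q ^ (s * (k - r))) r with hεdef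
    set δ : ℕ → Fqn := fun l => ε (k - l) with hδdef
    have hδk : δ k = γ (k + 1) := by simp [hδdef, hεdef]
    have hεsucc : ∀ r : ℕ, ε (r + 1) = γ (k - r) + ε r * c ^ q ^ (s * (k - r)) := fun r => rfl
    have hδstep : ∀ l, 1 ≤ l → l ≤ k → δ (l - 1) = γ l + δ l * c ^ q ^ (s * l) := by
      intro l h1 h2
      have e1 : k - (l - 1) = (k - l) + 1 := by omega
      have e2 : k - (k - l) = l := by omega
      simp only [hδdef, e1, hεsucc, e2]
    have hIco : ∀ x : Fqn, ∀ r, r ≤ k →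
        ∑ l ∈ Finset.Ico (k - r) (k + 1), γ (l + 1) * x ^ q ^ (s * (l + 1)) =
          (∑ l ∈ Finset.Ico (k - r) (k + 1), δ l * (x ^ q ^ s - c * x) ^ q ^ (s * l)) +
            δ (k - r) * c ^ q ^ (s * (k - r)) * x ^ q ^ (s * (k - r)) := by
      intro x r
      induction r with
      | zero =>
        intro _
        simp only [Nat.sub_zero]
        rw [Finset.sum_Ico_eq_sum_range, Finset.sum_Ico_eq_sum_range]
        simp only [Nat.add_sub_cancel_left, Finset.sum_range_one, Nat.add_zero]
        rw [aux_sub_pow hq, aux_pp, mul_pow, hδk]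
        ring_nf
      | succ r ihr =>
        intro hr
        have hrk : r ≤ k := by omega
        have hlt : k - (r + 1) < k + 1 := by omega
        have hbot : k - (r + 1) + 1 = k - r := by omega
        rw [Finset.sum_eq_sum_Ico_succ_bot hlt, Finset.sum_eq_sum_Ico_succ_bot hlt, hbot,
          ihr hrk]
        have hδrec : δ (k - (r + 1)) = γ (k - r) + δ (k - r) * c ^ q ^ (s * (k - r)) := by
          have h5 := hδstep (k - r) (by omega) (by omega)
          have e3 : k - r - 1 = k - (r + 1) := by omega
          rw [e3] at h5
          exact h5
        rw [aux_sub_pow hq, aux_pp, mul_pow, hδrec]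
        have e1 : s + s * (k - (r + 1)) = s * (k - (r + 1) + 1) := by ring
        rw [e1, hbot]
        ring
    have hI : ∀ x : Fqn,
        ∑ l ∈ Finset.range (k + 2), γ l * x ^ q ^ (s * l) =
          (∑ l ∈ Finset.range (k + 1), δ l * (x ^ q ^ s - c * x) ^ q ^ (s * l)) +
            (γ 0 + δ 0 * c) * x := by
      intro x
      have h0 := hIco x k le_rfl
      simp only [Nat.sub_self] at h0
      rw [Finset.sum_range_succ' (fun l => γ l * x ^ q ^ (s * l)) (k + 1)]
      have hIcoR : Finset.Ico 0 (k + 1) = Finset.range (k + 1) := by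
        rw [Finset.range_eq_Ico]
      rw [hIcoR] at h0
      rw [h0]
      simp only [Nat.mul_zero, pow_zero, pow_one]
      ring
    have hR : γ 0 + δ 0 * c = 0 := by
      have h0 := hI (v 0)
      rw [hv 0] at h0
      have hz : (v 0) ^ q ^ s - c * v 0 = 0 := by rw [hc]; ring
      rw [hz] at h0
      simp only [zero_pow (hqe _), mul_zero, Finset.sum_const_zero, zero_add] at h0
      rcases mul_eq_zero.1 h0.symm with h | h
      · exact h
      · exact absurd h hv0
    have hI' : ∀ x : Fqn,
        ∑ l ∈ Finset.range (k + 2), γ l * x ^ q ^ (s * l) =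
          ∑ l ∈ Finset.range (k + 1), δ l * (x ^ q ^ s - c * x) ^ q ^ (s * l) := by
      intro x; rw [hI x, hR]; ring
    have hδne : ∃ l, l ≤ k ∧ δ l ≠ 0 := by
      by_contra hall
      push_neg at hall
      obtain ⟨l, hl, hγl⟩ := hγ
      apply hγl
      rcases Nat.eq_or_lt_of_le hl with h | h
      · rw [h] at *
        rw [← hδk]
        exact hall k le_rfl
      · have hlk : l ≤ k := by omega
        rcases Nat.eq_zero_or_pos l with h0 | h0
        · subst h0
          have : δ 0 = 0 := hall 0 (by omega)
          rw [this, zero_mul, add_zero] at hR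
          exact hR
        · have := hδstep l h0 hlk
          rw [hall (l - 1) (by omega), hall l hlk] at this
          rw [zero_mul, add_zero] at this
          exact this.symm
    set w : Fin (k + 1) → Fqn := fun i => (v i.succ) ^ q ^ s - c * v i.succ with hwdef
    have hw : ∀ i, ∑ l ∈ Finset.range (k + 1), δ l * (w i) ^ q ^ (s * l) = 0 := by
      intro i
      rw [hwdef]
      simp only
      rw [← hI' (v i.succ)]
      exact hv i.succ
    have hwLI : LinearIndependent Fq w := by
      rw [Fintype.linearIndependent_iff]
      intro g hg
      set y : Fqn := ∑ i : Fin (k + 1), g i • v i.succ with hydef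
      have hysub : y ^ q ^ s - c * y = ∑ i : Fin (k + 1), g i • w i := by
        rw [hydef, aux_sum_pow hq, Finset.mul_sum, ← Finset.sum_sub_distrib]
        apply Finset.sum_congr rfl
        intro i _
        simp only [hwdef, Algebra.smul_def]
        rw [mul_pow, aux_alg_fixed hq]
        ring
      rw [hg] at hysub
      have hy : y ^ q ^ s = c * y := sub_eq_zero.1 hysub
      by_cases hy0 : y = 0
      · rw [hy0] at hydef
        have hvsucc : LinearIndependent Fq (v ∘ Fin.succ) :=
          hLI.comp Fin.succ (Fin.succ_injective _)
        exact Fintype.linearIndependent_iff.1 hvsucc g hydef.symm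
      · exfalso
        set z : Fqn := y / v 0 with hzdef
        have hz : z ^ q ^ s = z := by
          rw [hzdef, div_pow, hy, ← hc, mul_div_mul_left _ _ hcne]
        obtain ⟨μ, hμ⟩ := aux_fix_range hq (aux_fix_q hqn hn hgcd hz)
        have hμ0 : μ ≠ 0 := by
          intro h
          rw [h, map_zero] at hμ
          have : y = 0 := by
            have h6 := hμ.symm
            rw [hzdef] at h6
            field_simp at h6
            simpa using h6
          exact hy0 this
        have hyv : y = μ • v 0 := by
          rw [Algebra.smul_def, hμ, hzdef, div_mul_cancel₀ _ hv0]
        set h : Fin (k + 2) → Fq := fun i => if hi : i = 0 then -μ else g (i.pred hi) with hhdef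
        have hsum : ∑ i : Fin (k + 2), h i • v i = 0 := by
          rw [Fin.sum_univ_succ]
          have h1 : h 0 = -μ := by simp [hhdef]
          have h2 : ∀ i : Fin (k + 1), h i.succ = g i := by
            intro i
            simp [hhdef, Fin.succ_ne_zero]
          rw [h1]
          simp only [h2]
          rw [← hydef, hyv, neg_smul]
          ring
        have := Fintype.linearIndependent_iff.1 hLI h hsum 0
        rw [hhdef] at this
        simp at this
        exact hμ0 this
    exact IH δ hδne w hw hwLI

lemma aux_uniq (hq : Fintype.card Fq = q) (hqn : Fintype.card Fqn = q ^ n)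
    (hn : 0 < n) (hgcd : Nat.gcd n s = 1) {m : ℕ} (hm : 0 < m)
    (α : Fin m → Fqn) (hα : LinearIndependent Fq α) (γ : ℕ → Fqn)
    (hγ : ∀ u ∈ Submodule.span Fq (Set.range α), ∑ l ∈ Finset.range m, γ l * u ^ q ^ (s * l) = 0) :
    ∀ l < m, γ l = 0 := by
  by_contra h
  push_neg at h
  obtain ⟨l, hl, hγl⟩ := h
  have hm1 : m - 1 + 1 = m := by omega
  refine lemK hq hqn hn hgcd (m - 1) γ ⟨l, by omega, hγl⟩
    (α ∘ Fin.castLE (by omega : m - 1 + 1 ≤ m)) (fun i => ?_)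
    (hα.comp _ (Fin.castLE_injective _))
  have hrange : Finset.range (m - 1 + 1) = Finset.range m := by rw [hm1]
  rw [hrange]
  exact hγ _ (Submodule.subset_span (Set.mem_range_self _))

lemma aux_expand (hq : Fintype.card Fq = q) (hqn : Fintype.card Fqn = q ^ n)
    (hn : 0 < n) (hgcd : Nat.gcd n s = 1) {m : ℕ} (hm : 0 < m)
    (α : Fin m → Fqn) (hα : LinearIndependent Fq α) (k : ℕ) :
    ∃ dk : ℕ → Fqn, ∀ u ∈ Submodule.span Fq (Set.range α),
      u ^ q ^ k = ∑ l ∈ Finset.range m, dk l * u ^ q ^ (s * l) := by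
  classical
  have hq2 : 2 ≤ q := hq ▸ Fintype.one_lt_card
  set U : Submodule Fq Fqn := Submodule.span Fq (Set.range α) with hU
  have hP : ∀ e : ℕ, ∃ f : U →ₗ[Fq] Fqn, ∀ u : U, f u = (u : Fqn) ^ q ^ e := by
    intro e
    obtain ⟨ψ, hψ⟩ := aux_pow_hom (Fqn := Fqn) hq e
    refine ⟨{ toFun := fun u => ψ (u : Fqn), map_add' := ?_, map_smul' := ?_ }, fun u => hψ _⟩
    · intro x y
      simp [map_add]
    · intro r x
      simp only [RingHom.id_apply, SetLike.val_smul]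
      rw [Algebra.smul_def, Algebra.smul_def, map_mul, hψ, hψ, aux_alg_fixed hq]
  choose P hPdef using hP
  have hLI : LinearIndependent Fqn (fun l : Fin m => P (s * l)) := by
    rw [Fintype.linearIndependent_iff]
    intro g hg i
    set γ : ℕ → Fqn := fun l => if h : l < m then g ⟨l, h⟩ else 0 with hγdef
    have hvan : ∀ u ∈ U, ∑ l ∈ Finset.range m, γ l * u ^ q ^ (s * l) = 0 := by
      intro u hu
      have h1 := LinearMap.congr_fun hg ⟨u, hu⟩
      simp only [LinearMap.coe_sum, Finset.sum_apply, LinearMap.smul_apply,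
        LinearMap.zero_apply, smul_eq_mul] at h1
      rw [Finset.sum_range]
      have h2 : ∀ l : Fin m, γ (l : ℕ) = g l := by
        intro l
        simp [hγdef, l.isLt]
      calc ∑ l : Fin m, γ (l : ℕ) * u ^ q ^ (s * (l : ℕ))
          = ∑ l : Fin m, g l * (P (s * l)) ⟨u, hu⟩ := by
            apply Finset.sum_congr rfl
            intro l _
            rw [h2 l, hPdef]
        _ = 0 := h1
    have := aux_uniq hq hqn hn hgcd hm α hα γ hvan i i.isLt
    simpa [hγdef, i.isLt] using this
  have hfrn : Module.finrank Fq Fqn = n := by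
    have h := Module.card_eq_pow_finrank (K := Fq) (V := Fqn)
    rw [hq, hqn] at h
    exact (Nat.pow_right_injective hq2 h.symm)
  have hfrU : Module.finrank Fq U = m := by
    rw [hU, finrank_span_eq_card hα, Fintype.card_fin]
  have hfr2 : Module.finrank Fqn (U →ₗ[Fq] Fqn) = m := by
    rw [Module.finrank_linearMap_self Fq Fqn U, hfrU]
  haveI : Nonempty (Fin m) := ⟨⟨0, hm⟩⟩
  set B := basisOfLinearIndependentOfCardEqFinrank hLI (by simp [hfr2]) with hB
  have hBcoe : ∀ l : Fin m, B l = P (s * l) := by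
    intro l
    rw [hB, coe_basisOfLinearIndependentOfCardEqFinrank]
  refine ⟨fun l => if h : l < m then B.repr (P k) ⟨l, h⟩ else 0, fun u hu => ?_⟩
  have h3 := B.sum_repr (P k)
  calc u ^ q ^ k = (P k) ⟨u, hu⟩ := (hPdef k ⟨u, hu⟩).symm
    _ = ∑ l : Fin m, (B.repr (P k)) l * u ^ q ^ (s * (l : ℕ)) := by
        conv_lhs => rw [← h3]
        simp only [LinearMap.coe_sum, Finset.sum_apply, LinearMap.smul_apply, smul_eq_mul]
        apply Finset.sum_congr rfl
        intro l _
        rw [hBcoe l, hPdef]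
    _ = ∑ l ∈ Finset.range m,
          (fun l => if h : l < m then B.repr (P k) ⟨l, h⟩ else 0) l * u ^ q ^ (s * l) := by
        rw [Finset.sum_range]
        apply Finset.sum_congr rfl
        intro l _
        simp [l.isLt]

lemma aux_qpoly_zero (hq : Fintype.card Fq = q) (hqn : Fintype.card Fqn = q ^ n)
    (hn : 0 < n) (γ : ℕ → Fqn)
    (h : ∀ a : Fqn, ∑ ρ ∈ Finset.range n, γ ρ * a ^ q ^ ρ = 0) : ∀ ρ < n, γ ρ = 0 := by
  have hq2 : 2 ≤ q := hq ▸ Fintype.one_lt_card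
  set P : Polynomial Fqn := ∑ ρ ∈ Finset.range n, Polynomial.C (γ ρ) * Polynomial.X ^ q ^ ρ
    with hPdef
  have heval : ∀ a : Fqn, P.eval a = 0 := by
    intro a
    rw [hPdef, Polynomial.eval_finset_sum]
    simpa using h a
  have hdeg : P.natDegree < Fintype.card Fqn := by
    have h1 : P.natDegree ≤ q ^ (n - 1) := by
      apply Polynomial.natDegree_sum_le_of_forall_le
      intro ρ hρ
      calc (Polynomial.C (γ ρ) * Polynomial.X ^ q ^ ρ).natDegree
          ≤ _ := Polynomial.natDegree_mul_le
        _ ≤ q ^ (n - 1) := by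
            rw [Polynomial.natDegree_C, Polynomial.natDegree_X_pow, zero_add]
            exact Nat.pow_le_pow_right (by omega) (by simp at hρ; omega)
    have h2 : q ^ (n - 1) < q ^ n := Nat.pow_lt_pow_right (by omega) (by omega)
    omega
  have hP0 : P = 0 :=
    Polynomial.eq_zero_of_natDegree_lt_card_of_eval_eq_zero P Function.injective_id
      (fun a => heval a) hdeg
  intro ρ hρ
  have hco : P.coeff (q ^ ρ) = γ ρ := by
    rw [hPdef, Polynomial.finset_sum_coeff]
    rw [Finset.sum_eq_single ρ]
    · rw [Polynomial.coeff_C_mul, Polynomial.coeff_X_pow, if_pos rfl, mul_one]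
    · intro ρ' _ hne
      rw [Polynomial.coeff_C_mul, Polynomial.coeff_X_pow,
        if_neg (fun hcon => hne (Nat.pow_right_injective hq2 hcon.symm)), mul_zero]
    · intro hcon
      exact absurd (Finset.mem_range.2 hρ) hcon
  rw [hP0] at hco
  simpa using hco.symm

end AuxLemmas

theorem stmt2 (q n m s : ℕ) (Fq Fqn : Type) [Field Fq] [Fintype Fq] [Field Fqn] [Fintype Fqn]
    [Algebra Fq Fqn] (hq : Fintype.card Fq = q) (hqn : Fintype.card Fqn = q ^ n)
    (hn : 0 < n) (hm : 0 < m) (hmn : m ≤ n)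
    (hs : 0 < s) (hgcd : Nat.gcd n s = 1)
    (α : Fin m → Fqn) (hα : LinearIndependent Fq α)
    (φ : Polynomial Fqn) (hφ : IsLinearized q φ)
    -- `c t a j` is the coefficient `c_j^{(t)}(a)`:
    -- φ(a X^{q^{ts}}) ≡ ∑_{j<m} c_j^{(t)}(a) X^{q^{js}}  (mod θ_S)
    (c : ℕ → Fqn → ℕ → Fqn)
    (hc : ∀ t < m, ∀ a : Fqn,
      thetaS Fq α ∣
        φ.comp (Polynomial.C a * Polynomial.X ^ q ^ (s * t)) -
          ∑ j ∈ Finset.range m, Polynomial.C (c t a j) * Polynomial.X ^ q ^ (s * j))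
    -- there exist a and j with c_j^{(0)}(a) ≠ 0
    (j₀ : ℕ) (hj₀m : j₀ < m) (hj₀ : ∃ a : Fqn, c 0 a j₀ ≠ 0)
    -- j₀ is the largest such index
    (hj₀max : ∀ j < m, (∃ a : Fqn, c 0 a j ≠ 0) → j ≤ j₀) :
    ∀ t : ℕ, t + j₀ ≤ m - 1 → ∀ j : ℕ, j ≤ m - 1 - t →
      ((∃ a : Fqn, c 0 a j ≠ 0) ↔ (∃ a : Fqn, c t a (j + t) ≠ 0)) := by
  classical
  have hq2 : 2 ≤ q := hq ▸ Fintype.one_lt_card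
  have hqe : ∀ e : ℕ, q ^ e ≠ 0 := fun e => pow_ne_zero e (by omega)
  obtain ⟨N, b, hφb⟩ := hφ
  set U : Submodule Fq Fqn := Submodule.span Fq (Set.range α) with hU
  -- θ vanishes on U
  have hθ : ∀ u ∈ U, (thetaS Fq α).eval u = 0 := by
    intro u hu
    rw [thetaS, Polynomial.eval_prod]
    apply Finset.prod_eq_zero (Finset.mem_filter.2 ⟨Finset.mem_univ u, hu⟩)
    simp
  -- evaluation consequence of hc
  have hev : ∀ t, t < m → ∀ a : Fqn, ∀ u ∈ U,
      φ.eval (a * u ^ q ^ (s * t)) = ∑ j ∈ Finset.range m, c t a j * u ^ q ^ (s * j) := by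
    intro t ht a u hu
    obtain ⟨g, hg⟩ := hc t ht a
    have h1 : (φ.comp (Polynomial.C a * Polynomial.X ^ q ^ (s * t)) -
        ∑ j ∈ Finset.range m, Polynomial.C (c t a j) * Polynomial.X ^ q ^ (s * j)).eval u = 0 := by
      rw [hg, Polynomial.eval_mul, hθ u hu, zero_mul]
    rw [Polynomial.eval_sub, sub_eq_zero, Polynomial.eval_comp] at h1
    simpa [Polynomial.eval_finset_sum] using h1
  -- d coefficients: expansion of x ↦ x^{q^k} on U
  have hdex : ∀ k : ℕ, ∃ dk : ℕ → Fqn, ∀ u ∈ U,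
      u ^ q ^ k = ∑ l ∈ Finset.range m, dk l * u ^ q ^ (s * l) :=
    fun k => aux_expand hq hqn hn hgcd hm α hα k
  choose d hd using hdex
  have uniq : ∀ γ : ℕ → Fqn,
      (∀ u ∈ U, ∑ l ∈ Finset.range m, γ l * u ^ q ^ (s * l) = 0) → ∀ l < m, γ l = 0 :=
    fun γ hγ => aux_uniq hq hqn hn hgcd hm α hα γ hγ
  -- periodicity of d
  have hper : ∀ k l, l < m → d (k + n) l = d k l := by
    intro k l hl
    have hsub : ∀ u ∈ U,
        ∑ l' ∈ Finset.range m, (d (k + n) l' - d k l') * u ^ q ^ (s * l') = 0 := by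
      intro u hu
      have e1 := hd (k + n) u hu
      have e3 : u ^ q ^ (k + n) = u ^ q ^ k := by
        rw [pow_add, pow_mul]
        exact aux_pow_card hqn _
      rw [e3, hd k u hu] at e1
      simp only [sub_mul]
      rw [Finset.sum_sub_distrib, ← e1, sub_self]
    exact sub_eq_zero.1 (uniq _ hsub l hl)
  have hpern : ∀ k bb l, l < m → d (k + n * bb) l = d k l := by
    intro k bb l hl
    induction bb with
    | zero => simp
    | succ bb ih =>
      have e : k + n * (bb + 1) = (k + n * bb) + n := by ring
      rw [e, hper _ _ hl, ih]
  have hmod : ∀ k l, l < m → d k l = d (k % n) l := by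
    intro k l hl
    have e : k = k % n + n * (k / n) := by rw [Nat.mod_add_div]
    conv_lhs => rw [e]
    rw [hpern _ _ _ hl]
  have hapow : ∀ (x : Fqn) (k : ℕ), x ^ q ^ k = x ^ q ^ (k % n) := by
    intro x k
    conv_lhs => rw [show k = k % n + n * (k / n) from by rw [Nat.mod_add_div]]
    rw [pow_add, pow_mul]
    exact aux_iter_fixed (aux_pow_card hqn _) _
  -- formula for c in terms of b and d
  have hA : ∀ T, T < m → ∀ a : Fqn, ∀ l, l < m →
      c T a l = ∑ i ∈ Finset.range N, b i * a ^ q ^ i * d (i + s * T) l := by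
    intro T hT a l hl
    have hsub : ∀ u ∈ U, ∑ l' ∈ Finset.range m,
        (c T a l' - ∑ i ∈ Finset.range N, b i * a ^ q ^ i * d (i + s * T) l')
          * u ^ q ^ (s * l') = 0 := by
      intro u hu
      have h1 := hev T hT a u hu
      have h2 : φ.eval (a * u ^ q ^ (s * T)) =
          ∑ i ∈ Finset.range N, b i * a ^ q ^ i * u ^ q ^ (i + s * T) := by
        rw [hφb, Polynomial.eval_finset_sum]
        apply Finset.sum_congr rfl
        intro i _
        rw [Polynomial.eval_mul, Polynomial.eval_C, Polynomial.eval_pow, Polynomial.eval_X,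
          mul_pow, aux_pp, Nat.add_comm (s * T) i]
        ring
      have h4 : ∑ l' ∈ Finset.range m,
          (∑ i ∈ Finset.range N, b i * a ^ q ^ i * d (i + s * T) l') * u ^ q ^ (s * l')
          = ∑ i ∈ Finset.range N, b i * a ^ q ^ i * u ^ q ^ (i + s * T) := by
        calc ∑ l' ∈ Finset.range m,
            (∑ i ∈ Finset.range N, b i * a ^ q ^ i * d (i + s * T) l') * u ^ q ^ (s * l')
            = ∑ l' ∈ Finset.range m, ∑ i ∈ Finset.range N,
                b i * a ^ q ^ i * d (i + s * T) l' * u ^ q ^ (s * l') := by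
              apply Finset.sum_congr rfl
              intro l' _
              rw [Finset.sum_mul]
          _ = ∑ i ∈ Finset.range N, ∑ l' ∈ Finset.range m,
                b i * a ^ q ^ i * d (i + s * T) l' * u ^ q ^ (s * l') := Finset.sum_comm
          _ = ∑ i ∈ Finset.range N, b i * a ^ q ^ i * u ^ q ^ (i + s * T) := by
              apply Finset.sum_congr rfl
              intro i _
              rw [hd (i + s * T) u hu, Finset.mul_sum]
              apply Finset.sum_congr rfl
              intro l' _
              ring
      simp only [sub_mul]
      rw [Finset.sum_sub_distrib, h4, ← h2, ← h1, sub_self]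
    exact sub_eq_zero.1 (uniq _ hsub l hl)
  -- group coefficients by residue mod n
  set β : ℕ → Fqn := fun ρ => ∑ i ∈ (Finset.range N).filter (fun i => i % n = ρ), b i with hβ
  have hCf : ∀ T, T < m → ∀ a : Fqn, ∀ l, l < m →
      c T a l = ∑ ρ ∈ Finset.range n, β ρ * a ^ q ^ ρ * d (ρ + s * T) l := by
    intro T hT a l hl
    rw [hA T hT a l hl,
      ← Finset.sum_fiberwise_of_maps_to (fun i _ => Finset.mem_range.2 (Nat.mod_lt i hn))
        (fun i => b i * a ^ q ^ i * d (i + s * T) l)]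
    apply Finset.sum_congr rfl
    intro ρ hρmem
    have hρn : ρ < n := Finset.mem_range.1 hρmem
    rw [hβ]
    simp only
    rw [Finset.sum_mul, Finset.sum_mul]
    apply Finset.sum_congr rfl
    intro i hi
    have hiρ : i % n = ρ := (Finset.mem_filter.1 hi).2
    have e5 : (i + s * T) % n = (ρ + s * T) % n := by
      conv_lhs => rw [Nat.add_mod]
      conv_rhs => rw [Nat.add_mod]
      rw [hiρ, Nat.mod_eq_of_lt hρn]
    rw [hapow a i, hiρ, hmod (i + s * T) l hl, e5, ← hmod (ρ + s * T) l hl]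
  -- vanishing criterion
  have hvan : ∀ T, T < m → ∀ l, l < m →
      ((∀ a : Fqn, c T a l = 0) ↔ (∀ ρ, ρ < n → β ρ * d (ρ + s * T) l = 0)) := by
    intro T hT l hl
    constructor
    · intro hall
      apply aux_qpoly_zero hq hqn hn (fun ρ => β ρ * d (ρ + s * T) l)
      intro a
      have h6 := hCf T hT a l hl
      rw [hall a] at h6
      calc ∑ ρ ∈ Finset.range n, β ρ * d (ρ + s * T) l * a ^ q ^ ρ
          = ∑ ρ ∈ Finset.range n, β ρ * a ^ q ^ ρ * d (ρ + s * T) l := by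
            apply Finset.sum_congr rfl
            intros
            ring
        _ = 0 := h6.symm
    · intro hall a
      rw [hCf T hT a l hl]
      apply Finset.sum_eq_zero
      intro ρ hρ
      have h7 := hall ρ (Finset.mem_range.1 hρ)
      calc β ρ * a ^ q ^ ρ * d (ρ + s * T) l = (β ρ * d (ρ + s * T) l) * a ^ q ^ ρ := by ring
        _ = 0 := by rw [h7, zero_mul]
  -- maximality: for l > j₀ the coefficients vanish
  have hmax : ∀ l, j₀ < l → l < m → ∀ ρ, ρ < n → β ρ * d ρ l = 0 := by
    intro l hjl hl ρ hρ
    have hzero : ∀ a : Fqn, c 0 a l = 0 := by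
      intro a
      by_contra hne
      have := hj₀max l hl ⟨a, hne⟩
      omega
    have h8 := (hvan 0 hm l hl).1 hzero ρ hρ
    simpa using h8
  -- the recurrence for d
  have hrec : ∀ k l, l < m → d (k + s) l =
      (if 1 ≤ l then (d k (l - 1)) ^ q ^ s else 0)
        + (d k (m - 1)) ^ q ^ s * d (s * m) l := by
    intro k l hl
    obtain ⟨m', rfl⟩ : ∃ m', m = m' + 1 := ⟨m - 1, by omega⟩
    have hsub : ∀ u ∈ U, ∑ l' ∈ Finset.range (m' + 1),
        (d (k + s) l' - ((if 1 ≤ l' then (d k (l' - 1)) ^ q ^ s else 0)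
          + (d k (m' + 1 - 1)) ^ q ^ s * d (s * (m' + 1)) l')) * u ^ q ^ (s * l') = 0 := by
      intro u hu
      have e1 := hd (k + s) u hu
      have e2 : u ^ q ^ (k + s) =
          ∑ l' ∈ Finset.range (m' + 1), (d k l') ^ q ^ s * u ^ q ^ (s * l' + s) := by
        rw [← aux_pp u k s, hd k u hu, aux_sum_pow hq]
        apply Finset.sum_congr rfl
        intro l' _
        rw [mul_pow, aux_pp]
      have e3 : ∑ l' ∈ Finset.range (m' + 1), (d k l') ^ q ^ s * u ^ q ^ (s * l' + s)
          = (∑ l' ∈ Finset.range (m' + 1),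
              (if 1 ≤ l' then (d k (l' - 1)) ^ q ^ s else 0) * u ^ q ^ (s * l'))
            + (d k m') ^ q ^ s * u ^ q ^ (s * (m' + 1)) := by
        rw [Finset.sum_range_succ]
        congr 1
        rw [Finset.sum_range_succ' (fun l' =>
          (if 1 ≤ l' then (d k (l' - 1)) ^ q ^ s else 0) * u ^ q ^ (s * l'))]
        simp only [if_neg (by omega : ¬ (1 : ℕ) ≤ 0), zero_mul, add_zero]
        apply Finset.sum_congr rfl
        intro l' _
        rw [if_pos (by omega), Nat.add_sub_cancel]
        have e6 : s * (l' + 1) = s * l' + s := by ring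
        rw [e6]
      have e4 : u ^ q ^ (s * (m' + 1)) =
          ∑ l' ∈ Finset.range (m' + 1), d (s * (m' + 1)) l' * u ^ q ^ (s * l') :=
        hd (s * (m' + 1)) u hu
      rw [e2, e3, e4, Finset.mul_sum] at e1
      simp only [sub_mul, Nat.add_sub_cancel]
      rw [Finset.sum_sub_distrib, ← e1]
      simp only [add_mul]
      rw [Finset.sum_add_distrib, sub_eq_zero]
      congr 1
      apply Finset.sum_congr rfl
      intro l' _
      ring
    have := uniq _ hsub l hl
    exact sub_eq_zero.1 this
  -- main induction
  have hG : ∀ r, r + j₀ ≤ m - 1 → ∀ ρ, ρ < n → β ρ ≠ 0 →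
      (∀ l, j₀ + r < l → l < m → d (ρ + s * r) l = 0) ∧
      (∀ j', j' + r < m → d (ρ + s * r) (j' + r) = (d ρ j') ^ q ^ (s * r)) := by
    intro r
    induction r with
    | zero =>
      intro hr ρ hρ hβρ
      constructor
      · intro l h1 h2
        have h9 := hmax l (by omega) h2 ρ hρ
        have h3 : ρ + s * 0 = ρ := by ring
        rw [h3]
        exact (mul_eq_zero.1 h9).resolve_left hβρ
      · intro j' _
        simp
    | succ r ih =>
      intro hr ρ hρ hβρ
      have hrr : r + j₀ ≤ m - 1 := by omega
      obtain ⟨iha, ihb⟩ := ih hrr ρ hρ hβρ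
      have hm1 : d (ρ + s * r) (m - 1) = 0 := iha (m - 1) (by omega) (by omega)
      have hstep : ∀ l, l < m → d (ρ + s * (r + 1)) l =
          (if 1 ≤ l then (d (ρ + s * r) (l - 1)) ^ q ^ s else 0) := by
        intro l hl
        have e : ρ + s * (r + 1) = (ρ + s * r) + s := by ring
        rw [e, hrec (ρ + s * r) l hl, hm1, zero_pow (hqe s), zero_mul, add_zero]
      constructor
      · intro l h1 h2
        rw [hstep l h2]
        rcases Nat.lt_or_ge l 1 with h | h
        · rw [if_neg (by omega)]
        · rw [if_pos h, iha (l - 1) (by omega) (by omega)]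
          exact zero_pow (hqe s)
      · intro j' hj'
        have e : j' + (r + 1) = (j' + r) + 1 := by ring
        rw [e, hstep _ (by omega), if_pos (by omega)]
        have e2 : j' + r + 1 - 1 = j' + r := by omega
        rw [e2, ihb j' (by omega), aux_pp]
        have e3 : s * (r + 1) = s * r + s := by ring
        rw [e3]
  -- conclusion
  intro t ht j hj
  have htm : t < m := by omega
  have hjm : j < m := by omega
  have hjtm : j + t < m := by omega
  have key : ∀ ρ, ρ < n → (β ρ * d (ρ + s * 0) j = 0 ↔ β ρ * d (ρ + s * t) (j + t) = 0) := by
    intro ρ hρ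
    have h3 : ρ + s * 0 = ρ := by ring
    rw [h3]
    by_cases hβρ : β ρ = 0
    · simp [hβρ]
    · obtain ⟨_, hb⟩ := hG t (by omega) ρ hρ hβρ
      rw [hb j (by omega), mul_eq_zero, mul_eq_zero, pow_eq_zero_iff (hqe (s * t))]
  constructor
  · rintro ⟨a, ha⟩
    by_contra hcon
    push_neg at hcon
    have h1 := (hvan t htm (j + t) hjtm).1 hcon
    have h2 : ∀ ρ, ρ < n → β ρ * d (ρ + s * 0) j = 0 :=
      fun ρ hρ => (key ρ hρ).2 (h1 ρ hρ)
    have h3 := (hvan 0 hm j hjm).2 h2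
    exact ha (h3 a)
  · rintro ⟨a, ha⟩
    by_contra hcon
    push_neg at hcon
    have h1 := (hvan 0 hm j hjm).1 hcon
    have h2 : ∀ ρ, ρ < n → β ρ * d (ρ + s * t) (j + t) = 0 :=
      fun ρ hρ => (key ρ hρ).1 (h1 ρ hρ)
    have h3 := (hvan t htm (j + t) hjtm).2 h2
    exact ha (h3 a)
end

section
/- Let k, m, n be positive integers with k < m ≤ n and gcd(n,s) = 1. Let φ : F_{q^n} → F_{q^n} be an F_q-linear map such that for every f ∈ G_{k,s} there exists g ∈ G_{k,s} with φ(f(u)) = g(u) for all u ∈ U_S. Then for every a ∈ F_{q^n} there exists b ∈ F_{q^n} such that φ(a·u) = b·u for all u ∈ U_S. -/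
open Finset

section Aux


open scoped Classical

variable {Fq Fqn : Type} [Field Fq] [Field Fqn] [Algebra Fq Fqn]

lemma auxQ (q s : ℕ) (hq2 : 1 < q) (pq : ℕ → Fqn →+* Fqn) (hpq : ∀ t x, pq t x = x ^ q ^ t)
    (halg : ∀ (t : ℕ) (c : Fq), (algebraMap Fq Fqn c) ^ q ^ t = algebraMap Fq Fqn c)
    (hfix : ∀ z : Fqn, z ^ q ^ s = z → ∃ c : Fq, algebraMap Fq Fqn c = z) :
    ∀ (d t : ℕ) (v lam : ℕ → Fqn),
      (∀ g : ℕ → Fq, (∑ r ∈ Finset.range t, g r • v r) = 0 → ∀ r < t, g r = 0) →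
      (((Finset.range t).filter fun r => lam r ≠ 0).card ≤ d) →
      (∀ l < d, ∑ r ∈ Finset.range t, lam r * (v r) ^ q ^ (s * l) = 0) →
      ∀ r < t, lam r = 0 := by
  intro d
  induction d with
  | zero =>
    intro t v lam hv hcard heq r hr
    by_contra hne
    have hmem : r ∈ (Finset.range t).filter fun r => lam r ≠ 0 := by
      simp [Finset.mem_filter, Finset.mem_range, hr, hne]
    have := Finset.card_pos.mpr ⟨r, hmem⟩
    omega
  | succ d ih =>
    intro t v lam hv hcard heq
    by_cases hz : ∀ r, r < t → lam r = 0
    · exact hz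
    push_neg at hz
    obtain ⟨r0, hr0t, hr0⟩ := hz
    exfalso
    set mu : ℕ → Fqn := fun r => (lam r) ^ (q ^ s) * lam r0 - lam r * (lam r0) ^ (q ^ s) with hmu
    -- independence of w r = (v r)^(q^s)
    have hw : ∀ g : ℕ → Fq, (∑ r ∈ Finset.range t, g r • (v r) ^ (q ^ s)) = 0 →
        ∀ r < t, g r = 0 := by
      intro g hg
      have hsum : ∑ r ∈ Finset.range t, g r • (v r) ^ (q ^ s)
          = pq s (∑ r ∈ Finset.range t, g r • v r) := by
        rw [map_sum]
        refine Finset.sum_congr rfl fun r _ => ?_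
        rw [hpq, Algebra.smul_def, Algebra.smul_def, mul_pow, halg]
      rw [hsum] at hg
      have h0 : pq s (∑ r ∈ Finset.range t, g r • v r) = pq s 0 := by
        rw [hg, map_zero]
      exact hv g ((pq s).injective h0)
    -- card bound for mu
    have hmucard : ((Finset.range t).filter fun r => mu r ≠ 0).card ≤ d := by
      have hsub : ((Finset.range t).filter fun r => mu r ≠ 0) ⊆
          (((Finset.range t).filter fun r => lam r ≠ 0).erase r0) := by
        intro r hrm
        rw [Finset.mem_filter] at hrm
        rw [Finset.mem_erase, Finset.mem_filter]
        refine ⟨?_, hrm.1, ?_⟩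
        · rintro rfl
          apply hrm.2
          show lam r ^ q ^ s * lam r - lam r * lam r ^ q ^ s = 0
          ring
        · intro h
          apply hrm.2
          show lam r ^ q ^ s * lam r0 - lam r * lam r0 ^ q ^ s = 0
          rw [h, zero_pow (by positivity), zero_mul, zero_mul, sub_zero]
      have hr0mem : r0 ∈ (Finset.range t).filter fun r => lam r ≠ 0 := by
        simp [Finset.mem_filter, Finset.mem_range, hr0t, hr0]
      have := Finset.card_le_card hsub
      rw [Finset.card_erase_of_mem hr0mem] at this
      omega
    -- equations for mu
    have hmueq : ∀ l < d, ∑ r ∈ Finset.range t, mu r * ((v r) ^ (q ^ s)) ^ q ^ (s * l) = 0 := by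
      intro l hl
      have key : ∀ r, mu r * ((v r) ^ (q ^ s)) ^ q ^ (s * l)
          = lam r0 * pq s (lam r * (v r) ^ q ^ (s * l))
            - (lam r0) ^ (q ^ s) * (lam r * (v r) ^ q ^ (s * (l + 1))) := by
        intro r
        rw [hpq, hmu]
        have e1 : ((v r) ^ (q ^ s)) ^ q ^ (s * l) = (v r) ^ q ^ (s * (l + 1)) := by
          rw [← pow_mul, ← pow_add, show s + s * l = s * (l + 1) by ring]
        have e2 : ((v r) ^ q ^ (s * l)) ^ (q ^ s) = (v r) ^ q ^ (s * (l + 1)) := by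
          rw [← pow_mul, ← pow_add, show s * l + s = s * (l + 1) by ring]
        rw [e1, mul_pow, e2]
        ring
      calc ∑ r ∈ Finset.range t, mu r * ((v r) ^ (q ^ s)) ^ q ^ (s * l)
          = (∑ r ∈ Finset.range t, lam r0 * pq s (lam r * (v r) ^ q ^ (s * l)))
            - ∑ r ∈ Finset.range t, (lam r0) ^ (q ^ s) * (lam r * (v r) ^ q ^ (s * (l + 1))) := by
            rw [← Finset.sum_sub_distrib]
            exact Finset.sum_congr rfl fun r _ => key r
      _ = lam r0 * pq s (∑ r ∈ Finset.range t, lam r * (v r) ^ q ^ (s * l))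
            - (lam r0) ^ (q ^ s) * ∑ r ∈ Finset.range t, lam r * (v r) ^ q ^ (s * (l + 1)) := by
            rw [← Finset.mul_sum, ← Finset.mul_sum, ← map_sum]
      _ = 0 := by
            rw [heq l (by omega), heq (l + 1) (by omega), map_zero]
            ring
    have hmu0 : ∀ r < t, mu r = 0 := ih t (fun r => (v r) ^ (q ^ s)) mu hw hmucard hmueq
    -- fixed points
    have hfixr : ∀ r, r < t → ((lam r / lam r0) ^ (q ^ s) = lam r / lam r0) := by
      intro r hrt
      have h := hmu0 r hrt
      rw [hmu, sub_eq_zero] at h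
      rw [div_pow]
      rw [div_eq_div_iff (pow_ne_zero _ hr0) hr0]
      linear_combination h
    have hex : ∀ r : ℕ, ∃ c : Fq, r < t → algebraMap Fq Fqn c = lam r / lam r0 := by
      intro r
      by_cases h : r < t
      · obtain ⟨c, hc⟩ := hfix _ (by simpa [Nat.mul_comm] using hfixr r h)
        exact ⟨c, fun _ => hc⟩
      · exact ⟨0, fun h' => absurd h' h⟩
    choose cf hcf using hex
    -- use equation at l = 0
    have h0 : ∑ r ∈ Finset.range t, lam r * v r = 0 := by
      have := heq 0 (by omega)
      simpa using this
    have hsum0 : ∑ r ∈ Finset.range t, cf r • v r = 0 := by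
      have hfactor : ∀ r ∈ Finset.range t, lam r * v r = lam r0 * (cf r • v r) := by
        intro r hrm
        rw [Finset.mem_range] at hrm
        rw [Algebra.smul_def, hcf r hrm]
        field_simp
      rw [Finset.sum_congr rfl hfactor, ← Finset.mul_sum] at h0
      exact (mul_eq_zero.mp h0).resolve_left hr0
    have := hv cf hsum0 r0 hr0t
    have h1 : algebraMap Fq Fqn (cf r0) = 1 := by
      rw [hcf r0 hr0t, div_self hr0]
    rw [this, map_zero] at h1
    exact zero_ne_one h1

lemma auxR [Fintype Fqn] (q s : ℕ) (hq2 : 1 < q) (pq : ℕ → Fqn →+* Fqn)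
    (hpq : ∀ t x, pq t x = x ^ q ^ t)
    (halg : ∀ (t : ℕ) (c : Fq), (algebraMap Fq Fqn c) ^ q ^ t = algebraMap Fq Fqn c)
    (hfix : ∀ z : Fqn, z ^ q ^ s = z → ∃ c : Fq, algebraMap Fq Fqn c = z)
    (t : ℕ) (v c : ℕ → Fqn)
    (hv : ∀ g : ℕ → Fq, (∑ r ∈ Finset.range t, g r • v r) = 0 → ∀ r < t, g r = 0)
    (heq : ∀ r < t, ∑ l ∈ Finset.range t, c l * (v r) ^ q ^ (s * l) = 0) :
    ∀ l < t, c l = 0 := by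
  intro l0 hl0
  have ht : 0 < t := by omega
  haveI : NeZero t := ⟨by omega⟩
  -- Moore columns are linearly independent over Fqn
  have hMoore : LinearIndependent Fqn
      (fun r : Fin t => fun l : Fin t => (v r) ^ q ^ (s * (l : ℕ))) := by
    rw [Fintype.linearIndependent_iff]
    intro g hg r
    have hkey : ∀ r' < t, (fun r'' : ℕ => if h : r'' < t then g ⟨r'', h⟩ else 0) r' = 0 := by
      apply auxQ q s hq2 pq hpq halg hfix t t v _ hv
      · calc ((Finset.range t).filter _).card ≤ (Finset.range t).card :=
              Finset.card_filter_le _ _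
          _ = t := Finset.card_range t
      · intro l hl
        have := congrFun hg ⟨l, hl⟩
        simp only [Finset.sum_apply, Pi.zero_apply] at this
        rw [Finset.sum_range]
        rw [← this]
        refine Finset.sum_congr rfl fun i _ => ?_
        simp [Pi.smul_apply, smul_eq_mul, Fin.is_lt]
    have := hkey (r : ℕ) r.isLt
    simpa using this
  have hcard : Fintype.card (Fin t) = Module.finrank Fqn (Fin t → Fqn) := by
    simp [Module.finrank_pi]
  let B := basisOfLinearIndependentOfCardEqFinrank hMoore hcard
  have hB : ⇑B = fun r : Fin t => fun l : Fin t => (v r) ^ q ^ (s * (l : ℕ)) :=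
    coe_basisOfLinearIndependentOfCardEqFinrank hMoore hcard
  let f : (Fin t → Fqn) →ₗ[Fqn] Fqn := ∑ l : Fin t, c (l : ℕ) • LinearMap.proj l
  have hf0 : f = 0 := by
    apply B.ext
    intro r
    rw [hB]
    show (∑ l : Fin t, c (l : ℕ) • LinearMap.proj l : (Fin t → Fqn) →ₗ[Fqn] Fqn) _ = _
    rw [LinearMap.sum_apply]
    have : ∑ l : Fin t, (c (l : ℕ) • LinearMap.proj l : (Fin t → Fqn) →ₗ[Fqn] Fqn)
        (fun l : Fin t => (v r) ^ q ^ (s * (l : ℕ)))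
        = ∑ l ∈ Finset.range t, c l * (v r) ^ q ^ (s * l) := by
      rw [Finset.sum_range]
      refine Finset.sum_congr rfl fun l _ => ?_
      simp [LinearMap.proj_apply, smul_eq_mul]
    rw [this, heq r r.isLt]
    simp
  have := congrFun (congrArg (fun (g : (Fin t → Fqn) →ₗ[Fqn] Fqn) => g.toFun) hf0)
      (Pi.single ⟨l0, hl0⟩ 1)
  simp only [LinearMap.toFun_eq_coe, LinearMap.zero_apply] at this
  have hev : f (Pi.single ⟨l0, hl0⟩ 1) = c l0 := by
    show (∑ l : Fin t, c (l : ℕ) • LinearMap.proj l : (Fin t → Fqn) →ₗ[Fqn] Fqn) _ = _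
    rw [LinearMap.sum_apply]
    rw [Fintype.sum_eq_single (⟨l0, hl0⟩ : Fin t)]
    · simp [LinearMap.proj_apply]
    · intro l hl
      simp only [LinearMap.smul_apply, LinearMap.proj_apply]
      rw [Pi.single_eq_of_ne hl, smul_zero]
  rw [hf0] at hev
  simpa using hev.symm


end Aux

theorem stmt3 (q n m k s : ℕ) (Fq Fqn : Type) [Field Fq] [Fintype Fq] [Field Fqn] [Fintype Fqn]
    [Algebra Fq Fqn] (hq : Fintype.card Fq = q) (hqn : Fintype.card Fqn = q ^ n)
    (hn : 0 < n) (hk : 0 < k) (hkm : k < m) (hmn : m ≤ n)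
    (hs : 0 < s) (hgcd : Nat.gcd n s = 1)
    (α : Fin m → Fqn) (hα : LinearIndependent Fq α)
    (φ : Fqn →ₗ[Fq] Fqn)
    -- for every f ∈ G_{k,s} there is g ∈ G_{k,s} with φ(f(u)) = g(u) for all u ∈ U_S
    (hφ : ∀ a : ℕ → Fqn, ∃ b : ℕ → Fqn, ∀ u ∈ Submodule.span Fq (Set.range α),
        φ (∑ i ∈ Finset.range k, a i * u ^ q ^ (s * i))
          = ∑ i ∈ Finset.range k, b i * u ^ q ^ (s * i)) :
    ∀ a : Fqn, ∃ b : Fqn, ∀ u ∈ Submodule.span Fq (Set.range α), φ (a * u) = b * u := by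
  classical
  have hq2 : 1 < q := hq ▸ Fintype.one_lt_card
  have hn2 : 2 ≤ n := by omega
  -- characteristic setup
  set p : ℕ := ringChar Fq with hpdef
  haveI hcharFq : CharP Fq p := ringChar.charP Fq
  have hp : p.Prime := CharP.char_is_prime Fq p
  haveI : Fact p.Prime := ⟨hp⟩
  haveI hcharFqn : CharP Fqn p :=
    charP_of_injective_algebraMap (algebraMap Fq Fqn).injective p
  haveI : ExpChar Fqn p := ExpChar.prime hp
  obtain ⟨epos, hecard⟩ := FiniteField.card Fq p
  set e : ℕ := (epos : ℕ) with hedef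
  have he : q = p ^ e := by rw [← hq, hecard.2]
  set pq : ℕ → Fqn →+* Fqn := fun t => iterateFrobenius Fqn p (e * t) with hpqdef
  have hpq : ∀ t (x : Fqn), pq t x = x ^ q ^ t := by
    intro t x
    show iterateFrobenius Fqn p (e * t) x = x ^ q ^ t
    rw [iterateFrobenius_def, he, ← pow_mul]
  -- algebraMap elements are fixed by all q-power maps
  have halg : ∀ (t : ℕ) (c : Fq), (algebraMap Fq Fqn c) ^ q ^ t = algebraMap Fq Fqn c := by
    intro t c
    rw [← map_pow]
    congr 1
    have := FiniteField.pow_card_pow (K := Fq) t c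
    rwa [hq] at this
  -- every x satisfies x ^ q ^ n = x, hence exponents reduce mod n
  have hxqn : ∀ x : Fqn, x ^ q ^ n = x := by
    intro x
    have := FiniteField.pow_card (K := Fqn) x
    rwa [hqn] at this
  have hpowmod : ∀ (x : Fqn) (tt : ℕ), x ^ q ^ tt = x ^ q ^ (tt % n) := by
    intro x tt
    conv_lhs => rw [← Nat.div_add_mod tt n]
    rw [pow_add, pow_mul, pow_mul]
    congr 1
    induction tt / n with
    | zero => simp
    | succ j ihj => rw [pow_succ, pow_mul, ihj, hxqn]
  -- fixed points of x ↦ x ^ q ^ s are exactly the image of Fq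
  have hfix : ∀ z : Fqn, z ^ q ^ s = z → ∃ c : Fq, algebraMap Fq Fqn c = z := by
    have hq1pos : 0 < q := by omega
    intro z hz
    -- first reduce to z ^ q = z
    have hzq : z ^ q = z := by
      by_cases hz0 : z = 0
      · rw [hz0, zero_pow (by omega)]
      set ζ : Fqnˣ := Units.mk0 z hz0 with hζ
      have hval : (ζ : Fqn) = z := rfl
      have hpow1 : ∀ N : ℕ, z ^ (q ^ N) = z → ζ ^ (q ^ N - 1) = 1 := by
        intro N hN
        have hpos : 0 < q ^ N := by positivity
        apply Units.ext
        rw [Units.val_pow_eq_pow_val, hval, Units.val_one]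
        have : z ^ (q ^ N - 1) * z = 1 * z := by
          rw [one_mul, ← pow_succ]
          rw [Nat.sub_add_cancel hpos]
          exact hN
        exact mul_right_cancel₀ hz0 this
      have hd1 : orderOf ζ ∣ q ^ s - 1 := orderOf_dvd_of_pow_eq_one (hpow1 s hz)
      have hd2 : orderOf ζ ∣ q ^ n - 1 := orderOf_dvd_of_pow_eq_one (hpow1 n (hxqn z))
      -- Bezout
      have hco : Nat.Coprime s n := Nat.Coprime.symm hgcd
      obtain ⟨x, -, hx⟩ := Nat.exists_mul_mod_eq_one_of_coprime hco (by omega)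
      have hsx : s * x = n * (s * x / n) + 1 := by
        conv_lhs => rw [← Nat.div_add_mod (s * x) n]
        rw [hx]
      set y : ℕ := s * x / n with hydef
      have hd1x : orderOf ζ ∣ q ^ (s * x) - 1 := by
        refine hd1.trans ?_
        have := Nat.sub_dvd_pow_sub_pow (q ^ s) 1 x
        rwa [one_pow, ← pow_mul] at this
      have hd2y : orderOf ζ ∣ q ^ (n * y) - 1 := by
        refine hd2.trans ?_
        have := Nat.sub_dvd_pow_sub_pow (q ^ n) 1 y
        rwa [one_pow, ← pow_mul] at this
      have hdq : orderOf ζ ∣ q - 1 := by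
        have hA : orderOf ζ ∣ q ^ (n * y) * q - 1 := by
          have : q ^ (n * y) * q = q ^ (s * x) := by rw [hsx, pow_succ]
          rw [this]
          exact hd1x
        have hB : orderOf ζ ∣ q * (q ^ (n * y) - 1) := Dvd.dvd.mul_left hd2y q
        have hsub := Nat.dvd_sub hA hB
        have hQy : 0 < q ^ (n * y) := by positivity
        have hqQ : q ≤ q ^ (n * y) * q := Nat.le_mul_of_pos_left q hQy
        have : q ^ (n * y) * q - 1 - q * (q ^ (n * y) - 1) = q - 1 := by
          have hmul : q * (q ^ (n * y) - 1) = q ^ (n * y) * q - q := by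
            rw [Nat.mul_sub, mul_one, mul_comm]
          rw [hmul]
          omega
        rwa [this] at hsub
      have hζq : ζ ^ (q - 1) = 1 := orderOf_dvd_iff_pow_eq_one.mp hdq
      have hzq1 : z ^ (q - 1) = 1 := by
        have := congrArg (Units.val) hζq
        rwa [Units.val_pow_eq_pow_val, hval, Units.val_one] at this
      calc z ^ q = z ^ (q - 1) * z := by
            rw [← pow_succ, Nat.sub_add_cancel hq1pos]
        _ = z := by rw [hzq1, one_mul]
    -- now the counting argument
    set P : Polynomial Fqn := Polynomial.X ^ q - Polynomial.X with hPdef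
    have hdeg : P.natDegree = q := by
      rw [hPdef]
      rw [Polynomial.natDegree_sub_eq_left_of_natDegree_lt] <;>
        simp [Polynomial.natDegree_X_pow, Polynomial.natDegree_X]
      omega
    have hP0 : P ≠ 0 := by
      intro h
      rw [h, Polynomial.natDegree_zero] at hdeg
      omega
    have himg : Finset.image (algebraMap Fq Fqn) Finset.univ ⊆ P.roots.toFinset := by
      intro w hw
      obtain ⟨c, _, rfl⟩ := Finset.mem_image.mp hw
      rw [Multiset.mem_toFinset, Polynomial.mem_roots hP0]
      have : (algebraMap Fq Fqn c) ^ q = algebraMap Fq Fqn c := by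
        have := halg 1 c
        rwa [pow_one] at this
      simp [hPdef, Polynomial.IsRoot, sub_eq_zero, this]
    have hcardimg : (Finset.image (algebraMap Fq Fqn) Finset.univ).card = q := by
      rw [Finset.card_image_of_injective _ (algebraMap Fq Fqn).injective, Finset.card_univ, hq]
    have hcardroots : P.roots.toFinset.card ≤ q := by
      calc P.roots.toFinset.card ≤ Multiset.card P.roots := Multiset.toFinset_card_le _
        _ ≤ P.natDegree := Polynomial.card_roots' P
        _ = q := hdeg
    have heqset : Finset.image (algebraMap Fq Fqn) Finset.univ = P.roots.toFinset :=
      Finset.eq_of_subset_of_card_le himg (by rw [hcardimg]; exact hcardroots)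
    have hzmem : z ∈ P.roots.toFinset := by
      rw [Multiset.mem_toFinset, Polynomial.mem_roots hP0]
      simp [hPdef, Polynomial.IsRoot, sub_eq_zero, hzq]
    rw [← heqset] at hzmem
    obtain ⟨c, _, hc⟩ := Finset.mem_image.mp hzmem
    exact ⟨c, hc⟩
  -- elementary independence of the alpha family
  set vf : ℕ → Fqn := fun r => if h : r < m then α ⟨r, h⟩ else 0 with hvf
  have hvfU : ∀ r, r < m → vf r ∈ Submodule.span Fq (Set.range α) := by
    intro r hr
    have : vf r = α ⟨r, hr⟩ := by rw [hvf]; simp [hr]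
    rw [this]
    exact Submodule.subset_span ⟨⟨r, hr⟩, rfl⟩
  have hαe : ∀ t, t ≤ m → ∀ g : ℕ → Fq,
      (∑ r ∈ Finset.range t, g r • vf r) = 0 → ∀ r < t, g r = 0 := by
    intro t htm g hsum r hrt
    have hli := Fintype.linearIndependent_iff.mp hα
    set G : Fin m → Fq := fun i => if (i : ℕ) < t then g i else 0 with hG
    set F : ℕ → Fqn := fun r => if h : r < m then G ⟨r, h⟩ • α ⟨r, h⟩ else 0 with hF
    have e1 : ∑ r ∈ Finset.range t, g r • vf r = ∑ r ∈ Finset.range t, F r := by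
      refine Finset.sum_congr rfl fun r' hr' => ?_
      rw [Finset.mem_range] at hr'
      have hrm : r' < m := lt_of_lt_of_le hr' htm
      rw [hF, hvf]
      simp [hrm, hG, hr']
    have e2 : ∑ r ∈ Finset.range t, F r = ∑ r ∈ Finset.range m, F r := by
      apply Finset.sum_subset (Finset.range_subset_range.mpr htm)
      intro r' hr' hnot
      rw [Finset.mem_range] at hr'
      rw [Finset.mem_range, not_lt] at hnot
      rw [hF]
      simp [hr', hG, Nat.not_lt.mpr hnot]
    have e3 : ∑ r ∈ Finset.range m, F r = ∑ i : Fin m, G i • α i := by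
      rw [← Fin.sum_univ_eq_sum_range]
      refine Finset.sum_congr rfl fun i _ => ?_
      rw [hF]
      simp [i.isLt]
    have hz : ∀ i : Fin m, G i = 0 := hli G (by rw [← e3, ← e2, ← e1, hsum])
    have hrm : r < m := lt_of_lt_of_le hrt htm
    have := hz ⟨r, hrm⟩
    rw [hG] at this
    simpa [hrt] using this
  -- decomposition of φ into q-power monomials
  have hfrkFqn : Module.finrank Fq Fqn = n := by
    have hcard := Module.card_eq_pow_finrank (K := Fq) (V := Fqn)
    rw [hq, hqn] at hcard
    exact Nat.pow_right_injective hq2 hcard.symm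
  let ebasis : Module.Basis (Fin n) Fq Fqn := Module.finBasisOfFinrankEq Fq Fqn hfrkFqn
  let mh : Fin n → (Fqn →* Fqn) := fun i =>
    { toFun := fun x => x ^ q ^ (s * (i : ℕ)),
      map_one' := one_pow _,
      map_mul' := fun x y => mul_pow x y _ }
  obtain ⟨ξ, hξ⟩ := IsCyclic.exists_generator (α := Fqnˣ)
  have horder : orderOf ξ = q ^ n - 1 := by
    rw [orderOf_eq_card_of_forall_mem_zpowers hξ, Nat.card_units, Nat.card_eq_fintype_card, hqn]
  have hltpow : ∀ tt, tt < n → q ^ tt < q ^ n - 1 := by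
    intro tt htt
    have h1 : q ^ tt ≤ q ^ (n - 1) := Nat.pow_le_pow_right (by omega) (by omega)
    have h2 : q ^ n = q ^ (n - 1) * q := by
      rw [← pow_succ]
      congr 1
      omega
    have h3 : q ≤ q ^ (n - 1) := Nat.le_self_pow (by omega) q
    have h4 : q ^ (n - 1) * 2 ≤ q ^ (n - 1) * q := Nat.mul_le_mul_left _ (by omega)
    omega
  have hmh_inj : Function.Injective mh := by
    intro i i' hii
    have happ : ((ξ : Fqn)) ^ q ^ (s * (i : ℕ)) = ((ξ : Fqn)) ^ q ^ (s * (i' : ℕ)) :=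
      congrArg (fun f : Fqn →* Fqn => f (ξ : Fqn)) hii
    rw [hpowmod _ (s * (i : ℕ)), hpowmod _ (s * (i' : ℕ))] at happ
    have ha : s * (i : ℕ) % n < n := Nat.mod_lt _ (by omega)
    have hb : s * (i' : ℕ) % n < n := Nat.mod_lt _ (by omega)
    have hu : ξ ^ (q ^ (s * (i : ℕ) % n)) = ξ ^ (q ^ (s * (i' : ℕ) % n)) := by
      apply Units.ext
      rw [Units.val_pow_eq_pow_val, Units.val_pow_eq_pow_val]
      exact happ
    have hmodeq : q ^ (s * (i : ℕ) % n) ≡ q ^ (s * (i' : ℕ) % n) [MOD q ^ n - 1] := by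
      rw [← horder]
      exact pow_eq_pow_iff_modEq.mp hu
    have hpoweq : q ^ (s * (i : ℕ) % n) = q ^ (s * (i' : ℕ) % n) := by
      unfold Nat.ModEq at hmodeq
      rwa [Nat.mod_eq_of_lt (hltpow _ ha), Nat.mod_eq_of_lt (hltpow _ hb)] at hmodeq
    have hab : s * (i : ℕ) % n = s * (i' : ℕ) % n := Nat.pow_right_injective hq2 hpoweq
    have hmod : s * (i : ℕ) ≡ s * (i' : ℕ) [MOD n] := hab
    have hmod2 : (i : ℕ) ≡ (i' : ℕ) [MOD n] :=
      Nat.ModEq.cancel_left_of_coprime hgcd hmod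
    have : (i : ℕ) % n = (i' : ℕ) % n := hmod2
    rw [Nat.mod_eq_of_lt i.isLt, Nat.mod_eq_of_lt i'.isLt] at this
    exact Fin.ext this
  have hfnli : LinearIndependent Fqn (fun i : Fin n => ((mh i : Fqn →* Fqn) : Fqn → Fqn)) :=
    (linearIndependent_monoidHom Fqn Fqn).comp mh hmh_inj
  let Tl : Fin n → (Fqn →ₗ[Fq] Fqn) := fun i =>
    { toFun := fun x => x ^ q ^ (s * (i : ℕ)),
      map_add' := fun x y => by
        show (x + y) ^ q ^ (s * (i : ℕ)) = x ^ q ^ (s * (i : ℕ)) + y ^ q ^ (s * (i : ℕ))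
        rw [← hpq, ← hpq, ← hpq, map_add],
      map_smul' := fun c x => by
        show (c • x) ^ q ^ (s * (i : ℕ)) = (RingHom.id Fq c) • x ^ q ^ (s * (i : ℕ))
        rw [RingHom.id_apply, Algebra.smul_def, Algebra.smul_def, mul_pow, halg] }
  let Mf : (Fqn →ₗ[Fq] Fqn) →ₗ[Fqn] (Fqn → Fqn) :=
    { toFun := fun ψ => ⇑ψ, map_add' := fun _ _ => rfl, map_smul' := fun _ _ => rfl }
  have hTlli : LinearIndependent Fqn Tl := LinearIndependent.of_comp Mf hfnli
  let E : (Fin n → Fqn) ≃ₗ[Fqn] (Fqn →ₗ[Fq] Fqn) := ebasis.constr Fqn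
  haveI : Module.Finite Fqn (Fqn →ₗ[Fq] Fqn) := Module.Finite.equiv E
  have hfrkM : Module.finrank Fqn (Fqn →ₗ[Fq] Fqn) = n := by
    rw [← E.finrank_eq, Module.finrank_pi, Fintype.card_fin]
  haveI : Nonempty (Fin n) := ⟨⟨0, by omega⟩⟩
  let Bf : Module.Basis (Fin n) Fqn (Fqn →ₗ[Fq] Fqn) :=
    basisOfLinearIndependentOfCardEqFinrank hTlli (by rw [Fintype.card_fin, hfrkM])
  have hBf : ⇑Bf = Tl := coe_basisOfLinearIndependentOfCardEqFinrank _ _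
  set d : Fin n → Fqn := fun i => Bf.repr φ i with hd
  have hdecomp : ∀ x : Fqn, φ x = ∑ i : Fin n, d i * x ^ q ^ (s * (i : ℕ)) := by
    intro x
    have hrepr := Bf.sum_repr φ
    simp only [hBf] at hrepr
    calc φ x = (∑ i : Fin n, d i • Tl i) x := by rw [hrepr]
      _ = ∑ i : Fin n, d i * x ^ q ^ (s * (i : ℕ)) := by
          rw [LinearMap.sum_apply]
          refine Finset.sum_congr rfl fun i _ => ?_
          rw [LinearMap.smul_apply, smul_eq_mul]
          rfl
  -- the evaluation vectors span (Fin n → Fqn) over Fqn (Dedekind)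
  let Evec : Fqn → (Fin n → Fqn) := fun a i => a ^ q ^ (s * (i : ℕ))
  have hspan : Submodule.span Fqn (Set.range Evec) = ⊤ := by
    by_contra hne
    have hlt : Submodule.span Fqn (Set.range Evec) < ⊤ := lt_top_iff_ne_top.mpr hne
    set W := Submodule.span Fqn (Set.range Evec) with hW
    haveI := Submodule.Quotient.nontrivial_iff.mpr hlt.ne
    have hfrpos : 0 < Module.finrank Fqn ((Fin n → Fqn) ⧸ W) := Module.finrank_pos
    set Bq := Module.finBasis Fqn ((Fin n → Fqn) ⧸ W) with hBq
    set ix : Fin (Module.finrank Fqn ((Fin n → Fqn) ⧸ W)) := ⟨0, hfrpos⟩ with hix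
    set f : (Fin n → Fqn) →ₗ[Fqn] Fqn := (Bq.coord ix).comp W.mkQ with hf
    have hfEvec : ∀ a : Fqn, f (Evec a) = 0 := by
      intro a
      have hmem : Evec a ∈ W := Submodule.subset_span ⟨a, rfl⟩
      have hz : W.mkQ (Evec a) = 0 := by
        rw [Submodule.mkQ_apply, Submodule.Quotient.mk_eq_zero]
        exact hmem
      rw [hf, LinearMap.comp_apply, hz, map_zero]
    set μ : Fin n → Fqn := fun i => f (fun j => if i = j then 1 else 0) with hμ
    have hf_expand : ∀ w : Fin n → Fqn, f w = ∑ i : Fin n, w i • μ i := fun w =>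
      LinearMap.pi_apply_eq_sum_univ f w
    have hμ0 : ∀ i, μ i = 0 := by
      apply Fintype.linearIndependent_iff.mp hfnli μ
      funext a
      have h1 := hfEvec a
      rw [hf_expand] at h1
      show (∑ i : Fin n, μ i • ⇑(mh i)) a = 0
      rw [Finset.sum_apply]
      rw [← h1]
      refine Finset.sum_congr rfl fun i _ => ?_
      show μ i * (a ^ q ^ (s * (i : ℕ))) = Evec a i • μ i
      show μ i * (a ^ q ^ (s * (i : ℕ))) = a ^ q ^ (s * (i : ℕ)) * μ i
      ring
    obtain ⟨w0, hw0⟩ := Submodule.mkQ_surjective W (Bq ix)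
    have hone : f w0 = 1 := by
      rw [hf, LinearMap.comp_apply, hw0, Module.Basis.coord_apply, Module.Basis.repr_self,
        Finsupp.single_eq_same]
    rw [hf_expand w0] at hone
    simp only [hμ0, smul_zero, Finset.sum_const_zero] at hone
    exact zero_ne_one hone
  -- extraction of monomial relations
  have hrel : ∀ i0 : Fin n, d i0 ≠ 0 → ∀ j, j < k → ∃ c : ℕ → Fqn,
      ∀ u ∈ Submodule.span Fq (Set.range α),
        u ^ q ^ (s * ((i0 : ℕ) + j)) = ∑ l ∈ Finset.range k, c l * u ^ q ^ (s * l) := by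
    intro i0 hi0 j hj
    have hmemtop : Pi.single i0 (1 : Fqn) ∈ Submodule.span Fqn (Set.range Evec) := by
      rw [hspan]; trivial
    obtain ⟨lam, hlam⟩ := (Submodule.mem_span_range_iff_exists_fun Fqn).mp hmemtop
    have hlam' : ∀ i : Fin n, (∑ a : Fqn, lam a * a ^ q ^ (s * (i : ℕ)))
        = if i = i0 then 1 else 0 := by
      intro i
      have h1 := congrFun hlam i
      simp only [Finset.sum_apply, Pi.smul_apply, smul_eq_mul] at h1
      rw [h1, Pi.single_apply]
    have hsel : ∀ a : Fqn, ∃ bb : ℕ → Fqn, ∀ u ∈ Submodule.span Fq (Set.range α),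
        φ (a * u ^ q ^ (s * j)) = ∑ l ∈ Finset.range k, bb l * u ^ q ^ (s * l) := by
      intro a
      obtain ⟨bb, hbb⟩ := hφ (fun idx => if idx = j then a else 0)
      refine ⟨bb, fun u hu => ?_⟩
      have h2 := hbb u hu
      have h3 : ∑ idx ∈ Finset.range k, (if idx = j then a else 0) * u ^ q ^ (s * idx)
          = a * u ^ q ^ (s * j) := by
        have h4 : (fun idx => (if idx = j then a else 0) * u ^ q ^ (s * idx))
            = fun idx => if idx = j then a * u ^ q ^ (s * idx) else 0 := by
          funext idx
          split <;> simp
        rw [h4, Finset.sum_ite_eq' (Finset.range k) j (fun idx => a * u ^ q ^ (s * idx)),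
          if_pos (Finset.mem_range.mpr hj)]
      rw [← h3]
      exact h2
    choose B hB using hsel
    refine ⟨fun l => (d i0)⁻¹ * ∑ a : Fqn, lam a * B a l, fun u hu => ?_⟩
    have hkey : ∑ a : Fqn, lam a * φ (a * u ^ q ^ (s * j))
        = d i0 * u ^ q ^ (s * ((i0 : ℕ) + j)) := by
      calc ∑ a : Fqn, lam a * φ (a * u ^ q ^ (s * j))
          = ∑ a : Fqn, lam a * ∑ i : Fin n,
              d i * (a ^ q ^ (s * (i : ℕ)) * u ^ q ^ (s * ((i : ℕ) + j))) := by
            refine Finset.sum_congr rfl fun a _ => ?_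
            rw [hdecomp (a * u ^ q ^ (s * j))]
            congr 1
            refine Finset.sum_congr rfl fun i _ => ?_
            rw [mul_pow]
            congr 1
            rw [← pow_mul, ← pow_add, show s * j + s * (i : ℕ) = s * ((i : ℕ) + j) by ring]
        _ = ∑ i : Fin n, d i * (∑ a : Fqn, lam a * a ^ q ^ (s * (i : ℕ)))
              * u ^ q ^ (s * ((i : ℕ) + j)) := by
            simp_rw [Finset.mul_sum, Finset.sum_mul]
            rw [Finset.sum_comm]
            refine Finset.sum_congr rfl fun i _ => Finset.sum_congr rfl fun a _ => by ring
        _ = d i0 * u ^ q ^ (s * ((i0 : ℕ) + j)) := by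
            rw [Fintype.sum_eq_single i0]
            · rw [hlam' i0, if_pos rfl, mul_one]
            · intro i hi
              rw [hlam' i, if_neg hi, mul_zero, zero_mul]
    have hkey2 : ∑ a : Fqn, lam a * φ (a * u ^ q ^ (s * j))
        = ∑ l ∈ Finset.range k, (∑ a : Fqn, lam a * B a l) * u ^ q ^ (s * l) := by
      calc ∑ a : Fqn, lam a * φ (a * u ^ q ^ (s * j))
          = ∑ a : Fqn, lam a * ∑ l ∈ Finset.range k, B a l * u ^ q ^ (s * l) := by
            refine Finset.sum_congr rfl fun a _ => ?_
            rw [hB a u hu]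
        _ = ∑ l ∈ Finset.range k, (∑ a : Fqn, lam a * B a l) * u ^ q ^ (s * l) := by
            simp_rw [Finset.mul_sum, Finset.sum_mul]
            rw [Finset.sum_comm]
            refine Finset.sum_congr rfl fun l _ => Finset.sum_congr rfl fun a _ => by ring
    rw [hkey] at hkey2
    have h5 := congrArg (fun z => (d i0)⁻¹ * z) hkey2
    beta_reduce at h5
    rw [← mul_assoc, inv_mul_cancel₀ hi0, one_mul, Finset.mul_sum] at h5
    rw [h5]
    refine Finset.sum_congr rfl fun l _ => by ring
  have hqspos : q ^ s ≠ 0 := (pow_pos (by omega : 0 < q) s).ne'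
  -- the chain argument: each relevant power acts as multiplication on the span
  have hC : ∀ i0 : Fin n, d i0 ≠ 0 → ∃ C : Fqn,
      ∀ u ∈ Submodule.span Fq (Set.range α), u ^ q ^ (s * (i0 : ℕ)) = C * u := by
    intro i0 hi0
    have hrel' : ∀ j : ℕ, ∃ c : ℕ → Fqn, j < k → ∀ u ∈ Submodule.span Fq (Set.range α),
        u ^ q ^ (s * ((i0 : ℕ) + j)) = ∑ l ∈ Finset.range k, c l * u ^ q ^ (s * l) := by
      intro j
      by_cases hj : j < k
      · obtain ⟨c, hcc⟩ := hrel i0 hi0 j hj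
        exact ⟨c, fun _ => hcc⟩
      · exact ⟨fun _ => 0, fun h => absurd h hj⟩
    choose c hc using hrel'
    have hRk : ∀ cc : ℕ → Fqn,
        (∀ r, r < k + 1 → ∑ l ∈ Finset.range (k+1), cc l * (vf r) ^ q ^ (s * l) = 0) →
        ∀ l < k + 1, cc l = 0 := by
      intro cc hcc
      exact auxR q s hq2 pq hpq halg hfix (k+1) vf cc (hαe (k+1) (by omega)) hcc
    have hstep : ∀ j, j + 1 < k →
        (c j (k-1) = 0 ∧ ∀ l, l + 1 ≤ k - 1 → c (j+1) (l+1) = (c j l) ^ q ^ s) := by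
      intro j hj1
      have hj : j < k := by omega
      set ee : ℕ → Fqn := fun l =>
        (if l = 0 then 0 else (c j (l-1)) ^ q ^ s) - (if l < k then c (j+1) l else 0) with hee
      have hvanish : ∀ r, r < k + 1 → ∑ l ∈ Finset.range (k+1), ee l * (vf r) ^ q ^ (s * l) = 0 := by
        intro r hr
        have hrm : r < m := by omega
        have hu := hvfU r hrm
        set u : Fqn := vf r with hudef
        have hA : ∑ l ∈ Finset.range (k+1),
            (if l = 0 then (0:Fqn) else (c j (l-1)) ^ q ^ s) * u ^ q ^ (s * l)
            = u ^ q ^ (s * ((i0 : ℕ) + (j+1))) := by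
          have hsum1 : ∑ l ∈ Finset.range (k+1),
              (if l = 0 then (0:Fqn) else (c j (l-1)) ^ q ^ s) * u ^ q ^ (s * l)
              = ∑ l ∈ Finset.range k, (c j l) ^ q ^ s * u ^ q ^ (s * (l+1)) := by
            rw [Finset.sum_range_succ']
            simp [Nat.succ_ne_zero, Nat.add_sub_cancel]
          rw [hsum1]
          have hsum2 : ∑ l ∈ Finset.range k, (c j l) ^ q ^ s * u ^ q ^ (s * (l+1))
              = pq s (∑ l ∈ Finset.range k, c j l * u ^ q ^ (s * l)) := by
            rw [map_sum]
            refine Finset.sum_congr rfl fun l _ => ?_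
            rw [hpq, mul_pow, ← pow_mul, ← pow_add, show s * l + s = s * (l + 1) by ring]
          rw [hsum2, ← hc j hj u hu, hpq, ← pow_mul, ← pow_add,
            show s * ((i0 : ℕ) + j) + s = s * ((i0 : ℕ) + (j + 1)) by ring]
        have hB2 : ∑ l ∈ Finset.range (k+1),
            (if l < k then c (j+1) l else (0:Fqn)) * u ^ q ^ (s * l)
            = u ^ q ^ (s * ((i0 : ℕ) + (j+1))) := by
          rw [Finset.sum_range_succ, if_neg (lt_irrefl k), zero_mul, add_zero]
          have : ∑ l ∈ Finset.range k, (if l < k then c (j+1) l else (0:Fqn)) * u ^ q ^ (s * l)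
              = ∑ l ∈ Finset.range k, c (j+1) l * u ^ q ^ (s * l) := by
            refine Finset.sum_congr rfl fun l hl => ?_
            rw [if_pos (Finset.mem_range.mp hl)]
          rw [this, ← hc (j+1) (by omega) u hu]
        calc ∑ l ∈ Finset.range (k+1), ee l * u ^ q ^ (s * l)
            = ∑ l ∈ Finset.range (k+1),
                ((if l = 0 then (0:Fqn) else (c j (l-1)) ^ q ^ s) * u ^ q ^ (s * l)
                  - (if l < k then c (j+1) l else (0:Fqn)) * u ^ q ^ (s * l)) := by
              refine Finset.sum_congr rfl fun l _ => ?_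
              rw [hee]
              ring
          _ = 0 := by rw [Finset.sum_sub_distrib, hA, hB2, sub_self]
      have hee0 : ∀ l < k + 1, ee l = 0 := hRk ee hvanish
      constructor
      · have h6 := hee0 k (by omega)
        rw [hee] at h6
        simp only [if_neg (by omega : ¬ (k = 0)), if_neg (lt_irrefl k), sub_zero] at h6
        exact (pow_eq_zero_iff hqspos).mp h6
      · intro l hl
        have h7 := hee0 (l+1) (by omega)
        rw [hee] at h7
        have hlk : l + 1 < k := by omega
        simp only [if_neg (Nat.succ_ne_zero l), if_pos hlk, Nat.add_sub_cancel] at h7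
        exact (sub_eq_zero.mp h7).symm
    have hclimb : ∀ tt l, 1 ≤ l → l + tt ≤ k - 1 → c tt (l + tt) = (c 0 l) ^ q ^ (s * tt) := by
      intro tt
      induction tt with
      | zero =>
        intro l _ _
        rw [Nat.mul_zero, pow_zero, pow_one, Nat.add_zero]
      | succ t iht =>
        intro l hl hle
        have h1 : l + t ≤ k - 1 := by omega
        have hst := hstep t (by omega)
        have h8 := hst.2 (l + t) (by omega)
        rw [show l + (t+1) = (l + t) + 1 by ring, h8, iht l hl h1, ← pow_mul, ← pow_add,
          show s * t + s = s * (t + 1) by ring]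
    have hzero : ∀ l, 1 ≤ l → l ≤ k - 1 → c 0 l = 0 := by
      intro l h1 h2
      have hjj : (k - 1 - l) + 1 < k := by omega
      have htop := (hstep (k-1-l) hjj).1
      have hcl := hclimb (k-1-l) l h1 (by omega)
      rw [show l + (k-1-l) = k-1 by omega, htop] at hcl
      exact (pow_eq_zero_iff (pow_pos (by omega : 0 < q) (s * (k-1-l))).ne').mp hcl.symm
    refine ⟨c 0 0, fun u hu => ?_⟩
    have h0 := hc 0 hk u hu
    rw [Nat.add_zero] at h0
    rw [h0]
    rw [Finset.sum_eq_single_of_mem 0 (Finset.mem_range.mpr hk)]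
    · rw [Nat.mul_zero, pow_zero, pow_one]
    · intro l hlr hl0
      rw [Finset.mem_range] at hlr
      rw [hzero l (by omega) (by omega), zero_mul]
  -- final assembly
  intro a
  set C : Fin n → Fqn := fun i => if h : d i ≠ 0 then Classical.choose (hC i h) else 0 with hCdef
  have hCspec : ∀ i : Fin n, d i ≠ 0 → ∀ u ∈ Submodule.span Fq (Set.range α),
      u ^ q ^ (s * (i : ℕ)) = C i * u := by
    intro i hi
    have : C i = Classical.choose (hC i hi) := by rw [hCdef]; simp only [dif_pos hi]
    rw [this]
    exact Classical.choose_spec (hC i hi)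
  refine ⟨∑ i : Fin n, d i * a ^ q ^ (s * (i : ℕ)) * C i, fun u hu => ?_⟩
  rw [hdecomp (a * u), Finset.sum_mul]
  refine Finset.sum_congr rfl fun i _ => ?_
  by_cases hi : d i = 0
  · rw [hi]
    ring
  · rw [mul_pow, hCspec i hi u hu]
    ring
end

section
/- Let k, m, n be positive integers with k < m ≤ n and gcd(n,s) = 1. Let ψ : F_{q^n} → F_{q^n} be an F_q-linear map such that for every f ∈ G_{k,s} there exists g ∈ G_{k,s} with f(ψ(u)) = g(u) for all u ∈ U_S. Then there exists b ∈ F_{q^n} such that ψ(u) = b·u for all u ∈ U_S. -/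
open Finset

open Module


lemma kerBound {K L : Type} [Field K] [Field L] [Algebra K L] [FiniteDimensional K L]
    (σ : L →ₗ[K] L)
    (hone : σ 1 = 1)
    (hmul : ∀ x y : L, σ (x * y) = σ x * σ y)
    (hinj : ∀ x : L, x ≠ 0 → σ x ≠ 0)
    (hfix : ∀ x : L, σ x = x → x ∈ Submodule.span K ({1} : Set L)) :
    ∀ (d : ℕ) (c : ℕ → L) (W : Submodule K L), c d ≠ 0 →
      (∀ u ∈ W, ∑ j ∈ range (d + 1), c j * (σ ^ j) u = 0) →
      finrank K W ≤ d := by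
  classical
  have hmulpow : ∀ (j : ℕ) (x y : L), (σ ^ j) (x * y) = (σ ^ j) x * (σ ^ j) y := by
    intro j
    induction j with
    | zero => intro x y; simp
    | succ j ih =>
        intro x y
        rw [pow_succ]
        simp only [Module.End.mul_apply]
        rw [hmul, ih]
  have honepow : ∀ j : ℕ, (σ ^ j) (1 : L) = 1 := by
    intro j
    induction j with
    | zero => simp
    | succ j ih =>
        rw [pow_succ]
        simp only [Module.End.mul_apply]
        rw [hone, ih]
  have hinjpow : ∀ (j : ℕ) (x : L), x ≠ 0 → (σ ^ j) x ≠ 0 := by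
    intro j
    induction j with
    | zero => intro x hx; simpa using hx
    | succ j ih =>
        intro x hx
        rw [pow_succ]
        simp only [Module.End.mul_apply]
        exact ih _ (hinj _ hx)
  intro d
  induction d with
  | zero =>
      intro c W hc h
      have hbot : W = ⊥ := by
        rw [Submodule.eq_bot_iff]
        intro u hu
        have h0 := h u hu
        rw [Finset.sum_range_one] at h0
        simp only [pow_zero, Module.End.one_apply] at h0
        rcases mul_eq_zero.mp h0 with h' | h'
        · exact absurd h' hc
        · exact h'
      rw [hbot]
      simp
  | succ d ih =>
      intro c W hc h
      by_cases hW : ∀ u ∈ W, u = (0 : L)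
      · have hbot : W = ⊥ := by rw [Submodule.eq_bot_iff]; exact hW
        rw [hbot]; simp
      · push_neg at hW
        obtain ⟨v, hvW, hv0⟩ := hW
        set dc : ℕ → L := fun j => c j * (σ ^ j) v with hdc
        have hW' : ∀ x : L, v * x ∈ W → ∑ j ∈ range (d + 2), dc j * (σ ^ j) x = 0 := by
          intro x hx
          have h0 := h (v * x) hx
          rw [← h0]
          apply Finset.sum_congr rfl
          intro j _
          rw [hmulpow]
          ring
        have hsum0 : ∑ j ∈ range (d + 2), dc j = 0 := by
          have h1 := hW' 1 (by rwa [mul_one])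
          calc ∑ j ∈ range (d + 2), dc j
              = ∑ j ∈ range (d + 2), dc j * (σ ^ j) 1 := by
                apply Finset.sum_congr rfl; intro j _; rw [honepow, mul_one]
            _ = 0 := h1
        set e : ℕ → L := fun j => ∑ i ∈ range (d + 2), if j < i then dc i else 0 with he
        have hed : e d = dc (d + 1) := by
          simp only [he]
          rw [Finset.sum_eq_single (d + 1)]
          · simp
          · intro b hb hne
            rw [Finset.mem_range] at hb
            exact if_neg (by omega)
          · intro hcon
            exact absurd (Finset.mem_range.mpr (by omega)) hcon
        have key : ∀ x : L, ∑ j ∈ range (d + 1), e j * (σ ^ j) (σ x - x)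
            = ∑ i ∈ range (d + 2), dc i * (σ ^ i) x := by
          intro x
          have hstep : ∀ j : ℕ, (σ ^ j) (σ x - x) = (σ ^ (j + 1)) x - (σ ^ j) x := by
            intro j
            rw [map_sub, pow_succ, Module.End.mul_apply]
          calc ∑ j ∈ range (d + 1), e j * (σ ^ j) (σ x - x)
              = ∑ j ∈ range (d + 1), ∑ i ∈ range (d + 2),
                  (if j < i then dc i * ((σ ^ (j + 1)) x - (σ ^ j) x) else 0) := by
                apply Finset.sum_congr rfl
                intro j _
                rw [hstep, he, Finset.sum_mul]
                apply Finset.sum_congr rfl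
                intro i _
                rw [ite_mul, zero_mul]
            _ = ∑ i ∈ range (d + 2), ∑ j ∈ range (d + 1),
                  (if j < i then dc i * ((σ ^ (j + 1)) x - (σ ^ j) x) else 0) :=
                Finset.sum_comm
            _ = ∑ i ∈ range (d + 2), dc i * ((σ ^ i) x - x) := by
                apply Finset.sum_congr rfl
                intro i hi
                rw [Finset.mem_range] at hi
                rw [← Finset.sum_filter]
                have hfil : (range (d + 1)).filter (fun j => j < i) = range i := by
                  ext j
                  simp only [Finset.mem_filter, Finset.mem_range]
                  omega
                rw [hfil, ← Finset.mul_sum, Finset.sum_range_sub (fun j => (σ ^ j) x)]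
                simp
            _ = ∑ i ∈ range (d + 2), dc i * (σ ^ i) x := by
                simp only [mul_sub]
                rw [Finset.sum_sub_distrib, ← Finset.sum_mul, hsum0, zero_mul, sub_zero]
        have hinv : Function.Injective (LinearMap.mulLeft K v⁻¹) := by
          intro x y hxy
          simp only [LinearMap.mulLeft_apply] at hxy
          exact mul_left_cancel₀ (inv_ne_zero hv0) hxy
        set W' := W.map (LinearMap.mulLeft K v⁻¹) with hW'def
        have hrk' : finrank K W' = finrank K W :=
          (Submodule.equivMapOfInjective _ hinv W).finrank_eq.symm
        have hmem' : ∀ x : L, x ∈ W' → v * x ∈ W := by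
          intro x hx
          obtain ⟨w, hw, rfl⟩ := Submodule.mem_map.mp hx
          simpa only [LinearMap.mulLeft_apply, mul_inv_cancel_left₀ hv0] using hw
        set τ : L →ₗ[K] L := σ - LinearMap.id with hτ
        set W'' := W'.map τ with hW''def
        have hvan'' : ∀ y ∈ W'', ∑ j ∈ range (d + 1), e j * (σ ^ j) y = 0 := by
          intro y hy
          obtain ⟨x, hx, rfl⟩ := Submodule.mem_map.mp hy
          have hx' : τ x = σ x - x := by
            simp [hτ, LinearMap.sub_apply]
          rw [hx', key]
          exact hW' x (hmem' x hx)
        have hIH : finrank K W'' ≤ d := by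
          apply ih e W''
          · rw [hed, hdc]
            exact mul_ne_zero hc (hinjpow _ _ hv0)
          · exact hvan''
        set f : W' →ₗ[K] L := τ.comp W'.subtype with hfdef
        have hrange : LinearMap.range f = W'' := by
          rw [hfdef, LinearMap.range_comp, Submodule.range_subtype]
        have hker : finrank K (LinearMap.ker f) ≤ 1 := by
          have hmem1 : ∀ x : L, ∀ hx : x ∈ W', (⟨x, hx⟩ : W') ∈ LinearMap.ker f →
              x ∈ Submodule.span K ({1} : Set L) := by
            intro x hx hxk
            rw [LinearMap.mem_ker, hfdef] at hxk
            simp only [hτ, LinearMap.comp_apply, Submodule.coe_subtype, LinearMap.sub_apply,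
              LinearMap.id_apply] at hxk
            exact hfix x (by rwa [sub_eq_zero] at hxk)
          set g : (LinearMap.ker f) →ₗ[K] (Submodule.span K ({1} : Set L)) :=
            LinearMap.codRestrict _ (W'.subtype.comp (LinearMap.ker f).subtype)
              (by
                rintro ⟨⟨x, hxW'⟩, hxker⟩
                simpa using hmem1 x hxW' hxker) with hg
          have hginj : Function.Injective g := by
            intro x y hxy
            have h1 : ((x : W') : L) = ((y : W') : L) := by
              have := congrArg Subtype.val hxy
              simpa [hg, LinearMap.codRestrict_apply] using this
            exact Subtype.ext (Subtype.ext h1)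
          calc finrank K (LinearMap.ker f)
              ≤ finrank K (Submodule.span K ({1} : Set L)) :=
                LinearMap.finrank_le_finrank_of_injective hginj
            _ = 1 := finrank_span_singleton one_ne_zero
        have hrn : finrank K (LinearMap.range f) + finrank K (LinearMap.ker f) = finrank K W' :=
          LinearMap.finrank_range_add_finrank_ker f
        rw [hrange] at hrn
        rw [← hrk', ← hrn]
        omega

theorem stmt5 (q n m k s : ℕ) (Fq Fqn : Type) [Field Fq] [Fintype Fq] [Field Fqn] [Fintype Fqn]
    [Algebra Fq Fqn] (hq : Fintype.card Fq = q) (hqn : Fintype.card Fqn = q ^ n)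
    (hn : 0 < n) (hk : 0 < k) (hkm : k < m) (hmn : m ≤ n)
    (hs : 0 < s) (hgcd : Nat.gcd n s = 1)
    (α : Fin m → Fqn) (hα : LinearIndependent Fq α)
    (ψ : Fqn →ₗ[Fq] Fqn)
    -- for every f ∈ G_{k,s} there is g ∈ G_{k,s} with f(ψ(u)) = g(u) for all u ∈ U_S
    (hψ : ∀ a : ℕ → Fqn, ∃ b : ℕ → Fqn, ∀ u ∈ Submodule.span Fq (Set.range α),
        (∑ i ∈ Finset.range k, a i * (ψ u) ^ q ^ (s * i))
          = ∑ i ∈ Finset.range k, b i * u ^ q ^ (s * i)) :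
    ∃ b : Fqn, ∀ u ∈ Submodule.span Fq (Set.range α), ψ u = b * u := by
  classical
  have hq1 : 1 < q := hq ▸ Fintype.one_lt_card
  obtain ⟨a, hp, hcard⟩ := FiniteField.card Fq (ringChar Fq)
  set p := ringChar Fq with hpdef
  haveI : CharP Fqn p := charP_of_injective_algebraMap (algebraMap Fq Fqn).injective p
  haveI : Fact p.Prime := ⟨hp⟩
  have hpa : q = p ^ (a : ℕ) := by rw [← hq, hcard]
  have hqpow : ∀ l : ℕ, q ^ l = p ^ (a * l) := by
    intro l; rw [hpa, ← pow_mul]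
  have hadd : ∀ (l : ℕ) (x y : Fqn), (x + y) ^ q ^ l = x ^ q ^ l + y ^ q ^ l := by
    intro l x y
    rw [hqpow]
    exact add_pow_char_pow x y p (a * l)
  have hqfix : ∀ (l : ℕ) (cc : Fq), cc ^ q ^ l = cc := by
    intro l cc
    rw [← hq]
    exact FiniteField.pow_card_pow l cc
  have hsmulq : ∀ (l : ℕ) (cc : Fq) (x : Fqn), (cc • x) ^ q ^ l = cc • x ^ q ^ l := by
    intro l cc x
    rw [Algebra.smul_def, Algebra.smul_def, mul_pow, ← map_pow, hqfix]
  set σ : Fqn →ₗ[Fq] Fqn :=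
    { toFun := fun x => x ^ q ^ s
      map_add' := hadd s
      map_smul' := fun c x => by simp only [RingHom.id_apply]; exact hsmulq s c x } with hσ
  have hσapp : ∀ x : Fqn, σ x = x ^ q ^ s := fun x => rfl
  have hσpow : ∀ (l : ℕ) (x : Fqn), (σ ^ l) x = x ^ q ^ (s * l) := by
    intro l
    induction l with
    | zero => intro x; simp
    | succ l ih =>
        intro x
        rw [pow_succ', Module.End.mul_apply, ih, hσapp, ← pow_mul, ← pow_add, Nat.mul_succ]
  -- fixed points of σ
  have hfix : ∀ x : Fqn, σ x = x → x ∈ Submodule.span Fq ({1} : Set Fqn) := by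
    intro x hx
    rw [hσapp] at hx
    have hxq : x ^ q = x := by
      obtain ⟨t, w, hst⟩ : ∃ t w, s * t = n * w + 1 := by
        rcases Nat.lt_or_ge 1 n with h1 | h1
        · have hco : Nat.Coprime n s := hgcd
          obtain ⟨t, -, ht⟩ := Nat.exists_mul_mod_eq_one_of_coprime (Nat.coprime_comm.mp hco) h1
          refine ⟨t, s * t / n, ?_⟩
          have := Nat.div_add_mod (s * t) n
          omega
        · have hn1 : n = 1 := le_antisymm h1 hn
          exact ⟨1, s - 1, by rw [hn1]; omega⟩
      have hiter : ∀ t : ℕ, x ^ q ^ (s * t) = x := by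
        intro t
        induction t with
        | zero => simp
        | succ t ih =>
            have hqe : q ^ (s * (t + 1)) = q ^ (s * t) * q ^ s := by
              rw [Nat.mul_succ, pow_add]
            rw [hqe, pow_mul, ih, hx]
      have h1 := hiter t
      rw [hst] at h1
      have h2 : q ^ (n * w + 1) = (q ^ n) ^ w * q := by
        rw [pow_add, pow_mul, pow_one]
      rw [h2, pow_mul] at h1
      have h3 : x ^ (q ^ n) ^ w = x := by
        rw [← hqn]; exact FiniteField.pow_card_pow w x
      rwa [h3] at h1
    obtain ⟨c, hcx⟩ : ∃ c : Fq, algebraMap Fq Fqn c = x := by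
      set S : Finset Fqn := Finset.univ.filter (fun y => y ^ q = y) with hS
      set T : Finset Fqn := Finset.image (algebraMap Fq Fqn) Finset.univ with hT
      have hTS : T ⊆ S := by
        intro y hy
        obtain ⟨c, _, rfl⟩ := Finset.mem_image.mp hy
        simp only [hS, Finset.mem_filter, Finset.mem_univ, true_and]
        rw [← map_pow, show c ^ q = c from by rw [← hq]; exact FiniteField.pow_card c]
      have hcardT : T.card = q := by
        rw [hT, Finset.card_image_of_injective _ (algebraMap Fq Fqn).injective,
          Finset.card_univ, hq]
      have hcardS : S.card ≤ q := by
        have hne : (Polynomial.X ^ q - Polynomial.X : Polynomial Fqn) ≠ 0 :=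
          FiniteField.X_pow_card_sub_X_ne_zero Fqn hq1
        have hdeg : (Polynomial.X ^ q - Polynomial.X : Polynomial Fqn).natDegree = q :=
          FiniteField.X_pow_card_sub_X_natDegree_eq Fqn hq1
        have hsub : S ⊆ (Polynomial.X ^ q - Polynomial.X : Polynomial Fqn).roots.toFinset := by
          intro y hy
          simp only [hS, Finset.mem_filter, Finset.mem_univ, true_and] at hy
          rw [Multiset.mem_toFinset, Polynomial.mem_roots hne]
          simp [Polynomial.IsRoot, hy]
        calc S.card ≤ _ := Finset.card_le_card hsub
          _ ≤ _ := Multiset.toFinset_card_le _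
          _ ≤ _ := Polynomial.card_roots' _
          _ = q := hdeg
      have hST : S = T := (Finset.eq_of_subset_of_card_le hTS (le_trans hcardS hcardT.ge)).symm
      have hxS : x ∈ S := by
        simp only [hS, Finset.mem_filter, Finset.mem_univ, true_and]
        exact hxq
      rw [hST, hT] at hxS
      obtain ⟨c, _, hcx⟩ := Finset.mem_image.mp hxS
      exact ⟨c, hcx⟩
    rw [← hcx, Algebra.algebraMap_eq_smul_one]
    exact Submodule.smul_mem _ c (Submodule.mem_span_singleton_self 1)
  have hone : σ 1 = 1 := by rw [hσapp, one_pow]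
  have hmul : ∀ x y : Fqn, σ (x * y) = σ x * σ y := by
    intro x y; rw [hσapp, hσapp, hσapp, mul_pow]
  have hinj : ∀ x : Fqn, x ≠ 0 → σ x ≠ 0 := by
    intro x hx; rw [hσapp]; exact pow_ne_zero _ hx
  set U := Submodule.span Fq (Set.range α) with hU
  have hrkU : finrank Fq U = m := by
    rw [hU, finrank_span_eq_card hα, Fintype.card_fin]
  -- representation of ψ on U
  obtain ⟨b, hb⟩ := hψ (fun i => if i = 0 then 1 else 0)
  have hbrep : ∀ u ∈ U, ψ u = ∑ i ∈ range k, b i * u ^ q ^ (s * i) := by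
    intro u hu
    have h0 := hb u hu
    rw [← h0, Finset.sum_eq_single 0]
    · rw [if_pos rfl, one_mul, mul_zero, pow_zero, pow_one]
    · intro i _ hi
      rw [if_neg hi, zero_mul]
    · intro hcon
      exact absurd (Finset.mem_range.mpr hk) hcon
  -- key: b j = 0 for 1 ≤ j < k
  have main : ∀ r j, 1 ≤ j → j < k → k ≤ j + r → b j = 0 := by
    intro r
    induction r with
    | zero => intro j h1 h2 h3; omega
    | succ r ih =>
        intro j h1 hjk hkr
        by_contra hbj
        have hhigher : ∀ i, j < i → i < k → b i = 0 := fun i hji hik =>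
          ih i (by omega) hik (by omega)
        set t := k - j with ht
        have ht1 : 1 ≤ t := by omega
        have htk : t < k := by omega
        obtain ⟨b', hb'⟩ := hψ (fun i => if i = t then 1 else 0)
        have hrep2 : ∀ u ∈ U, (ψ u) ^ q ^ (s * t) = ∑ i ∈ range k, b' i * u ^ q ^ (s * i) := by
          intro u hu
          have h0 := hb' u hu
          rw [← h0, Finset.sum_eq_single t]
          · rw [if_pos rfl, one_mul]
          · intro i _ hi
            rw [if_neg hi, zero_mul]
          · intro hcon
            exact absurd (Finset.mem_range.mpr htk) hcon
        set c : ℕ → Fqn := fun l => (if t ≤ l ∧ l - t < k then (b (l - t)) ^ q ^ (s * t) else 0)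
            - (if l < k then b' l else 0) with hc
        have hck : c k ≠ 0 := by
          have : c k = (b j) ^ q ^ (s * t) := by
            simp only [hc]
            rw [if_pos ⟨by omega, by omega⟩, if_neg (lt_irrefl k),
              show k - t = j from by omega, sub_zero]
          rw [this]
          exact pow_ne_zero _ hbj
        have hvan : ∀ u ∈ U, ∑ l ∈ range (k + 1), c l * u ^ q ^ (s * l) = 0 := by
          intro u hu
          have expand : ∑ l ∈ range (k + 1), c l * u ^ q ^ (s * l)
              = (∑ l ∈ range (k + 1),
                  (if t ≤ l ∧ l - t < k then (b (l - t)) ^ q ^ (s * t) else 0) * u ^ q ^ (s * l))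
                - ∑ l ∈ range (k + 1), (if l < k then b' l else 0) * u ^ q ^ (s * l) := by
            rw [← Finset.sum_sub_distrib]
            apply Finset.sum_congr rfl
            intro l _
            rw [hc]
            ring
          have hBsum : ∑ l ∈ range (k + 1), (if l < k then b' l else 0) * u ^ q ^ (s * l)
              = ∑ l ∈ range k, b' l * u ^ q ^ (s * l) := by
            rw [Finset.sum_range_succ, if_neg (lt_irrefl k), zero_mul, add_zero]
            apply Finset.sum_congr rfl
            intro l hl
            rw [if_pos (Finset.mem_range.mp hl)]
          have hAsum : ∑ l ∈ range (k + 1),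
              (if t ≤ l ∧ l - t < k then (b (l - t)) ^ q ^ (s * t) else 0) * u ^ q ^ (s * l)
              = (ψ u) ^ q ^ (s * t) := by
            have step1 : ∑ l ∈ range (k + 1),
                (if t ≤ l ∧ l - t < k then (b (l - t)) ^ q ^ (s * t) else 0) * u ^ q ^ (s * l)
                = ∑ l ∈ Finset.Ico t (k + 1), (b (l - t)) ^ q ^ (s * t) * u ^ q ^ (s * l) := by
              rw [← Finset.sum_filter_add_sum_filter_not (range (k + 1))
                (fun l => t ≤ l ∧ l - t < k)]
              have hf1 : (range (k + 1)).filter (fun l => t ≤ l ∧ l - t < k)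
                  = Finset.Ico t (k + 1) := by
                ext l
                simp only [Finset.mem_filter, Finset.mem_range, Finset.mem_Ico]
                omega
              rw [hf1]
              have hz : ∑ l ∈ (range (k + 1)).filter (fun l => ¬(t ≤ l ∧ l - t < k)),
                  (if t ≤ l ∧ l - t < k then (b (l - t)) ^ q ^ (s * t) else 0) * u ^ q ^ (s * l)
                  = 0 := by
                apply Finset.sum_eq_zero
                intro l hl
                rw [if_neg (Finset.mem_filter.mp hl).2, zero_mul]
              rw [hz, add_zero]
              apply Finset.sum_congr rfl
              intro l hl
              rw [Finset.mem_Ico] at hl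
              rw [if_pos ⟨hl.1, by omega⟩]
            have step2 : ∑ l ∈ Finset.Ico t (k + 1),
                (b (l - t)) ^ q ^ (s * t) * u ^ q ^ (s * l)
                = ∑ i ∈ range (k + 1 - t), (b i) ^ q ^ (s * t) * u ^ q ^ (s * (t + i)) := by
              rw [Finset.sum_Ico_eq_sum_range]
              apply Finset.sum_congr rfl
              intro i _
              congr 2
              · congr 1
                omega
            have step3 : ∑ i ∈ range (k + 1 - t), (b i) ^ q ^ (s * t) * u ^ q ^ (s * (t + i))
                = ∑ i ∈ range k, (b i) ^ q ^ (s * t) * u ^ q ^ (s * (t + i)) := by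
              apply Finset.sum_subset
              · intro i hi
                rw [Finset.mem_range] at hi ⊢
                omega
              · intro i hi hni
                rw [Finset.mem_range] at hi hni
                rw [hhigher i (by omega) hi, zero_pow, zero_mul]
                exact pow_ne_zero _ (by omega)
            have step4 : (ψ u) ^ q ^ (s * t)
                = ∑ i ∈ range k, (b i) ^ q ^ (s * t) * u ^ q ^ (s * (t + i)) := by
              rw [hbrep u hu, hqpow (s * t), sum_pow_char_pow]
              apply Finset.sum_congr rfl
              intro i _
              rw [mul_pow, ← hqpow (s * t), ← pow_mul, ← pow_add,
                show s * i + s * t = s * (t + i) from by ring]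
            rw [step1, step2, step3, ← step4]
          rw [expand, hAsum, hBsum, ← hrep2 u hu, sub_self]
        have hcontr : finrank Fq U ≤ k := by
          apply kerBound σ hone hmul hinj hfix k c U hck
          intro u hu
          have := hvan u hu
          rw [← this]
          apply Finset.sum_congr rfl
          intro l _
          rw [hσpow]
        rw [hrkU] at hcontr
        omega
  have hzero : ∀ j, 1 ≤ j → j < k → b j = 0 := fun j h1 h2 => main k j h1 h2 (by omega)
  refine ⟨b 0, ?_⟩
  intro u hu
  rw [hbrep u hu, Finset.sum_eq_single 0]
  · rw [mul_zero, pow_zero, pow_one]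
  · intro i _ hi
    rw [hzero i (by omega) (by simpa using ‹i ∈ range k›), zero_mul]
  · intro hcon
    exact absurd (Finset.mem_range.mpr hk) hcon
end

section
/- Let k = 2 and let m, n satisfy k < m ≤ n. Let H_{2,s}(η,h) and H_{2,s}(η̃,h̃) be generalized twisted Gabidulin codes with η ≠ 0 and η̃ ≠ 0, and assume h̃ ≢ 0 (mod n). Let ψ : F_{q^n} → F_{q^n} be an F_q-linear map such that for every f ∈ H_{2,s}(η,h) there exists g ∈ H_{2,s}(η̃,h̃) with f(ψ(u)) = g(u) for all u ∈ U_S. Then there exists b ∈ F_{q^n} such that ψ(u) = b·u for all u ∈ U_S. -/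
open Finset

set_option linter.unusedSectionVars false
set_option maxHeartbeats 1000000

/-- The value at `x` of the polynomial
`a₀X + a₁X^{q^s} + ⋯ + a_{k-1}X^{q^{s(k-1)}} + η a₀^{q^h} X^{q^{sk}}`
belonging to the generalized twisted Gabidulin code `H_{k,s}(η,h)`. -/
def Hval (q s k h : ℕ) {F : Type} [Field F] (η : F) (a : ℕ → F) (x : F) : F :=
  (∑ i ∈ Finset.range k, a i * x ^ q ^ (s * i)) + η * a 0 ^ q ^ h * x ^ q ^ (s * k)

set_option linter.unusedSectionVars false

section Aux

variable {q : ℕ} {Fq Fqn : Type} [Field Fq] [Fintype Fq] [Field Fqn]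
  [Fintype Fqn] [Algebra Fq Fqn]

lemma aux_exists_char (hq : Fintype.card Fq = q) :
    ∃ p e : ℕ, Nat.Prime p ∧ q = p ^ e ∧ CharP Fqn p := by
  let p := ringChar Fq
  haveI : CharP Fq p := ringChar.charP Fq
  obtain ⟨e, hp, he⟩ := FiniteField.card Fq p
  haveI : CharP Fqn p := charP_of_injective_algebraMap (algebraMap Fq Fqn).injective p
  exact ⟨p, e, hp, by rw [← hq, he], inferInstance⟩

lemma aux_frob_add (hq : Fintype.card Fq = q) (j : ℕ) (x y : Fqn) :
    (x + y) ^ q ^ j = x ^ q ^ j + y ^ q ^ j := by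
  obtain ⟨p, e, hp, he, hch⟩ := aux_exists_char (Fqn := Fqn) hq
  haveI := hch; haveI := Fact.mk hp
  rw [he, ← pow_mul]
  exact add_pow_char_pow x y p (e*j)

lemma aux_frob_sub (hq : Fintype.card Fq = q) (j : ℕ) (x y : Fqn) :
    (x - y) ^ q ^ j = x ^ q ^ j - y ^ q ^ j := by
  obtain ⟨p, e, hp, he, hch⟩ := aux_exists_char (Fqn := Fqn) hq
  haveI := hch; haveI := Fact.mk hp
  rw [he, ← pow_mul]
  exact sub_pow_char_pow x y (e*j)

lemma aux_q_pos (hq : Fintype.card Fq = q) : 2 ≤ q := hq ▸ Fintype.one_lt_card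

lemma aux_frob_inj (hq : Fintype.card Fq = q) (j : ℕ) {x y : Fqn}
    (hxy : x ^ q ^ j = y ^ q ^ j) : x = y := by
  have hq2 := aux_q_pos (Fq := Fq) hq
  have h0 : q ^ j ≠ 0 := by positivity
  have : (x - y) ^ q ^ j = 0 := by
    rw [aux_frob_sub (Fq := Fq) hq, hxy, sub_self]
  exact sub_eq_zero.mp ((pow_eq_zero_iff h0).mp this)

lemma aux_frob_surj (hq : Fintype.card Fq = q) (j : ℕ) (y : Fqn) :
    ∃ x : Fqn, x ^ q ^ j = y := by
  have : Function.Injective (fun x : Fqn => x ^ q ^ j) :=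
    fun a b hab => aux_frob_inj (Fq := Fq) hq j hab
  exact Finite.surjective_of_injective this y

open scoped Classical in
lemma aux_card_fixed_le {d : ℕ} (hd : 1 < d) :
    (Finset.univ.filter fun x : Fqn => x ^ d = x).card ≤ d := by
  classical
  have hsub : (Finset.univ.filter fun x : Fqn => x ^ d = x)
      ⊆ (Polynomial.X ^ d - Polynomial.X : Polynomial Fqn).roots.toFinset := by
    intro x hx
    rw [Finset.mem_filter] at hx
    rw [Multiset.mem_toFinset, Polynomial.mem_roots
      (FiniteField.X_pow_card_sub_X_ne_zero _ hd)]
    simp [Polynomial.IsRoot, sub_eq_zero, hx.2]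
  calc (Finset.univ.filter fun x : Fqn => x ^ d = x).card
      ≤ (Polynomial.X ^ d - Polynomial.X : Polynomial Fqn).roots.toFinset.card :=
        Finset.card_le_card hsub
    _ ≤ Multiset.card (Polynomial.X ^ d - Polynomial.X : Polynomial Fqn).roots :=
        Multiset.toFinset_card_le _
    _ ≤ _ := by
        have := Polynomial.card_roots' (Polynomial.X ^ d - Polynomial.X : Polynomial Fqn)
        rwa [FiniteField.X_pow_card_sub_X_natDegree_eq _ hd] at this

lemma aux_mem_range_of_pow_q (hq : Fintype.card Fq = q) (x : Fqn) (hx : x ^ q = x) :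
    ∃ l : Fq, algebraMap Fq Fqn l = x := by
  classical
  have hq2 := aux_q_pos (Fq := Fq) hq
  set T := (Finset.univ.filter fun y : Fqn => y ^ q = y) with hT
  set S := (Finset.univ.image (algebraMap Fq Fqn)) with hS
  have hsub : S ⊆ T := by
    intro y hy
    rw [hS, Finset.mem_image] at hy
    obtain ⟨l, _, rfl⟩ := hy
    rw [hT, Finset.mem_filter]
    refine ⟨Finset.mem_univ _, ?_⟩
    rw [← map_pow]
    congr 1
    rw [← hq]
    exact FiniteField.pow_card l
  have hcardS : S.card = q := by
    rw [hS, Finset.card_image_of_injective _ (algebraMap Fq Fqn).injective,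
      Finset.card_univ, hq]
  have hST : S = T := Finset.eq_of_subset_of_card_le hsub
    (by rw [hcardS]; exact aux_card_fixed_le hq2)
  have hxT : x ∈ T := by rw [hT, Finset.mem_filter]; exact ⟨Finset.mem_univ _, hx⟩
  rw [← hST, hS, Finset.mem_image] at hxT
  obtain ⟨l, _, hl⟩ := hxT
  exact ⟨l, hl⟩

lemma aux_alg_pow_fixed (hq : Fintype.card Fq = q) (j : ℕ) (l : Fq) :
    (algebraMap Fq Fqn l) ^ q ^ j = algebraMap Fq Fqn l := by
  rw [← map_pow]
  congr 1
  rw [← hq]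
  exact FiniteField.pow_card_pow j l

lemma aux_fixed_mem_range {n s : ℕ} (hq : Fintype.card Fq = q)
    (hqn : Fintype.card Fqn = q ^ n) (hn : 0 < n) (hs : 0 < s)
    (hgcd : Nat.gcd n s = 1) (x : Fqn) (hx : x ^ q ^ s = x) :
    ∃ l : Fq, algebraMap Fq Fqn l = x := by
  have step1 : ∀ j : ℕ, x ^ q ^ (s * j) = x := by
    intro j
    induction j with
    | zero => simp
    | succ j ih =>
      have : s * (j + 1) = s * j + s := by ring
      rw [this, pow_add, pow_mul, ih, hx]
  have hxn : x ^ q ^ n = x := by rw [← hqn]; exact FiniteField.pow_card x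
  have step2 : ∀ t : ℕ, x ^ q ^ (n * t) = x := by
    intro t
    induction t with
    | zero => simp
    | succ t ih =>
      have : n * (t + 1) = n * t + n := by ring
      rw [this, pow_add, pow_mul, ih, hxn]
  have hco : Nat.Coprime s n := (Nat.coprime_comm).mp hgcd
  have htot : s ^ Nat.totient n ≡ 1 [MOD n] := Nat.ModEq.pow_totient hco
  have hpos : 1 ≤ s ^ Nat.totient n := Nat.one_le_pow _ _ hs
  obtain ⟨t, ht⟩ := (Nat.modEq_iff_dvd' hpos).mp htot.symm
  have hphi : 0 < Nat.totient n := Nat.totient_pos.mpr hn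
  have hexp : s * s ^ (Nat.totient n - 1) = n * t + 1 := by
    have : s * s ^ (Nat.totient n - 1) = s ^ Nat.totient n := by
      rw [← pow_succ']
      congr 1
      omega
    omega
  have hx1 : x ^ q ^ (n * t + 1) = x := by rw [← hexp]; exact step1 _
  have hxq : x ^ q = x := by
    rw [pow_add, pow_one, pow_mul, step2 t] at hx1
    exact hx1
  exact aux_mem_range_of_pow_q hq x hxq

end Aux


section C
variable {q n s : ℕ} {Fq Fqn : Type} [Field Fq] [Fintype Fq] [Field Fqn]
  [Fintype Fqn] [Algebra Fq Fqn]

lemma lemC (hq : Fintype.card Fq = q) (hqn : Fintype.card Fqn = q ^ n)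
    (hn : 0 < n) (hs : 0 < s) (hgcd : Nat.gcd n s = 1)
    {m : ℕ} (hm : 2 < m) (α : Fin m → Fqn) (hα : LinearIndependent Fq α)
    (c0 c1 c2 : Fqn)
    (H : ∀ u ∈ Submodule.span Fq (Set.range α),
      c0 * u + c1 * u ^ q ^ s + c2 * u ^ (q ^ s * q ^ s) = 0) :
    c0 = 0 ∧ c1 = 0 ∧ c2 = 0 := by
  have hq2 : 2 ≤ q := aux_q_pos hq
  set Q := q ^ s with hQdef
  have hQ0 : Q ≠ 0 := by positivity
  -- three indices
  set i0 : Fin m := ⟨0, by omega⟩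
  set i1 : Fin m := ⟨1, by omega⟩
  set i2 : Fin m := ⟨2, by omega⟩
  -- independence of the three
  have ind : ∀ g : Fin 3 → Fq,
      g 0 • α i0 + g 1 • α i1 + g 2 • α i2 = 0 → ∀ i, g i = 0 := by
    intro g hg
    have hinj : Function.Injective (fun i : Fin 3 => (⟨(i : ℕ), by omega⟩ : Fin m)) := by
      intro a b hab
      have : (a : ℕ) = (b : ℕ) := by simpa using hab
      exact Fin.ext this
    have hα3 := hα.comp _ hinj
    exact Fintype.linearIndependent_iff.mp hα3 g (by
      rw [Fin.sum_univ_three]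
      exact hg)
  have mem0 : α i0 ∈ Submodule.span Fq (Set.range α) :=
    Submodule.subset_span ⟨i0, rfl⟩
  have mem1 : α i1 ∈ Submodule.span Fq (Set.range α) :=
    Submodule.subset_span ⟨i1, rfl⟩
  have mem2 : α i2 ∈ Submodule.span Fq (Set.range α) :=
    Submodule.subset_span ⟨i2, rfl⟩
  set w := α i0 with hwdef
  have hw : w ≠ 0 := hα.ne_zero i0
  set γ := w ^ Q / w with hγdef
  have hγw : γ * w = w ^ Q := div_mul_cancel₀ _ hw
  have hγ0 : γ ≠ 0 := by
    rw [hγdef]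
    exact div_ne_zero (pow_ne_zero _ hw) hw
  set e0 := c1 + c2 * γ ^ Q with he0def
  set r := c0 + e0 * γ with hrdef
  have identity : ∀ x : Fqn,
      c0 * x + c1 * x ^ Q + c2 * x ^ (Q * Q)
        = c2 * (x ^ Q - γ * x) ^ Q + e0 * (x ^ Q - γ * x) + r * x := by
    intro x
    have h1 : (x ^ Q - γ * x) ^ Q = (x ^ Q) ^ Q - γ ^ Q * x ^ Q := by
      rw [hQdef]
      rw [aux_frob_sub (Fq := Fq) hq, mul_pow]
    have h2 : x ^ (Q * Q) = (x ^ Q) ^ Q := pow_mul x Q Q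
    rw [h1, h2, he0def, hrdef]
    ring
  -- r = 0
  have hr0 : r = 0 := by
    have h1 := H w mem0
    have h2 := identity w
    rw [h1] at h2
    have h3 : w ^ Q - γ * w = 0 := by rw [hγw, sub_self]
    rw [h3] at h2
    have : r * w = 0 := by
      rw [zero_pow hQ0] at h2
      linear_combination -h2
    rcases mul_eq_zero.mp this with h | h
    · exact h
    · exact absurd h hw
  have key : ∀ u ∈ Submodule.span Fq (Set.range α),
      c2 * (u ^ Q - γ * u) ^ Q + e0 * (u ^ Q - γ * u) = 0 := by
    intro u hu
    have h1 := H u hu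
    have h2 := identity u
    rw [h1, hr0] at h2
    linear_combination -h2
  -- elements fixed by D are Fq-multiples of w
  have fixmul : ∀ v : Fqn, v ^ Q = γ * v → ∃ l : Fq, v = algebraMap Fq Fqn l * w := by
    intro v hv
    have hvw : (v / w) ^ Q = v / w := by
      rw [div_pow, hv, ← hγw]
      rw [mul_div_mul_left _ _ hγ0]
    obtain ⟨l, hl⟩ := aux_fixed_mem_range hq hqn hn hs hgcd _ hvw
    refine ⟨l, ?_⟩
    rw [hl]
    exact (div_mul_cancel₀ v hw).symm
  set y1 := α i1 ^ Q - γ * α i1 with hy1def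
  set y2 := α i2 ^ Q - γ * α i2 with hy2def
  have hcontr1 : ∀ lA lB : Fq,
      α i1 = algebraMap Fq Fqn lA * α i2 + algebraMap Fq Fqn lB * w → False := by
    intro lA lB hrep
    have hz : (-lB) • w + (1 : Fq) • α i1 + (-lA) • α i2 = 0 := by
      simp only [neg_smul, one_smul]
      rw [Algebra.smul_def, Algebra.smul_def]
      linear_combination hrep
    have h1 := ind ![-lB, 1, -lA] (by simpa using hz) 1
    simp at h1
  have hcontr2 : ∀ lB : Fq, α i2 = algebraMap Fq Fqn lB * w → False := by
    intro lB hrep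
    have hz : (-lB) • w + (0 : Fq) • α i1 + (1 : Fq) • α i2 = 0 := by
      simp only [neg_smul, one_smul, zero_smul]
      rw [Algebra.smul_def]
      linear_combination hrep
    have h1 := ind ![-lB, 0, 1] (by simpa using hz) 2
    simp at h1
  have hy1 : y1 ≠ 0 := by
    intro h0
    rw [hy1def] at h0
    obtain ⟨l, hl⟩ := fixmul (α i1) (sub_eq_zero.mp h0)
    exact hcontr1 0 l (by rw [map_zero, zero_mul, zero_add]; exact hl)
  have hy2 : y2 ≠ 0 := by
    intro h0
    rw [hy2def] at h0
    obtain ⟨l, hl⟩ := fixmul (α i2) (sub_eq_zero.mp h0)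
    exact hcontr2 l hl
  have hyrat : ∀ l : Fq, y1 ≠ algebraMap Fq Fqn l * y2 := by
    intro l hrep'
    have hvQ : (α i1 - algebraMap Fq Fqn l * α i2) ^ Q
        = γ * (α i1 - algebraMap Fq Fqn l * α i2) := by
      have h1 : (α i1 - algebraMap Fq Fqn l * α i2) ^ Q
          = α i1 ^ Q - algebraMap Fq Fqn l * α i2 ^ Q := by
        rw [hQdef, aux_frob_sub (Fq := Fq) hq, mul_pow, aux_alg_pow_fixed hq]
      rw [h1]
      linear_combination -hy1def + (algebraMap Fq Fqn l) * hy2def + hrep'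
    obtain ⟨l', hl'⟩ := fixmul _ hvQ
    exact hcontr1 l l' (by linear_combination hl')
  have k1 : c2 * y1 ^ Q + e0 * y1 = 0 := by
    rw [hy1def]; exact key (α i1) mem1
  have k2 : c2 * y2 ^ Q + e0 * y2 = 0 := by
    rw [hy2def]; exact key (α i2) mem2
  have hc2 : c2 = 0 := by
    by_contra hc2
    by_cases he0 : e0 = 0
    · rw [he0] at k1
      have : y1 ^ Q = 0 := by
        rcases mul_eq_zero.mp (by linear_combination k1 : c2 * y1 ^ Q = 0) with h | h
        · exact absurd h hc2
        · exact h
      exact hy1 ((pow_eq_zero_iff hQ0).mp this)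
    · have hδ : ∀ z : Fqn, c2 * z ^ Q + e0 * z = 0 → z ^ Q = (-e0 / c2) * z := by
        intro z hz
        rw [div_mul_eq_mul_div, eq_div_iff hc2]
        linear_combination hz
      have r1 : y1 ^ Q = (-e0 / c2) * y1 := hδ y1 k1
      have r2 : y2 ^ Q = (-e0 / c2) * y2 := hδ y2 k2
      have hδ0 : (-e0 / c2) ≠ 0 := div_ne_zero (neg_ne_zero.mpr he0) hc2
      have hfix : (y1 / y2) ^ Q = y1 / y2 := by
        rw [div_pow, r1, r2, mul_div_mul_left _ _ hδ0]
      obtain ⟨l, hl⟩ := aux_fixed_mem_range hq hqn hn hs hgcd _ hfix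
      refine hyrat l ?_
      rw [hl]
      exact (div_mul_cancel₀ y1 hy2).symm
  have he00 : e0 = 0 := by
    rw [hc2] at k1
    rcases mul_eq_zero.mp (by linear_combination k1 : e0 * y1 = 0) with h | h
    · exact h
    · exact absurd h hy1
  refine ⟨?_, ?_, hc2⟩
  · rw [hrdef] at hr0
    linear_combination hr0 - γ * he00
  · linear_combination he00 - he0def - (γ ^ Q) * hc2

end C

theorem stmt8 (q n m s h h' : ℕ) (Fq Fqn : Type) [Field Fq] [Fintype Fq] [Field Fqn]
    [Fintype Fqn] [Algebra Fq Fqn]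
    (hq : Fintype.card Fq = q) (hqn : Fintype.card Fqn = q ^ n)
    (hn : 0 < n) (hkm : 2 < m) (hmn : m ≤ n)
    (hs : 0 < s) (hgcd : Nat.gcd n s = 1) (hh : h < n) (hh' : h' < n)
    (η η' : Fqn) (hη : η ≠ 0) (hη' : η' ≠ 0)
    (hηnorm : η ^ ((q ^ (s * n) - 1) / (q ^ s - 1)) ≠ (-1 : Fqn) ^ (n * 2))
    (hη'norm : η' ^ ((q ^ (s * n) - 1) / (q ^ s - 1)) ≠ (-1 : Fqn) ^ (n * 2))
    -- h̃ ≢ 0 (mod n)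
    (hh'0 : ¬ (h' ≡ 0 [MOD n]))
    (α : Fin m → Fqn) (hα : LinearIndependent Fq α)
    (ψ : Fqn →ₗ[Fq] Fqn)
    -- for every f ∈ H_{2,s}(η,h) there is g ∈ H_{2,s}(η',h') with f(ψ(u)) = g(u) on U_S
    (hψ : ∀ a : ℕ → Fqn, ∃ b : ℕ → Fqn, ∀ u ∈ Submodule.span Fq (Set.range α),
        Hval q s 2 h η a (ψ u) = Hval q s 2 h' η' b u) :
    ∃ b : Fqn, ∀ u ∈ Submodule.span Fq (Set.range α), ψ u = b * u := by
  have hq2 : 2 ≤ q := aux_q_pos hq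
  have hh'1 : h' ≠ 0 := by
    intro h0
    exact hh'0 (by rw [h0])
  have hqh0 : q ^ h ≠ 0 := by positivity
  have hqh'0 : q ^ h' ≠ 0 := by positivity
  have hqh' : (1 : ℕ) < q ^ h' := Nat.one_lt_pow hh'1 (by omega)
  -- there is an element not fixed by x ↦ x^{q^{h'}}
  obtain ⟨t0, ht0⟩ : ∃ t : Fqn, t ^ q ^ h' ≠ t := by
    by_contra hall
    push_neg at hall
    classical
    have h1 : Fintype.card Fqn ≤ q ^ h' := by
      calc Fintype.card Fqn = (Finset.univ : Finset Fqn).card := (Finset.card_univ).symm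
        _ ≤ _ := Finset.card_le_card
            (fun x _ => Finset.mem_filter.mpr ⟨Finset.mem_univ x, hall x⟩)
        _ ≤ q ^ h' := aux_card_fixed_le hqh'
    rw [hqn] at h1
    have h2 : q ^ h' < q ^ n := Nat.pow_lt_pow_right (by omega) hh'
    omega
  have hQQ : q ^ (s * 2) = q ^ s * q ^ s := by
    rw [show s * 2 = s + s by ring, pow_add]
  -- unfold Hval for the specific shapes we use
  have hvalL : ∀ c x : Fqn, Hval q s 2 h η (fun i => if i = 1 then c else 0) x
      = c * x ^ q ^ s := by
    intro c x
    simp [Hval, Finset.sum_range_succ, zero_pow hqh0]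
  have hvalR : ∀ (bb : ℕ → Fqn) (x : Fqn), Hval q s 2 h' η' bb x
      = bb 0 * x + bb 1 * x ^ q ^ s + (η' * bb 0 ^ q ^ h') * x ^ (q ^ s * q ^ s) := by
    intro bb x
    simp only [Hval, Finset.sum_range_succ, Finset.sum_range_zero, Nat.mul_zero,
      Nat.mul_one, pow_zero, pow_one, zero_add, hQQ]
  obtain ⟨b, hb⟩ := hψ (fun i => if i = 1 then (1 : Fqn) else 0)
  obtain ⟨d, hd⟩ := hψ (fun i => if i = 1 then t0 else 0)
  have E1 : ∀ u ∈ Submodule.span Fq (Set.range α),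
      (ψ u) ^ q ^ s
        = b 0 * u + b 1 * u ^ q ^ s + (η' * b 0 ^ q ^ h') * u ^ (q ^ s * q ^ s) := by
    intro u hu
    have h1 := hb u hu
    rw [hvalL, hvalR] at h1
    rw [one_mul] at h1
    exact h1
  have E2 : ∀ u ∈ Submodule.span Fq (Set.range α),
      t0 * (ψ u) ^ q ^ s
        = d 0 * u + d 1 * u ^ q ^ s + (η' * d 0 ^ q ^ h') * u ^ (q ^ s * q ^ s) := by
    intro u hu
    have h1 := hd u hu
    rw [hvalL, hvalR] at h1
    exact h1
  have Hc : ∀ u ∈ Submodule.span Fq (Set.range α),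
      (d 0 - t0 * b 0) * u + (d 1 - t0 * b 1) * u ^ q ^ s
        + (η' * d 0 ^ q ^ h' - t0 * (η' * b 0 ^ q ^ h')) * u ^ (q ^ s * q ^ s) = 0 := by
    intro u hu
    linear_combination t0 * (E1 u hu) - (E2 u hu)
  obtain ⟨hc0, hc1, hc2⟩ := lemC hq hqn hn hs hgcd hkm α hα _ _ _ Hc
  have hd0 : d 0 = t0 * b 0 := by linear_combination hc0
  have hb0pow : b 0 ^ q ^ h' = 0 := by
    have h1 : η' * (t0 * b 0) ^ q ^ h' - t0 * (η' * b 0 ^ q ^ h') = 0 := by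
      rw [← hd0]; exact hc2
    rw [mul_pow] at h1
    have h2 : η' * b 0 ^ q ^ h' * (t0 ^ q ^ h' - t0) = 0 := by linear_combination h1
    rcases mul_eq_zero.mp h2 with h3 | h3
    · rcases mul_eq_zero.mp h3 with h4 | h4
      · exact absurd h4 hη'
      · exact h4
    · exact absurd (sub_eq_zero.mp h3) ht0
  have hb0 : b 0 = 0 := (pow_eq_zero_iff hqh'0).mp hb0pow
  obtain ⟨c, hc⟩ := aux_frob_surj (Fq := Fq) hq s (b 1)
  refine ⟨c, ?_⟩
  intro u hu
  have h1 := E1 u hu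
  rw [hb0, zero_pow hqh'0] at h1
  have h2 : (ψ u) ^ q ^ s = (c * u) ^ q ^ s := by
    rw [mul_pow, hc]
    linear_combination h1
  exact aux_frob_inj (Fq := Fq) hq s h2
end

section
/- Let k = 2 and m = n = 4, so that U_S = F_{q^4}. Let H_{2,s}(η,h) and H_{2,s}(η̃,h̃) be generalized twisted Gabidulin codes with η ≠ 0 and η̃ ≠ 0, and assume η̃^{q^{2s}+1} · η^{q^{3s}+q^s} ≠ 1 (in particular this holds whenever η̃ = η). Let ψ : F_{q^n} → F_{q^n} be an F_q-linear map such that for every f ∈ H_{2,s}(η,h) there exists g ∈ H_{2,s}(η̃,h̃) with f(ψ(u)) = g(u) for all u ∈ F_{q^n}. Then there exists b ∈ F_{q^n} such that ψ(u) = b·u for all u ∈ F_{q^n}. -/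
open Finset

theorem stmt9 (q s h h' : ℕ) (Fq Fqn : Type) [Field Fq] [Fintype Fq] [Field Fqn]
    [Fintype Fqn] [Algebra Fq Fqn]
    (hq : Fintype.card Fq = q) (hqn : Fintype.card Fqn = q ^ 4)
    (hs : 0 < s) (hgcd : Nat.gcd 4 s = 1) (hh : h < 4) (hh' : h' < 4)
    (η η' : Fqn) (hη : η ≠ 0) (hη' : η' ≠ 0)
    (hηnorm : η ^ ((q ^ (s * 4) - 1) / (q ^ s - 1)) ≠ (-1 : Fqn) ^ (4 * 2))
    (hη'norm : η' ^ ((q ^ (s * 4) - 1) / (q ^ s - 1)) ≠ (-1 : Fqn) ^ (4 * 2))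
    -- η̃^{q^{2s}+1} · η^{q^{3s}+q^s} ≠ 1
    (hprod : η' ^ (q ^ (2 * s) + 1) * η ^ (q ^ (3 * s) + q ^ s) ≠ 1)
    -- S consists of m = n = 4 linearly independent elements, so U_S = F_{q^4}
    (α : Fin 4 → Fqn) (hα : LinearIndependent Fq α)
    (ψ : Fqn →ₗ[Fq] Fqn)
    -- for every f ∈ H_{2,s}(η,h) there is g ∈ H_{2,s}(η',h') with f(ψ(u)) = g(u)
    -- for all u ∈ F_{q^4}
    (hψ : ∀ a : ℕ → Fqn, ∃ b : ℕ → Fqn, ∀ u : Fqn,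
        Hval q s 2 h η a (ψ u) = Hval q s 2 h' η' b u) :
    ∃ b : Fqn, ∀ u : Fqn, ψ u = b * u := by
  classical
  -- ### Basic setup: characteristic and Frobenius
  have hq2 : 2 ≤ q := by have := Fintype.one_lt_card (α := Fq); omega
  set p := ringChar Fq with hp
  haveI : CharP Fq p := ringChar.charP Fq
  obtain ⟨k, hpprime, hqpk⟩ := FiniteField.card Fq p
  rw [hq] at hqpk
  haveI : Fact p.Prime := ⟨hpprime⟩
  haveI : CharP Fqn p := charP_of_injective_algebraMap (algebraMap Fq Fqn).injective p
  set φ : ℕ → (Fqn →+* Fqn) := fun a => iterateFrobenius Fqn p ((k : ℕ) * a) with hφ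
  have φdef : ∀ (a : ℕ) (x : Fqn), φ a x = x ^ q ^ a := by
    intro a x
    show x ^ p ^ ((k : ℕ) * a) = _
    rw [pow_mul, ← hqpk]
  have frob_add : ∀ (a : ℕ) (x y : Fqn), (x + y) ^ q ^ a = x ^ q ^ a + y ^ q ^ a := by
    intro a x y
    rw [← φdef, ← φdef, ← φdef, map_add]
  have frob_neg : ∀ (a : ℕ) (x : Fqn), (-x) ^ q ^ a = -(x ^ q ^ a) := by
    intro a x
    rw [← φdef, ← φdef, map_neg]
  have hcard : ∀ x : Fqn, x ^ q ^ 4 = x := by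
    intro x; rw [← hqn]; exact FiniteField.pow_card x
  have red : ∀ (a : ℕ) (x : Fqn), x ^ q ^ a = x ^ q ^ (a % 4) := by
    have key : ∀ (m r : ℕ) (x : Fqn), x ^ q ^ (4 * m + r) = x ^ q ^ r := by
      intro m
      induction m with
      | zero => intro r x; norm_num
      | succ n ih =>
        intro r x
        have h4 : 4 * (n + 1) + r = 4 + (4 * n + r) := by ring
        rw [h4, pow_add, pow_mul, hcard, ih]
    intro a x
    conv_lhs => rw [show a = 4 * (a / 4) + a % 4 from (Nat.div_add_mod a 4).symm]
    exact key _ _ x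
  have hsmod : s % 4 = 1 ∨ s % 4 = 3 := by
    have hg := hgcd
    rw [Nat.gcd_rec] at hg
    have h4 : s % 4 < 4 := Nat.mod_lt _ (by norm_num)
    interval_cases hsm : (s % 4) <;> simp_all
  have ered : ∀ (m : ℕ) (x : Fqn), x ^ q ^ (s * m) = x ^ q ^ (s * (m % 4)) := by
    intro m x
    rw [red (s * m), red (s * (m % 4))]
    congr 2
    conv_lhs => rw [Nat.mul_mod]
    conv_rhs => rw [Nat.mul_mod, Nat.mod_mod_of_dvd _ (dvd_refl 4)]
  have powpow : ∀ (i j : ℕ) (x : Fqn), (x ^ q ^ i) ^ q ^ j = x ^ q ^ (i + j) := by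
    intro i j x; rw [← pow_mul, ← pow_add]
  -- ### Dedekind independence of the Frobenius characters
  obtain ⟨g, hgen⟩ := IsCyclic.exists_generator (α := Fqnˣ)
  have horder : orderOf g = q ^ 4 - 1 := by
    rw [orderOf_eq_card_of_forall_mem_zpowers hgen, Nat.card_eq_fintype_card,
      Fintype.card_units, hqn]
  have emod : ∀ i j : Fin 4, (s * (i : ℕ)) % 4 = (s * (j : ℕ)) % 4 → i = j := by
    intro i j hij
    have hi := i.isLt; have hj := j.isLt
    rw [Nat.mul_mod s (i : ℕ), Nat.mul_mod s (j : ℕ)] at hij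
    apply Fin.ext
    rcases hsmod with hsm | hsm <;> rw [hsm] at hij <;> omega
  have hqlt : ∀ r : ℕ, r < 4 → q ^ r < q ^ 4 - 1 := by
    intro r hr
    have h1 : q ^ r ≤ q ^ 3 := Nat.pow_le_pow_right (by omega) (by omega)
    have h2 : q ^ 3 * 2 ≤ q ^ 3 * q := Nat.mul_le_mul_left _ hq2
    have h3 : q ^ 3 * q = q ^ 4 := by ring
    have h4 : 2 ≤ q ^ 3 := le_trans hq2 (Nat.le_self_pow (by norm_num) q)
    omega
  have indepS : ∀ cc : Fin 4 → Fqn,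
      (∀ u : Fqn, ∑ i : Fin 4, cc i * u ^ q ^ (s * (i : ℕ)) = 0) → ∀ i, cc i = 0 := by
    intro cc hcc
    set χ : Fin 4 → (Fqn →* Fqn) := fun i => powMonoidHom (q ^ ((s * (i : ℕ)) % 4)) with hχ
    have hinj : Function.Injective χ := by
      intro i j hij
      apply emod
      have happ : (g : Fqn) ^ q ^ ((s * (i : ℕ)) % 4) = (g : Fqn) ^ q ^ ((s * (j : ℕ)) % 4) := by
        have := congrArg (fun f : Fqn →* Fqn => f (g : Fqn)) hij
        simpa [hχ, powMonoidHom_apply] using this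
      have hu : g ^ q ^ ((s * (i : ℕ)) % 4) = g ^ q ^ ((s * (j : ℕ)) % 4) := by
        apply Units.ext
        push_cast
        exact happ
      have hmod := pow_eq_pow_iff_modEq.mp hu
      rw [horder] at hmod
      have h1 := hqlt _ (Nat.mod_lt (s * (i : ℕ)) (by norm_num))
      have h2 := hqlt _ (Nat.mod_lt (s * (j : ℕ)) (by norm_num))
      have heq : q ^ ((s * (i : ℕ)) % 4) = q ^ ((s * (j : ℕ)) % 4) := by
        have hm := hmod
        unfold Nat.ModEq at hm
        rw [Nat.mod_eq_of_lt h1, Nat.mod_eq_of_lt h2] at hm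
        exact hm
      exact Nat.pow_right_injective hq2 heq
    have hli : LinearIndependent Fqn (fun i : Fin 4 => ⇑(χ i)) :=
      (linearIndependent_monoidHom Fqn Fqn).comp χ hinj
    have hz : ∑ i : Fin 4, cc i • ⇑(χ i) = 0 := by
      funext u
      simp only [Finset.sum_apply, Pi.smul_apply, smul_eq_mul, Pi.zero_apply, hχ,
        powMonoidHom_apply]
      rw [← hcc u]
      exact Finset.sum_congr rfl fun i _ => by rw [red (s * (i : ℕ)) u]
    exact Fintype.linearIndependent_iff.mp hli cc hz
  -- ### ψ is a linearized polynomial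
  have halg : ∀ (r : Fq) (a : ℕ), (algebraMap Fq Fqn r) ^ q ^ a = algebraMap Fq Fqn r := by
    intro r a
    rw [← map_pow]
    congr 1
    rw [← hq]
    exact FiniteField.pow_card_pow a r
  have hsm : ∀ (a : ℕ) (r : Fq) (x : Fqn), (r • x) ^ q ^ a = r • x ^ q ^ a := by
    intro a r x
    rw [Algebra.smul_def, Algebra.smul_def, mul_pow, halg]
  obtain ⟨b, hψb⟩ : ∃ b : Fin 4 → Fqn, ∀ u : Fqn,
      ψ u = ∑ i : Fin 4, b i * u ^ q ^ (s * (i : ℕ)) := by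
    let L : (Fin 4 → Fqn) →ₗ[Fq] (Fqn →ₗ[Fq] Fqn) :=
      { toFun := fun c =>
          { toFun := fun u => ∑ i : Fin 4, c i * u ^ q ^ (s * (i : ℕ))
            map_add' := by
              intro x y
              simp only [frob_add, mul_add]
              rw [Finset.sum_add_distrib]
            map_smul' := by
              intro r x
              simp only [hsm, RingHom.id_apply, Finset.smul_sum]
              exact Finset.sum_congr rfl fun i _ => mul_smul_comm r (c i) _ }
        map_add' := by
          intro c d
          ext u
          simp only [LinearMap.coe_mk, AddHom.coe_mk, LinearMap.add_apply, Pi.add_apply, add_mul]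
          rw [Finset.sum_add_distrib]
        map_smul' := by
          intro r c
          ext u
          simp only [LinearMap.coe_mk, AddHom.coe_mk, RingHom.id_apply, LinearMap.smul_apply,
            Pi.smul_apply, Finset.smul_sum, smul_mul_assoc] }
    have hinj : Function.Injective L := by
      rw [injective_iff_map_eq_zero]
      intro c hc
      funext i
      refine indepS c (fun u => ?_) i
      have := congrArg (fun f : Fqn →ₗ[Fq] Fqn => f u) hc
      simpa [L] using this
    have hrank4 : Module.finrank Fq Fqn = 4 := by
      have hcard' : Fintype.card Fqn = Fintype.card Fq ^ Module.finrank Fq Fqn :=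
        Module.card_eq_pow_finrank
      rw [hqn, hq] at hcard'
      exact Nat.pow_right_injective hq2 hcard'.symm
    have hrank : Module.finrank Fq (Fin 4 → Fqn) = Module.finrank Fq (Fqn →ₗ[Fq] Fqn) := by
      rw [Module.finrank_pi_fintype, Module.finrank_linearMap, hrank4]
      simp
    have hsurj := (LinearMap.injective_iff_surjective_of_finrank_eq_finrank hrank).mp hinj
    obtain ⟨b, hb⟩ := hsurj ψ
    refine ⟨b, fun u => ?_⟩
    rw [← hb]
    rfl
  -- ### Extracting the coefficient identities
  have main : ∀ a c : Fqn,
      (a * b 3 + c * (b 2) ^ q ^ (s*1) + η * a ^ q ^ h * (b 1) ^ q ^ (s*2) = 0) ∧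
      ∃ g0 : Fqn,
        (a * b 0 + c * (b 3) ^ q ^ (s*1) + η * a ^ q ^ h * (b 2) ^ q ^ (s*2) = g0) ∧
        (a * b 2 + c * (b 1) ^ q ^ (s*1) + η * a ^ q ^ h * (b 0) ^ q ^ (s*2)
          = η' * g0 ^ q ^ h') := by
    have hwexp : ∀ (j : ℕ) (u : Fqn), (ψ u) ^ q ^ (s * j)
        = ∑ i : Fin 4, (b i) ^ q ^ (s * j) * u ^ q ^ (s * (((i : ℕ) + j) % 4)) := by
      intro j u
      have e : ∀ i : ℕ, u ^ q ^ (s * i + s * j) = u ^ q ^ (s * ((i + j) % 4)) := by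
        intro i; rw [← mul_add, ered]
      rw [hψb u, Fin.sum_univ_four, Fin.sum_univ_four]
      simp only [frob_add, mul_pow, powpow, e]
    intro a c
    obtain ⟨g, hg⟩ := hψ (fun i => if i = 0 then a else if i = 1 then c else 0)
    set D : Fin 4 → Fqn := ![
      a * b 0 + c * (b 3) ^ q ^ (s*1) + η * a ^ q ^ h * (b 2) ^ q ^ (s*2) - g 0,
      a * b 1 + c * (b 0) ^ q ^ (s*1) + η * a ^ q ^ h * (b 3) ^ q ^ (s*2) - g 1,
      a * b 2 + c * (b 1) ^ q ^ (s*1) + η * a ^ q ^ h * (b 0) ^ q ^ (s*2) - η' * g 0 ^ q ^ h',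
      a * b 3 + c * (b 2) ^ q ^ (s*1) + η * a ^ q ^ h * (b 1) ^ q ^ (s*2)] with hD
    have hDz : ∀ i, D i = 0 := by
      apply indepS
      intro u
      have H := hg u
      simp only [Hval, Finset.sum_range_succ, Finset.sum_range_zero, zero_add] at H
      norm_num at H
      have h1 : ψ u ^ q ^ s = ∑ i : Fin 4, b i ^ q ^ s * u ^ q ^ (s * (((i : ℕ) + 1) % 4)) := by
        have hx := hwexp 1 u; rw [mul_one] at hx; exact hx
      rw [h1, hwexp 2 u, hψb u] at H
      simp only [Fin.sum_univ_four] at H ⊢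
      simp only [hD, Matrix.cons_val_zero, Matrix.cons_val_one, Matrix.head_cons,
        Matrix.cons_val_two, Matrix.tail_cons, Matrix.cons_val_three]
      simp only [show ((0 : Fin 4) : ℕ) = 0 from rfl, show ((1 : Fin 4) : ℕ) = 1 from rfl,
        show ((2 : Fin 4) : ℕ) = 2 from rfl, show ((3 : Fin 4) : ℕ) = 3 from rfl] at H ⊢
      norm_num at H ⊢
      linear_combination H
    have e0 := hDz 0
    have e2 := hDz 2
    have e3 := hDz 3
    simp only [hD, Matrix.cons_val_zero, Matrix.cons_val_one, Matrix.head_cons,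
      Matrix.cons_val_two, Matrix.tail_cons, Matrix.cons_val_three] at e0 e2 e3
    refine ⟨e3, g 0, ?_, ?_⟩
    · linear_combination e0
    · linear_combination e2
  -- ### The endgame: showing b 1 = b 2 = b 3 = 0
  have hqpow : ∀ x : ℕ, q ^ x ≠ 0 := fun x => pow_ne_zero x (by omega)
  have red4 : ∀ x : Fqn, x ^ q ^ (s * 4) = x := by
    intro x; rw [ered]; norm_num
  have comp : ∀ (i j : ℕ) (x : Fqn),
      (x ^ q ^ (s * i)) ^ q ^ (s * j) = x ^ q ^ (s * (i + j)) := by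
    intro i j x; rw [powpow, ← mul_add]
  have ιex : ∀ r : ℕ, r < 4 → ∃ i : Fin 4, (s * (i : ℕ)) % 4 = r := by
    intro r hr
    rcases hsmod with hsm | hsm
    · interval_cases r
      · exact ⟨0, by show (s * 0) % 4 = 0; omega⟩
      · exact ⟨1, by show (s * 1) % 4 = 1; omega⟩
      · exact ⟨2, by show (s * 2) % 4 = 2; omega⟩
      · exact ⟨3, by show (s * 3) % 4 = 3; omega⟩
    · interval_cases r
      · exact ⟨0, by show (s * 0) % 4 = 0; omega⟩
      · exact ⟨3, by show (s * 3) % 4 = 1; omega⟩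
      · exact ⟨2, by show (s * 2) % 4 = 2; omega⟩
      · exact ⟨1, by show (s * 1) % 4 = 3; omega⟩
  have twochar : ∀ (r1 r2 : ℕ), r1 < 4 → r2 < 4 → r1 ≠ r2 → ∀ X Y : Fqn,
      (∀ u : Fqn, X * u ^ q ^ r1 + Y * u ^ q ^ r2 = 0) → X = 0 ∧ Y = 0 := by
    intro r1 r2 hr1 hr2 hne X Y hXY
    obtain ⟨i1, hi1⟩ := ιex r1 hr1
    obtain ⟨i2, hi2⟩ := ιex r2 hr2
    have hii : i1 ≠ i2 := by
      intro hc; apply hne; rw [← hi1, hc, hi2]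
    set cc : Fin 4 → Fqn := fun i => (if i = i1 then X else 0) + (if i = i2 then Y else 0)
      with hcc
    have hz : ∀ i, cc i = 0 := by
      apply indepS
      intro u
      simp only [hcc, add_mul, ite_mul, zero_mul, Finset.sum_add_distrib,
        Finset.sum_ite_eq', Finset.mem_univ, if_true]
      rw [red (s * (i1 : ℕ)), hi1, red (s * (i2 : ℕ)), hi2]
      exact hXY u
    constructor
    · have h1 := hz i1
      simpa [hcc, if_neg hii] using h1
    · have h2 := hz i2
      simpa [hcc, if_neg (Ne.symm hii)] using h2
  have hb123 : b 1 = 0 ∧ b 2 = 0 ∧ b 3 = 0 := by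
    have hb2 : b 2 = 0 := by
      have h1 := (main 0 1).1
      simp [zero_pow (hqpow h)] at h1
      exact h1.1
    have hac : ∀ a : Fqn, a * b 3 + η * a ^ q ^ h * b 1 ^ q ^ (s*2) = 0 := by
      intro a
      have h1 := (main a 0).1
      simpa [hb2, zero_pow (hqpow (s*1))] using h1
    by_cases hh0 : h = 0
    · subst hh0
      have hb3 : b 3 = -(η * b 1 ^ q ^ (s*2)) := by
        have h1 := hac 1
        norm_num at h1
        linear_combination h1
      have hE : ∀ a c : Fqn, c * b 1 ^ q ^ (s*1) + η * a * b 0 ^ q ^ (s*2)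
          = η' * (a * b 0 + c * b 3 ^ q ^ (s*1)) ^ q ^ h' := by
        intro a c
        obtain ⟨_, g0, hg0, hg2⟩ := main a c
        have hg0' : g0 = a * b 0 + c * b 3 ^ q ^ (s*1) := by
          rw [← hg0, hb2]
          norm_num [zero_pow (hqpow (s*2))]
        rw [← hg0']
        rw [hb2] at hg2
        norm_num at hg2
        linear_combination hg2
      by_cases hh'0 : h' = 0
      · have hX : b 1 ^ q ^ (s*1) = η' * b 3 ^ q ^ (s*1) := by
          have h1 := hE 0 1
          subst hh'0
          norm_num at h1
          linear_combination h1
        by_cases hb1 : b 1 = 0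
        · exact ⟨hb1, hb2, by rw [hb3, hb1, zero_pow (hqpow (s*2))]; ring⟩
        · exfalso
          have h2 : b 1 = η' ^ q ^ (s*3) * b 3 := by
            have t := congrArg (fun x : Fqn => x ^ q ^ (s*3)) hX
            simp only [mul_pow] at t
            rw [comp 1 3, comp 1 3] at t
            norm_num at t
            rw [red4, red4] at t
            exact t
          have star : b 1 = -(η' ^ q ^ (s*3) * η * b 1 ^ q ^ (s*2)) := by
            conv_lhs => rw [h2, hb3]
            ring
          have star2 : b 1 ^ q ^ (s*2) = -(η' ^ q ^ (s*1) * η ^ q ^ (s*2) * b 1) := by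
            have t := congrArg (fun x : Fqn => x ^ q ^ (s*2)) star
            rw [frob_neg] at t
            simp only [mul_pow] at t
            rw [comp 3 2, comp 2 2] at t
            norm_num at t
            rw [red4, ered 5] at t
            norm_num at t
            linear_combination t
          have final : b 1 * (η' ^ q ^ (s*3) * η' ^ q ^ (s*1) * η * η ^ q ^ (s*2) - 1) = 0 := by
            linear_combination (η' ^ q ^ (s*3) * η) * star2 - star
          have hP : η' ^ q ^ (s*3) * η' ^ q ^ (s*1) * η * η ^ q ^ (s*2) = 1 := by
            rcases mul_eq_zero.mp final with hcase | hcase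
            · exact absurd hcase hb1
            · linear_combination hcase
          apply hprod
          have t := congrArg (fun x : Fqn => x ^ q ^ (s*1)) hP
          simp only [mul_pow, one_pow] at t
          rw [comp 3 1, comp 1 1, comp 2 1] at t
          norm_num at t
          rw [red4] at t
          rw [show 2*s = s*2 by ring, show 3*s = s*3 by ring, show q ^ s = q ^ (s*1) by ring_nf,
            pow_add, pow_add, pow_one]
          linear_combination t
      · have h1 : ∀ c : Fqn, c * b 1 ^ q ^ (s*1)
            = η' * (c ^ q ^ h' * (b 3 ^ q ^ (s*1)) ^ q ^ h') := by
          intro c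
          have t := hE 0 c
          simp only [mul_zero, zero_mul, zero_add, add_zero, mul_pow] at t
          linear_combination t
        have h2 := twochar 0 h' (by norm_num) hh' (fun hcc => hh'0 hcc.symm)
          (b 1 ^ q ^ (s*1)) (-(η' * (b 3 ^ q ^ (s*1)) ^ q ^ h'))
          (fun u => by rw [pow_zero, pow_one]; linear_combination (h1 u))
        have hb1 : b 1 = 0 := pow_eq_zero_iff (hqpow (s*1)) |>.mp h2.1
        exact ⟨hb1, hb2, by rw [hb3, hb1, zero_pow (hqpow (s*2))]; ring⟩
    · have h2 := twochar 0 h (by norm_num) hh (fun hcc => hh0 hcc.symm)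
        (b 3) (η * b 1 ^ q ^ (s*2))
        (fun u => by rw [pow_zero, pow_one]; linear_combination (hac u))
      have hb1 : b 1 = 0 := by
        rcases mul_eq_zero.mp h2.2 with hcase | hcase
        · exact absurd hcase hη
        · exact pow_eq_zero_iff (hqpow (s*2)) |>.mp hcase
      exact ⟨hb1, hb2, h2.1⟩
  -- ### Conclusion
  obtain ⟨hb1, hb2, hb3⟩ := hb123
  refine ⟨b 0, fun u => ?_⟩
  rw [hψb u, Fin.sum_univ_four, hb1, hb2, hb3]
  simp only [show ((0 : Fin 4) : ℕ) = 0 from rfl]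
  norm_num
end

section
/- Let k > 2 and m = k+1 with m ≤ n. Let H_{k,s}(η,h) and H_{k,s}(η̃,h̃) be generalized twisted Gabidulin codes with η ≠ 0 and η̃ ≠ 0, and assume h̃ ≢ 0 (mod n). Let ψ : F_{q^n} → F_{q^n} be an F_q-linear map such that for every f ∈ H_{k,s}(η,h) there exists g ∈ H_{k,s}(η̃,h̃) with f(ψ(u)) = g(u) for all u ∈ U_S. Then there exists b ∈ F_{q^n} such that ψ(u) = b·u for all u ∈ U_S. -/
open Finset

set_option linter.unusedSectionVars false
set_option maxHeartbeats 1000000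

section Aux

variable {q s n : ℕ} {Fq Fqn : Type} [Field Fq] [Fintype Fq] [Field Fqn] [Fintype Fqn]
  [Algebra Fq Fqn]

private lemma pow_pow_q (x : Fqn) (q a b : ℕ) : (x ^ q ^ a) ^ q ^ b = x ^ q ^ (a + b) := by
  rw [← pow_mul, ← pow_add]

private lemma gcd_fix (q : ℕ) (x : Fqn) : ∀ a b : ℕ, x ^ q ^ a = x → x ^ q ^ b = x →
    x ^ q ^ (Nat.gcd a b) = x := by
  intro a b
  induction a, b using Nat.gcd.induction with
  | H0 b => intro _ h; simpa using h
  | H1 a b ha IH =>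
    intro h1 h2
    rw [Nat.gcd_rec]
    have hmul : ∀ m : ℕ, x ^ q ^ (a * m) = x := by
      intro m
      induction m with
      | zero => simp
      | succ m ih => rw [Nat.mul_succ, ← pow_pow_q, ih, h1]
    have hmod : x ^ q ^ (b % a) = x := by
      have hb : a * (b / a) + b % a = b := Nat.div_add_mod b a
      calc x ^ q ^ (b % a) = (x ^ q ^ (a * (b / a))) ^ q ^ (b % a) := by rw [hmul]
        _ = x ^ q ^ (a * (b / a) + b % a) := pow_pow_q x q _ _
        _ = x := by rw [hb, h2]
    exact IH hmod h1

private lemma fix_mem (hq : Fintype.card Fq = q) (hqn : Fintype.card Fqn = q ^ n)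
    (hgcd : Nat.gcd n s = 1) {x : Fqn} (hx : x ^ q ^ s = x) :
    ∃ a : Fq, algebraMap Fq Fqn a = x := by
  classical
  have hq2 : 1 < q := hq ▸ Fintype.one_lt_card
  have hxn : x ^ q ^ n = x := by rw [← hqn]; exact FiniteField.pow_card x
  have hxq : x ^ q = x := by
    have := gcd_fix q x s n hx hxn
    rw [Nat.gcd_comm s n, hgcd, pow_one] at this
    exact this
  set P : Polynomial Fqn := Polynomial.X ^ q - Polynomial.X with hP
  have hPne : P ≠ 0 := FiniteField.X_pow_card_sub_X_ne_zero Fqn hq2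
  have hdeg : P.natDegree = q := FiniteField.X_pow_card_sub_X_natDegree_eq Fqn hq2
  set S : Finset Fqn := Finset.univ.image (algebraMap Fq Fqn) with hS
  have hcardS : S.card = q := by
    rw [hS, Finset.card_image_of_injective _ (algebraMap Fq Fqn).injective,
      Finset.card_univ, hq]
  by_contra hcon
  push_neg at hcon
  have hxS : x ∉ S := by
    simp only [hS, Finset.mem_image, Finset.mem_univ, true_and]
    rintro ⟨a, ha⟩
    exact hcon a ha
  have hsub : insert x S ⊆ P.roots.toFinset := by
    intro y hy
    rw [Multiset.mem_toFinset, Polynomial.mem_roots hPne]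
    rcases Finset.mem_insert.mp hy with rfl | hyS
    · simp [Polynomial.IsRoot, hP, hxq]
    · simp only [hS, Finset.mem_image, Finset.mem_univ, true_and] at hyS
      obtain ⟨a, rfl⟩ := hyS
      have : (a : Fq) ^ q = a := by rw [← hq]; exact FiniteField.pow_card a
      simp [Polynomial.IsRoot, hP, ← map_pow, this]
  have hle : (insert x S).card ≤ P.roots.toFinset.card := Finset.card_le_card hsub
  have h1 : P.roots.toFinset.card ≤ q := by
    calc P.roots.toFinset.card ≤ Multiset.card P.roots := Multiset.toFinset_card_le _
      _ ≤ P.natDegree := Polynomial.card_roots' P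
      _ = q := hdeg
  rw [Finset.card_insert_of_notMem hxS, hcardS] at hle
  omega

variable {p e : ℕ} [Fact p.Prime] [CharP Fqn p]

private lemma frob_eq (hqpe : q = p ^ e) (w : ℕ) (x : Fqn) :
    iterateFrobenius Fqn p (e * w) x = x ^ q ^ w := by
  rw [iterateFrobenius_def, hqpe, ← pow_mul]

private lemma pow_q_add (hqpe : q = p ^ e) (w : ℕ) (x y : Fqn) :
    (x + y) ^ q ^ w = x ^ q ^ w + y ^ q ^ w := by
  rw [← frob_eq hqpe, ← frob_eq hqpe, ← frob_eq hqpe, map_add]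

private lemma pow_q_sub (hqpe : q = p ^ e) (w : ℕ) (x y : Fqn) :
    (x - y) ^ q ^ w = x ^ q ^ w - y ^ q ^ w := by
  rw [← frob_eq hqpe, ← frob_eq hqpe, ← frob_eq hqpe, map_sub]

private lemma pow_q_sum (hqpe : q = p ^ e) (w r : ℕ) (f : ℕ → Fqn) :
    (∑ i ∈ range r, f i) ^ q ^ w = ∑ i ∈ range r, (f i) ^ q ^ w := by
  simp only [← frob_eq hqpe, map_sum]

private lemma pow_q_smul (hq : Fintype.card Fq = q) (w : ℕ) (r : Fq) (x : Fqn) :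
    (r • x) ^ q ^ w = r • x ^ q ^ w := by
  rw [Algebra.smul_def, Algebra.smul_def, mul_pow, ← map_pow]
  congr 2
  rw [← hq]
  exact FiniteField.pow_card_pow w r

private lemma moore (hqpe : q = p ^ e) (hq : Fintype.card Fq = q)
    (hqn : Fintype.card Fqn = q ^ n) (hgcd : Nat.gcd n s = 1) :
    ∀ (k : ℕ) (c : ℕ → Fqn) (V : Submodule Fq Fqn), k + 1 ≤ Module.finrank Fq V →
      (∀ u ∈ V, ∑ i ∈ range (k + 1), c i * u ^ q ^ (s * i) = 0) → ∀ i, i ≤ k → c i = 0 := by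
  intro k
  induction k with
  | zero =>
    intro c V hrank hvan i hi
    obtain rfl : i = 0 := Nat.le_zero.mp hi
    obtain ⟨⟨v, hvV⟩, hv0'⟩ := Module.finrank_pos_iff_exists_ne_zero.mp
      (lt_of_lt_of_le zero_lt_one hrank)
    have hv0 : v ≠ 0 := fun h => hv0' (Subtype.ext h)
    have := hvan v hvV
    simp only [zero_add, range_one, sum_singleton, Nat.mul_zero, pow_zero, pow_one] at this
    exact (mul_eq_zero.mp this).resolve_right hv0
  | succ k IH =>
    intro c V hrank hvan
    -- pick a nonzero element of V
    obtain ⟨⟨v, hvV⟩, hv0'⟩ := Module.finrank_pos_iff_exists_ne_zero.mp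
      (lt_of_lt_of_le (Nat.succ_pos _) hrank)
    have hv0 : v ≠ 0 := fun h => hv0' (Subtype.ext h)
    -- the linear equivalence x ↦ v⁻¹ * x
    let μ : Fqn ≃ₗ[Fq] Fqn :=
      { toFun := fun x => v⁻¹ * x
        map_add' := fun x y => by ring
        map_smul' := fun r x => by simp only [RingHom.id_apply]; exact mul_smul_comm r v⁻¹ x
        invFun := fun x => v * x
        left_inv := fun x => by field_simp
        right_inv := fun x => by field_simp }
    set V' : Submodule Fq Fqn := V.map (μ : Fqn →ₗ[Fq] Fqn) with hV'
    have hrank' : k + 2 ≤ Module.finrank Fq V' := by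
      rw [hV', LinearEquiv.finrank_map_eq μ V]
      exact hrank
    have h1V' : (1 : Fqn) ∈ V' := by
      refine ⟨v, hvV, ?_⟩
      simp only [μ, LinearEquiv.coe_coe, LinearEquiv.coe_mk, LinearMap.coe_mk, AddHom.coe_mk]
      exact inv_mul_cancel₀ hv0
    set c' : ℕ → Fqn := fun i => c i * v ^ q ^ (s * i) with hc'
    have hvan' : ∀ y ∈ V', ∑ i ∈ range (k + 2), c' i * y ^ q ^ (s * i) = 0 := by
      rintro y ⟨x, hxV, rfl⟩
      have expand : ∀ i : ℕ,
          c' i * ((μ : Fqn →ₗ[Fq] Fqn) x) ^ q ^ (s * i) = c i * x ^ q ^ (s * i) := by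
        intro i
        have hμ : ((μ : Fqn →ₗ[Fq] Fqn) x : Fqn) = v⁻¹ * x := rfl
        simp only [hc']
        rw [hμ, mul_pow, inv_pow]
        field_simp
      exact (Finset.sum_congr rfl (fun i _ => expand i)).trans (hvan x hxV)
    have hsum0 : ∑ i ∈ range (k + 2), c' i = 0 := by
      have := hvan' 1 h1V'
      simpa using this
    set E : ℕ → Fqn := fun i => -(∑ j ∈ range (i + 1), c' j) with hE
    have hE' : ∀ i : ℕ, c' (i + 1) = E i - E (i + 1) := by
      intro i
      simp only [hE, Finset.sum_range_succ]
      ring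
    have hE0 : c' 0 = -E 0 := by simp [hE]
    have hEk : E (k + 1) = 0 := by
      simp only [hE, neg_eq_zero]
      exact hsum0
    -- the Fq-linear map x ↦ x^{q^s} - x
    let φ : Fqn →ₗ[Fq] Fqn :=
      { toFun := fun x => x ^ q ^ s - x
        map_add' := fun x y => by
          show (x + y) ^ q ^ s - (x + y) = (x ^ q ^ s - x) + (y ^ q ^ s - y)
          rw [pow_q_add hqpe]; ring
        map_smul' := fun r x => by
          show (r • x) ^ q ^ s - (r • x) = r • (x ^ q ^ s - x)
          rw [pow_q_smul hq, smul_sub] }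
    -- kernel of φ is at most 1-dimensional
    have hker : Module.finrank Fq (LinearMap.ker φ) ≤ 1 := by
      have hle : LinearMap.ker φ ≤ LinearMap.range (Algebra.linearMap Fq Fqn) := by
        intro x hx
        have hx' : x ^ q ^ s - x = 0 := hx
        obtain ⟨a, ha⟩ := fix_mem hq hqn hgcd (sub_eq_zero.mp hx')
        exact ⟨a, ha⟩
      calc Module.finrank Fq (LinearMap.ker φ)
          ≤ Module.finrank Fq (LinearMap.range (Algebra.linearMap Fq Fqn)) :=
            Submodule.finrank_mono hle
        _ ≤ Module.finrank Fq Fq := LinearMap.finrank_range_le _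
        _ = 1 := Module.finrank_self Fq
    -- W = φ(V') has finrank ≥ k+1
    set W : Submodule Fq Fqn := V'.map φ with hW
    have hrankW : k + 1 ≤ Module.finrank Fq W := by
      set f : V' →ₗ[Fq] Fqn := φ ∘ₗ V'.subtype with hf
      have hrange : LinearMap.range f = W := by
        rw [hf, LinearMap.range_comp, Submodule.range_subtype]
      have hkercomp : LinearMap.ker f =
          Submodule.comap V'.subtype (LinearMap.ker φ ⊓ V') := by
        rw [hf, LinearMap.ker_comp, Submodule.comap_inf, Submodule.comap_subtype_self,
          inf_top_eq]
      have hkerf : Module.finrank Fq (LinearMap.ker f) ≤ 1 := by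
        rw [hkercomp]
        calc Module.finrank Fq (Submodule.comap V'.subtype (LinearMap.ker φ ⊓ V'))
            = Module.finrank Fq (LinearMap.ker φ ⊓ V' : Submodule Fq Fqn) :=
              (Submodule.comapSubtypeEquivOfLe inf_le_right).finrank_eq
          _ ≤ Module.finrank Fq (LinearMap.ker φ) := Submodule.finrank_mono inf_le_left
          _ ≤ 1 := hker
      have hrn := LinearMap.finrank_range_add_finrank_ker f
      rw [hrange] at hrn
      have hV'rank : Module.finrank Fq V' = Module.finrank Fq W +
          Module.finrank Fq (LinearMap.ker f) := hrn.symm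
      omega
    have hvanW : ∀ z ∈ W, ∑ i ∈ range (k + 1), E i * z ^ q ^ (s * i) = 0 := by
      rintro z ⟨y, hyV', rfl⟩
      have hφy : (φ y : Fqn) = y ^ q ^ s - y := rfl
      have hpow : ∀ i : ℕ, (φ y : Fqn) ^ q ^ (s * i) =
          y ^ q ^ (s * (i + 1)) - y ^ q ^ (s * i) := by
        intro i
        rw [hφy, pow_q_sub hqpe, pow_pow_q]
        congr 2
        ring
      have step1 : ∑ i ∈ range (k + 1), E i * (φ y : Fqn) ^ q ^ (s * i)
          = (∑ i ∈ range (k + 1), E i * y ^ q ^ (s * (i + 1)))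
            - ∑ i ∈ range (k + 1), E i * y ^ q ^ (s * i) := by
        rw [← Finset.sum_sub_distrib]
        refine Finset.sum_congr rfl fun i _ => ?_
        rw [hpow i, mul_sub]
      have hA : ∑ i ∈ range (k + 2), (if i = 0 then 0 else E (i - 1)) * y ^ q ^ (s * i)
          = ∑ i ∈ range (k + 1), E i * y ^ q ^ (s * (i + 1)) := by
        rw [Finset.sum_range_succ']
        simp
      have hB : ∑ i ∈ range (k + 2), (if i = k + 1 then 0 else E i) * y ^ q ^ (s * i)
          = ∑ i ∈ range (k + 1), E i * y ^ q ^ (s * i) := by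
        have hterm : ∀ i ∈ range (k + 1),
            (if i = k + 1 then (0:Fqn) else E i) * y ^ q ^ (s * i)
              = E i * y ^ q ^ (s * i) := by
          intro i hi
          rw [if_neg (show ¬ i = k + 1 by have := Finset.mem_range.mp hi; omega)]
        rw [Finset.sum_range_succ, Finset.sum_congr rfl hterm]
        simp
      rw [step1, ← hA, ← hB, ← Finset.sum_sub_distrib]
      have hcoef : ∀ i ∈ range (k + 2),
          (if i = 0 then 0 else E (i - 1)) * y ^ q ^ (s * i)
            - (if i = k + 1 then 0 else E i) * y ^ q ^ (s * i)
          = c' i * y ^ q ^ (s * i) := by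
        intro i hi
        rw [← sub_mul]
        congr 1
        rcases Nat.eq_zero_or_pos i with rfl | hipos
        · rw [if_pos rfl, if_neg (by omega : ¬ (0:ℕ) = k + 1), hE0]
          ring
        · obtain ⟨j, rfl⟩ : ∃ j, i = j + 1 := ⟨i - 1, by omega⟩
          rw [if_neg (by omega : ¬ j + 1 = 0)]
          by_cases hjk : j + 1 = k + 1
          · rw [if_pos hjk]
            have hj : j = k := by omega
            rw [hj, hE' k, hEk]
            simp
          · rw [if_neg hjk, Nat.add_sub_cancel, hE' j]
      rw [Finset.sum_congr rfl hcoef]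
      exact hvan' y hyV'
    have hEzero : ∀ i, i ≤ k → E i = 0 := IH E W hrankW hvanW
    have hc'zero : ∀ i, i ≤ k + 1 → c' i = 0 := by
      intro i hi
      cases i with
      | zero => rw [hE0, hEzero 0 (Nat.zero_le k), neg_zero]
      | succ j =>
        rw [hE' j, hEzero j (by omega)]
        by_cases hjk : j + 1 ≤ k
        · rw [hEzero (j + 1) hjk]; ring
        · have hj : j = k := by omega
          rw [hj, hEk]; ring
    intro i hik
    have hthis := hc'zero i hik
    simp only [hc'] at hthis
    exact (mul_eq_zero.mp hthis).resolve_right (pow_ne_zero _ hv0)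

end Aux

theorem stmt10 (q n m k s h h' : ℕ) (Fq Fqn : Type) [Field Fq] [Fintype Fq] [Field Fqn]
    [Fintype Fqn] [Algebra Fq Fqn]
    (hq : Fintype.card Fq = q) (hqn : Fintype.card Fqn = q ^ n)
    (hn : 0 < n) (hk : 2 < k) (hm : m = k + 1) (hmn : m ≤ n)
    (hs : 0 < s) (hgcd : Nat.gcd n s = 1) (hh : h < n) (hh' : h' < n)
    (η η' : Fqn) (hη : η ≠ 0) (hη' : η' ≠ 0)
    (hηnorm : η ^ ((q ^ (s * n) - 1) / (q ^ s - 1)) ≠ (-1 : Fqn) ^ (n * k))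
    (hη'norm : η' ^ ((q ^ (s * n) - 1) / (q ^ s - 1)) ≠ (-1 : Fqn) ^ (n * k))
    -- h̃ ≢ 0 (mod n)
    (hh'0 : ¬ (h' ≡ 0 [MOD n]))
    (α : Fin m → Fqn) (hα : LinearIndependent Fq α)
    (ψ : Fqn →ₗ[Fq] Fqn)
    -- for every f ∈ H_{k,s}(η,h) there is g ∈ H_{k,s}(η',h') with f(ψ(u)) = g(u) on U_S
    (hψ : ∀ a : ℕ → Fqn, ∃ b : ℕ → Fqn, ∀ u ∈ Submodule.span Fq (Set.range α),
        Hval q s k h η a (ψ u) = Hval q s k h' η' b u) :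
    ∃ b : Fqn, ∀ u ∈ Submodule.span Fq (Set.range α), ψ u = b * u := by
  classical
  subst hm
  -- basic numerics
  have hq2 : 1 < q := hq ▸ Fintype.one_lt_card
  have hq0 : ∀ w : ℕ, q ^ w ≠ 0 := fun w => pow_ne_zero w (by omega)
  have hh'ne : h' ≠ 0 := fun h0 => hh'0 (by simp [h0, Nat.ModEq.refl])
  -- characteristic
  set p := ringChar Fq with hpdef
  haveI : CharP Fq p := ringChar.charP Fq
  obtain ⟨e, hpprime, hcard⟩ := FiniteField.card Fq p
  haveI : Fact p.Prime := ⟨hpprime⟩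
  have hqpe : q = p ^ (e : ℕ) := by rw [← hq, hcard]
  haveI : CharP Fqn p := charP_of_injective_algebraMap (algebraMap Fq Fqn).injective p
  set U := Submodule.span Fq (Set.range α) with hUdef
  have hrankU : Module.finrank Fq U = k + 1 := by
    rw [hUdef, finrank_span_eq_card hα, Fintype.card_fin]
  have hmoore : ∀ c : ℕ → Fqn,
      (∀ u ∈ U, ∑ i ∈ range (k + 1), c i * u ^ q ^ (s * i) = 0) → ∀ i, i ≤ k → c i = 0 :=
    fun c hc => moore hqpe hq hqn hgcd k c U (le_of_eq hrankU.symm) hc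
  -- transfer of identities from the α's to all of U
  have span_zero : ∀ f : Fqn → Fqn, (∀ x y, f (x + y) = f x + f y) →
      (∀ (r : Fq) (x : Fqn), f (r • x) = r • f x) → (∀ j, f (α j) = 0) →
      ∀ u ∈ U, f u = 0 := by
    intro f hadd hsmul hzero u hu
    have h0 : f 0 = 0 := by
      have h00 := hadd 0 0
      rw [add_zero] at h00
      exact (left_eq_add.mp h00)
    let Wsub : Submodule Fq Fqn :=
      { carrier := {x | f x = 0}
        add_mem' := fun {a b} ha hb => by
          simp only [Set.mem_setOf_eq] at *
          rw [hadd, ha, hb, add_zero]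
        zero_mem' := h0
        smul_mem' := fun r x hx => by
          simp only [Set.mem_setOf_eq] at *
          rw [hsmul, hx, smul_zero] }
    have hle : U ≤ Wsub := Submodule.span_le.mpr (by rintro x ⟨j, rfl⟩; exact hzero j)
    exact hle hu
  -- shifted-sum helper
  have hshift : ∀ (a r : ℕ) (F : ℕ → Fqn),
      ∑ i ∈ range (r + a), (if a ≤ i then F i else 0) = ∑ i ∈ range r, F (i + a) := by
    intro a r F
    induction r with
    | zero =>
      rw [Nat.zero_add]
      exact Finset.sum_eq_zero fun i hi =>
        if_neg (by have := Finset.mem_range.mp hi; omega)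
    | succ r ih =>
      rw [show r + 1 + a = (r + a) + 1 by omega, Finset.sum_range_succ, ih,
        Finset.sum_range_succ, if_pos (by omega)]
  -- the Frobenius-power vectors
  set Wv : ℕ → (Fin (k + 1) → Fqn) := fun i r => (α r) ^ q ^ (s * i) with hWv
  -- dependence among Wv 0 .. Wv (k+1)
  have hdep : ¬ LinearIndependent Fqn (fun i : Fin (k + 2) => Wv i) := by
    intro hli
    have hcard := hli.fintype_card_le_finrank
    rw [Module.finrank_fin_fun, Fintype.card_fin] at hcard
    omega
  obtain ⟨g, hgsum, i0, hgi0⟩ := Fintype.not_linearIndependent_iff.mp hdep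
  set G : ℕ → Fqn := fun i => if hi : i < k + 2 then g ⟨i, hi⟩ else 0 with hG
  have hGpt : ∀ r : Fin (k + 1), ∑ i ∈ range (k + 2), G i * (α r) ^ q ^ (s * i) = 0 := by
    intro r
    have h1 := congrFun hgsum r
    rw [Finset.sum_apply] at h1
    have h2 : ∀ i : Fin (k + 2),
        (g i • Wv i) r = G (i : ℕ) * (α r) ^ q ^ (s * (i : ℕ)) := by
      intro i
      simp only [Pi.smul_apply, smul_eq_mul, hWv, hG, dif_pos i.isLt, Fin.eta]
    rw [Finset.sum_congr rfl (fun i _ => h2 i)] at h1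
    rw [← Fin.sum_univ_eq_sum_range (fun i => G i * (α r) ^ q ^ (s * i)) (k + 2)]
    exact h1
  have hGU : ∀ u ∈ U, ∑ i ∈ range (k + 2), G i * u ^ q ^ (s * i) = 0 := by
    refine span_zero _ (fun x y => ?_) (fun r x => ?_) hGpt
    · simp only [pow_q_add hqpe, mul_add]
      exact Finset.sum_add_distrib
    · simp only [pow_q_smul hq, mul_smul_comm]
      exact (Finset.smul_sum).symm
  have hGtop : G (k + 1) ≠ 0 := by
    intro h0
    have hvan : ∀ u ∈ U, ∑ i ∈ range (k + 1), G i * u ^ q ^ (s * i) = 0 := by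
      intro u hu
      have hh := hGU u hu
      rwa [Finset.sum_range_succ, h0, zero_mul, add_zero] at hh
    have hall := hmoore G hvan
    apply hgi0
    have hGi0 : G (i0 : ℕ) = 0 := by
      rcases Nat.lt_or_ge (i0 : ℕ) (k + 1) with hlt | hge
      · exact hall _ (by omega)
      · have hie : (i0 : ℕ) = k + 1 := by have := i0.isLt; omega
        rw [hie]; exact h0
    rw [hG] at hGi0
    simpa [dif_pos i0.isLt, Fin.eta] using hGi0
  set t : ℕ → Fqn := fun i => -(G i / G (k + 1)) with htdef
  have htid : ∀ u ∈ U, u ^ q ^ (s * (k + 1)) = ∑ i ∈ range (k + 1), t i * u ^ q ^ (s * i) := by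
    intro u hu
    have hsum := hGU u hu
    rw [Finset.sum_range_succ] at hsum
    have h2 : G (k + 1) * u ^ q ^ (s * (k + 1)) =
        -∑ i ∈ range (k + 1), G i * u ^ q ^ (s * i) := eq_neg_of_add_eq_zero_right hsum
    apply mul_left_cancel₀ hGtop
    rw [h2, Finset.mul_sum, ← Finset.sum_neg_distrib]
    refine Finset.sum_congr rfl fun i _ => ?_
    rw [htdef]
    field_simp
  have hsurj : Function.Surjective (fun x : Fqn => x ^ q ^ s) := by
    have hinj : Function.Injective (fun x : Fqn => x ^ q ^ s) := by
      intro x y hxy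
      have hsub : (x - y) ^ q ^ s = 0 := by
        rw [pow_q_sub hqpe, show x ^ q ^ s = y ^ q ^ s from hxy, sub_self]
      exact sub_eq_zero.mp ((pow_eq_zero_iff (hq0 s)).mp hsub)
    exact Finite.injective_iff_surjective.mp hinj
  have ht0 : t 0 ≠ 0 := by
    intro h00
    choose rt hrt using hsurj
    set c : ℕ → Fqn := fun i => if i = k then (-1 : Fqn) else rt (t (i + 1)) with hcdef
    have hvanc : ∀ u ∈ U, ∑ i ∈ range (k + 1), c i * u ^ q ^ (s * i) = 0 := by
      intro u hu
      have hpows : (∑ i ∈ range (k + 1), c i * u ^ q ^ (s * i)) ^ q ^ s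
          = ∑ i ∈ range (k + 1), (c i) ^ q ^ s * u ^ q ^ (s * (i + 1)) := by
        rw [pow_q_sum hqpe]
        refine Finset.sum_congr rfl fun i _ => ?_
        rw [mul_pow, pow_pow_q]
        congr 2 <;> ring
      have hcpow : ∀ i, i < k → (c i) ^ q ^ s = t (i + 1) := by
        intro i hik
        rw [hcdef]
        simp only [if_neg (by omega : ¬ i = k)]
        exact hrt (t (i + 1))
      have hckpow : (c k) ^ q ^ s = -1 := by
        have hck : c k = -1 := by rw [hcdef]; simp
        rw [hck, show (-1 : Fqn) = 0 - 1 by ring, pow_q_sub hqpe]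
        simp [zero_pow (hq0 s)]
      have hzero : (∑ i ∈ range (k + 1), c i * u ^ q ^ (s * i)) ^ q ^ s = 0 := by
        rw [hpows, Finset.sum_range_succ, hckpow]
        have hfirst : ∑ i ∈ range k, (c i) ^ q ^ s * u ^ q ^ (s * (i + 1))
            = ∑ i ∈ range k, t (i + 1) * u ^ q ^ (s * (i + 1)) :=
          Finset.sum_congr rfl fun i hi => by rw [hcpow i (Finset.mem_range.mp hi)]
        rw [hfirst]
        have hsplit : ∑ i ∈ range (k + 1), t i * u ^ q ^ (s * i)
            = (∑ i ∈ range k, t (i + 1) * u ^ q ^ (s * (i + 1))) + t 0 * u ^ q ^ (s * 0) :=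
          Finset.sum_range_succ' _ k
        have := htid u hu
        rw [hsplit, h00, zero_mul, add_zero] at this
        rw [← this]
        ring
      exact (pow_eq_zero_iff (hq0 s)).mp hzero
    have hck := hmoore c hvanc k le_rfl
    rw [hcdef] at hck
    simp at hck
  -- independence of Wv 0 .. Wv k and expression of ψ
  have hWli : LinearIndependent Fqn (fun i : Fin (k + 1) => Wv i) := by
    rw [Fintype.linearIndependent_iff]
    intro g' hg'
    set G' : ℕ → Fqn := fun j => if hj : j < k + 1 then g' ⟨j, hj⟩ else 0 with hG'
    have hGpt' : ∀ r : Fin (k + 1), ∑ i ∈ range (k + 1), G' i * (α r) ^ q ^ (s * i) = 0 := by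
      intro r
      have h1 := congrFun hg' r
      rw [Finset.sum_apply] at h1
      have h2 : ∀ i : Fin (k + 1),
          (g' i • Wv i) r = G' (i : ℕ) * (α r) ^ q ^ (s * (i : ℕ)) := by
        intro i
        simp only [Pi.smul_apply, smul_eq_mul, hWv, hG', dif_pos i.isLt, Fin.eta]
      rw [Finset.sum_congr rfl (fun i _ => h2 i)] at h1
      rw [← Fin.sum_univ_eq_sum_range (fun i => G' i * (α r) ^ q ^ (s * i)) (k + 1)]
      exact h1
    have hGU' : ∀ u ∈ U, ∑ i ∈ range (k + 1), G' i * u ^ q ^ (s * i) = 0 := by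
      refine span_zero _ (fun x y => ?_) (fun r x => ?_) hGpt'
      · simp only [pow_q_add hqpe, mul_add]
        exact Finset.sum_add_distrib
      · simp only [pow_q_smul hq, mul_smul_comm]
        exact (Finset.smul_sum).symm
    intro i
    have := hmoore G' hGU' i (by have := i.isLt; omega)
    rw [hG'] at this
    simpa [dif_pos i.isLt, Fin.eta, Nat.lt_succ_iff.mp i.isLt] using this
  have hspan := hWli.span_eq_top_of_card_eq_finrank
    (by rw [Fintype.card_fin, Module.finrank_fin_fun])
  have hmem : (fun r => ψ (α r)) ∈
      Submodule.span Fqn (Set.range fun i : Fin (k + 1) => Wv i) := by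
    rw [hspan]; trivial
  obtain ⟨dF, hdF⟩ := (Submodule.mem_span_range_iff_exists_fun Fqn).mp hmem
  set d : ℕ → Fqn := fun i => if hi : i < k + 1 then dF ⟨i, hi⟩ else 0 with hddef
  have hdid : ∀ u ∈ U, ψ u = ∑ i ∈ range (k + 1), d i * u ^ q ^ (s * i) := by
    have hdpt : ∀ r : Fin (k + 1),
        (fun u => (∑ i ∈ range (k + 1), d i * u ^ q ^ (s * i)) - ψ u) (α r) = 0 := by
      intro r
      have h1 := congrFun hdF r
      rw [Finset.sum_apply] at h1
      have h2 : ∀ i : Fin (k + 1),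
          (dF i • Wv i) r = d (i : ℕ) * (α r) ^ q ^ (s * (i : ℕ)) := by
        intro i
        simp only [Pi.smul_apply, smul_eq_mul, hWv, hddef, dif_pos i.isLt, Fin.eta]
      rw [Finset.sum_congr rfl (fun i _ => h2 i)] at h1
      simp only
      rw [← Fin.sum_univ_eq_sum_range (fun i => d i * (α r) ^ q ^ (s * i)) (k + 1), h1]
      ring
    have := span_zero (fun u => (∑ i ∈ range (k + 1), d i * u ^ q ^ (s * i)) - ψ u)
      (fun x y => by
        simp only [pow_q_add hqpe, mul_add, map_add]
        rw [Finset.sum_add_distrib]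
        ring)
      (fun r x => by
        simp only [pow_q_smul hq, mul_smul_comm, map_smul]
        rw [← Finset.smul_sum, ← smul_sub])
      hdpt
    intro u hu
    have h3 := this u hu
    have h4 := sub_eq_zero.mp h3
    exact h4.symm
  -- Hval formulas
  have hval_right : ∀ (b : ℕ → Fqn) (u : Fqn), Hval q s k h' η' b u
      = ∑ i ∈ range (k + 1), (if i < k then b i else η' * b 0 ^ q ^ h') * u ^ q ^ (s * i) := by
    intro b u
    rw [Hval, Finset.sum_range_succ, if_neg (lt_irrefl k)]
    congr 1
    refine Finset.sum_congr rfl fun i hi => ?_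
    rw [if_pos (Finset.mem_range.mp hi)]
  have hval_left : ∀ (ε : Fqn) (j : ℕ), 1 ≤ j → j < k → ∀ x : Fqn,
      Hval q s k h η (fun i => if i = j then ε else 0) x = ε * x ^ q ^ (s * j) := by
    intro ε j hj1 hjk x
    rw [Hval]
    have ha0 : (if (0:ℕ) = j then ε else (0:Fqn)) = 0 := if_neg (by omega)
    rw [ha0, zero_pow (hq0 h), mul_zero, zero_mul, add_zero]
    have hite : ∀ i ∈ range k, (if i = j then ε else 0) * x ^ q ^ (s * i)
        = if i = j then ε * x ^ q ^ (s * i) else 0 := by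
      intro i _
      rw [ite_mul, zero_mul]
    rw [Finset.sum_congr rfl hite,
      Finset.sum_ite_eq' (range k) j (fun i => ε * x ^ q ^ (s * i)),
      if_pos (Finset.mem_range.mpr hjk)]
  -- Step A : expansion of (ψ u)^{q^s}
  have hApow : ∀ u ∈ U, (ψ u) ^ q ^ s = ∑ i ∈ range (k + 1),
      ((if 1 ≤ i then d (i - 1) ^ q ^ s else 0) + d k ^ q ^ s * t i) * u ^ q ^ (s * i) := by
    intro u hu
    have hL : (ψ u) ^ q ^ s = (∑ i ∈ range k, d i ^ q ^ s * u ^ q ^ (s * (i + 1)))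
        + d k ^ q ^ s * (∑ i ∈ range (k + 1), t i * u ^ q ^ (s * i)) := by
      rw [hdid u hu, pow_q_sum hqpe]
      have hterm : ∀ i ∈ range (k + 1), (d i * u ^ q ^ (s * i)) ^ q ^ s
          = d i ^ q ^ s * u ^ q ^ (s * (i + 1)) := by
        intro i _
        rw [mul_pow, pow_pow_q]
        congr 2 <;> ring
      rw [Finset.sum_congr rfl hterm, Finset.sum_range_succ, htid u hu]
    have hR : ∑ i ∈ range (k + 1),
        ((if 1 ≤ i then d (i - 1) ^ q ^ s else 0) + d k ^ q ^ s * t i) * u ^ q ^ (s * i)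
        = (∑ i ∈ range (k + 1), (if 1 ≤ i then d (i - 1) ^ q ^ s * u ^ q ^ (s * i) else 0))
          + d k ^ q ^ s * (∑ i ∈ range (k + 1), t i * u ^ q ^ (s * i)) := by
      rw [Finset.mul_sum, ← Finset.sum_add_distrib]
      refine Finset.sum_congr rfl fun i _ => ?_
      rw [add_mul, ite_mul, zero_mul, mul_assoc]
    have hfirst : ∑ i ∈ range (k + 1), (if 1 ≤ i then d (i - 1) ^ q ^ s * u ^ q ^ (s * i) else 0)
        = ∑ i ∈ range k, d i ^ q ^ s * u ^ q ^ (s * (i + 1)) := by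
      have hsh := hshift 1 k (fun i => d (i - 1) ^ q ^ s * u ^ q ^ (s * i))
      rw [hsh]
      refine Finset.sum_congr rfl fun i _ => ?_
      simp only [Nat.add_sub_cancel]
    rw [hL, hR, hfirst]
  -- Step A : the ε-relation
  have hAB : ∀ ε : Fqn,
      ε * (d (k - 1) ^ q ^ s + d k ^ q ^ s * t k)
        = ε ^ q ^ h' * (η' * (d k ^ q ^ s * t 0) ^ q ^ h') := by
    intro ε
    obtain ⟨b, hb⟩ := hψ (fun i => if i = 1 then ε else 0)
    set C : ℕ → Fqn := fun i => (if i < k then b i else η' * b 0 ^ q ^ h')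
        - ε * ((if 1 ≤ i then d (i - 1) ^ q ^ s else 0) + d k ^ q ^ s * t i) with hCdef
    have hvanC : ∀ u ∈ U, ∑ i ∈ range (k + 1), C i * u ^ q ^ (s * i) = 0 := by
      intro u hu
      have heq := hb u hu
      rw [hval_left ε 1 le_rfl (by omega) (ψ u), show s * 1 = s from mul_one s,
        hval_right b u, hApow u hu] at heq
      have hexp : ∑ i ∈ range (k + 1), C i * u ^ q ^ (s * i)
          = (∑ i ∈ range (k + 1), (if i < k then b i else η' * b 0 ^ q ^ h') * u ^ q ^ (s * i))
            - ε * ∑ i ∈ range (k + 1),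
              ((if 1 ≤ i then d (i - 1) ^ q ^ s else 0) + d k ^ q ^ s * t i) * u ^ q ^ (s * i) := by
        rw [Finset.mul_sum, ← Finset.sum_sub_distrib]
        refine Finset.sum_congr rfl fun i _ => ?_
        simp only [hCdef]
        ring
      rw [hexp, ← heq, sub_self]
    have hC := hmoore C hvanC
    have hC0 := hC 0 (by omega)
    simp only [hCdef] at hC0
    rw [if_pos (by omega : (0:ℕ) < k), if_neg (by omega : ¬ (1:ℕ) ≤ 0), zero_add] at hC0
    have hb0 : b 0 = ε * (d k ^ q ^ s * t 0) := by
      have := sub_eq_zero.mp hC0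
      exact this
    have hCk := hC k le_rfl
    simp only [hCdef] at hCk
    rw [if_neg (lt_irrefl k), if_pos (by omega : (1:ℕ) ≤ k)] at hCk
    have hCk' : η' * b 0 ^ q ^ h'
        = ε * (d (k - 1) ^ q ^ s + d k ^ q ^ s * t k) := sub_eq_zero.mp hCk
    rw [hb0, mul_pow] at hCk'
    rw [← hCk']
    ring
  set A := d (k - 1) ^ q ^ s + d k ^ q ^ s * t k with hAdef
  set B := η' * (d k ^ q ^ s * t 0) ^ q ^ h' with hBdef
  have h1 : A = B := by
    have := hAB 1
    rwa [one_mul, one_pow, one_mul] at this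
  have hB0 : B = 0 := by
    by_contra hB
    have hfix : ∀ ε : Fqn, ε ^ q ^ h' = ε := by
      intro ε
      have h2 := hAB ε
      rw [h1] at h2
      exact (mul_right_cancel₀ hB h2).symm
    have hlt : q ^ h' < q ^ n := Nat.pow_lt_pow_right hq2 hh'
    have hq1 : 1 < q ^ h' := Nat.one_lt_pow hh'ne hq2
    set P : Polynomial Fqn := Polynomial.X ^ (q ^ h') - Polynomial.X with hP
    have hPne : P ≠ 0 := FiniteField.X_pow_card_sub_X_ne_zero Fqn hq1
    have hdeg : P.natDegree = q ^ h' := FiniteField.X_pow_card_sub_X_natDegree_eq Fqn hq1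
    have hsub : (Finset.univ : Finset Fqn) ⊆ P.roots.toFinset := by
      intro y _
      rw [Multiset.mem_toFinset, Polynomial.mem_roots hPne]
      simp [Polynomial.IsRoot, hP, hfix y]
    have hcard := Finset.card_le_card hsub
    rw [Finset.card_univ, hqn] at hcard
    have hcard2 : P.roots.toFinset.card ≤ q ^ h' :=
      le_trans (Multiset.toFinset_card_le _)
        (le_trans (Polynomial.card_roots' P) (le_of_eq hdeg))
    omega
  have hdk : d k = 0 := by
    have h3 : (d k ^ q ^ s * t 0) ^ q ^ h' = 0 :=
      (mul_eq_zero.mp hB0).resolve_left hη'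
    have h4 : d k ^ q ^ s * t 0 = 0 := (pow_eq_zero_iff (hq0 h')).mp h3
    have h5 : d k ^ q ^ s = 0 := (mul_eq_zero.mp h4).resolve_right ht0
    exact (pow_eq_zero_iff (hq0 s)).mp h5
  have hdk1 : d (k - 1) = 0 := by
    have h6 : A = 0 := h1.trans hB0
    rw [hAdef, hdk, zero_pow (hq0 s), zero_mul, add_zero] at h6
    exact (pow_eq_zero_iff (hq0 s)).mp h6
  -- Step B : downward induction killing all the remaining tail coefficients
  have hzero : ∀ j, j ≤ k - 1 → ∀ i, k - j ≤ i → i ≤ k → d i = 0 := by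
    intro j
    induction j with
    | zero =>
      intro _ i hi1 hi2
      have : i = k := by omega
      rw [this]; exact hdk
    | succ j IHj =>
      intro hjk i hi1 hi2
      have hIH : ∀ i, k - j ≤ i → i ≤ k → d i = 0 := IHj (by omega)
      by_cases hcase : k - j ≤ i
      · exact hIH i hcase hi2
      · have hieq : i = k - (j + 1) := by omega
        by_cases hj0 : j = 0
        · subst hj0
          rw [hieq]
          exact hdk1
        · obtain ⟨b, hb⟩ := hψ (fun i' => if i' = j + 1 then (1:Fqn) else 0)
          have htrunc : ∀ u ∈ U, ψ u = ∑ i' ∈ range (k - j), d i' * u ^ q ^ (s * i') := by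
            intro u hu
            rw [hdid u hu]
            exact (Finset.sum_subset (Finset.range_subset_range.mpr (by omega : k - j ≤ k + 1))
              (fun x hx1 hx2 => by
                rw [hIH x (by simp only [Finset.mem_range, not_lt] at hx2; omega)
                  (by have := Finset.mem_range.mp hx1; omega), zero_mul])).symm
          have hppow : ∀ u ∈ U, (ψ u) ^ q ^ (s * (j + 1)) = ∑ i' ∈ range (k + 1),
              (if j + 1 ≤ i' then d (i' - (j + 1)) ^ q ^ (s * (j + 1)) else 0)
                * u ^ q ^ (s * i') := by
            intro u hu
            rw [htrunc u hu, pow_q_sum hqpe]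
            have hterm : ∀ i' ∈ range (k - j), (d i' * u ^ q ^ (s * i')) ^ q ^ (s * (j + 1))
                = d i' ^ q ^ (s * (j + 1)) * u ^ q ^ (s * (i' + (j + 1))) := by
              intro i' _
              rw [mul_pow, pow_pow_q]
              congr 2 <;> ring
            rw [Finset.sum_congr rfl hterm]
            have hsh := hshift (j + 1) (k - j)
              (fun i' => d (i' - (j + 1)) ^ q ^ (s * (j + 1)) * u ^ q ^ (s * i'))
            rw [show (k - j) + (j + 1) = k + 1 by omega] at hsh
            have hite2 : ∀ i' ∈ range (k + 1),
                (if j + 1 ≤ i' then d (i' - (j + 1)) ^ q ^ (s * (j + 1)) else 0)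
                  * u ^ q ^ (s * i')
                = if j + 1 ≤ i' then
                    d (i' - (j + 1)) ^ q ^ (s * (j + 1)) * u ^ q ^ (s * i') else 0 := by
              intro i' _
              rw [ite_mul, zero_mul]
            rw [Finset.sum_congr rfl hite2, hsh]
            refine Finset.sum_congr rfl fun i' _ => ?_
            simp only [Nat.add_sub_cancel]
          set C2 : ℕ → Fqn := fun i' => (if i' < k then b i' else η' * b 0 ^ q ^ h')
              - (if j + 1 ≤ i' then d (i' - (j + 1)) ^ q ^ (s * (j + 1)) else 0) with hC2
          have hvanC2 : ∀ u ∈ U, ∑ i' ∈ range (k + 1), C2 i' * u ^ q ^ (s * i') = 0 := by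
            intro u hu
            have heq := hb u hu
            rw [hval_left 1 (j + 1) (by omega) (by omega) (ψ u), one_mul,
              hval_right b u, hppow u hu] at heq
            have hexp : ∑ i' ∈ range (k + 1), C2 i' * u ^ q ^ (s * i')
                = (∑ i' ∈ range (k + 1),
                    (if i' < k then b i' else η' * b 0 ^ q ^ h') * u ^ q ^ (s * i'))
                  - ∑ i' ∈ range (k + 1),
                    (if j + 1 ≤ i' then d (i' - (j + 1)) ^ q ^ (s * (j + 1)) else 0)
                      * u ^ q ^ (s * i') := by
              rw [← Finset.sum_sub_distrib]
              refine Finset.sum_congr rfl fun i' _ => ?_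
              simp only [hC2]
              ring
            rw [hexp, ← heq, sub_self]
          have hC2all := hmoore C2 hvanC2
          have hb0 : b 0 = 0 := by
            have h0 := hC2all 0 (by omega)
            simp only [hC2] at h0
            rw [if_pos (by omega : (0:ℕ) < k), if_neg (by omega : ¬ j + 1 ≤ 0),
              sub_zero] at h0
            exact h0
          have hk0 := hC2all k le_rfl
          simp only [hC2] at hk0
          rw [if_neg (lt_irrefl k), if_pos (by omega : j + 1 ≤ k), hb0,
            zero_pow (hq0 h'), mul_zero, zero_sub, neg_eq_zero] at hk0
          rw [hieq]
          exact (pow_eq_zero_iff (hq0 (s * (j + 1)))).mp hk0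
  -- conclusion
  refine ⟨d 0, fun u hu => ?_⟩
  rw [hdid u hu, Finset.sum_range_succ']
  have htail : ∀ i ∈ range k, d (i + 1) * u ^ q ^ (s * (i + 1)) = 0 := by
    intro i hi
    rw [hzero (k - 1) le_rfl (i + 1) (by omega)
      (by have := Finset.mem_range.mp hi; omega), zero_mul]
  rw [Finset.sum_congr rfl htail, Finset.sum_const_zero, zero_add, Nat.mul_zero,
    pow_zero, pow_one]
end
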